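/- arXiv:0911.3833 — 6 statements merged into one kernel-verified Lean document; each statement's English description precedes it below -/
import Mathlib

section
/- For every family F of finite subsets of ℕ, there exists an infinite set A ⊆ ℕ such that either no finite subset of A belongs to F, or every infinite subset B of A has an initial segment (in the increasing enumeration of B) belonging to F. -/
/-- `a` is an initial segment of `B`: `a ⊆ B` and `a` consists of the first `|a|`
elements of `B` in increasing order. -/
def IsInitSeg (a : Finset ℕ) (B : Set ℕ) : Prop :=
  ↑a ⊆ B ∧ ∀ x ∈ B, x ∉ a → ∀ y ∈ a, y < x

namespace GalvinAux

/-- `B` accepts `s`: every infinite subset `C` of `B` has an initial segment `t`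
with `s ∪ t ∈ F`. -/
def Accepts (F : Set (Finset ℕ)) (B : Set ℕ) (s : Finset ℕ) : Prop :=
  ∀ C : Set ℕ, C ⊆ B → C.Infinite → ∃ t : Finset ℕ, IsInitSeg t C ∧ s ∪ t ∈ F

/-- `A` rejects `s`: no infinite subset of `A` accepts `s`. -/
def Rejects (F : Set (Finset ℕ)) (A : Set ℕ) (s : Finset ℕ) : Prop :=
  ∀ B : Set ℕ, B ⊆ A → B.Infinite → ¬ Accepts F B s

lemma accepts_mono {F : Set (Finset ℕ)} {B B' : Set ℕ} {s : Finset ℕ}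
    (h : B' ⊆ B) (ha : Accepts F B s) : Accepts F B' s :=
  fun C hC => ha C (hC.trans h)

lemma rejects_mono {F : Set (Finset ℕ)} {A A' : Set ℕ} {s : Finset ℕ}
    (h : A' ⊆ A) (hr : Rejects F A s) : Rejects F A' s :=
  fun B hB => hr B (hB.trans h)

lemma accepts_of_mem {F : Set (Finset ℕ)} {s : Finset ℕ} (hs : s ∈ F) (B : Set ℕ) :
    Accepts F B s := by
  intro C _ _
  refine ⟨∅, ⟨by simp, by simp⟩, by simpa using hs⟩

lemma not_rejects {F : Set (Finset ℕ)} {A : Set ℕ} {s : Finset ℕ} (h : ¬ Rejects F A s) :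
    ∃ B : Set ℕ, B ⊆ A ∧ B.Infinite ∧ Accepts F B s := by
  rw [Rejects] at h
  push_neg at h
  exact h

/-- Key lemma: if `A` rejects `s`, there is an infinite `A' ⊆ A` rejecting
`s ∪ {n}` for every `n ∈ A'`. -/
lemma keyL {F : Set (Finset ℕ)} {A : Set ℕ} {s : Finset ℕ} (hA : A.Infinite)
    (hrej : Rejects F A s) :
    ∃ A' : Set ℕ, A' ⊆ A ∧ A'.Infinite ∧ ∀ n ∈ A', Rejects F A' (s ∪ {n}) := by
  by_contra hcon
  push_neg at hcon
  -- For every infinite `C ⊆ A` we can find `n ∈ C` and an infinite `B ⊆ C`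
  -- accepting `s ∪ {n}`.
  have step : ∀ C : Set ℕ, C ⊆ A → C.Infinite →
      ∃ n : ℕ, ∃ B : Set ℕ, n ∈ C ∧ B ⊆ C ∧ B.Infinite ∧ Accepts F B (s ∪ {n}) := by
    intro C hCA hCinf
    obtain ⟨n, hnC, hnrej⟩ := hcon C hCA hCinf
    obtain ⟨B, hBC, hBinf, hBacc⟩ := not_rejects hnrej
    exact ⟨n, B, hnC, hBC, hBinf, hBacc⟩
  -- States for the diagonal construction.
  let St := {p : ℕ × Set ℕ // p.1 ∈ A ∧ p.2 ⊆ A ∧ p.2.Infinite ∧ Accepts F p.2 (s ∪ {p.1})}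
  have hnext : ∀ p : St, ∃ q : St, q.1.1 ∈ p.1.2 ∧ p.1.1 < q.1.1 ∧ q.1.2 ⊆ p.1.2 := by
    rintro ⟨⟨n, B⟩, hnA, hBA, hBinf, hBacc⟩
    have hCinf : (B \ Set.Iic n).Infinite := hBinf.diff (Set.finite_Iic n)
    have hCA : B \ Set.Iic n ⊆ A := (Set.diff_subset).trans hBA
    obtain ⟨n', B', hn'C, hB'C, hB'inf, hB'acc⟩ := step (B \ Set.Iic n) hCA hCinf
    refine ⟨⟨(n', B'), hCA hn'C, (hB'C.trans Set.diff_subset).trans hBA, hB'inf, hB'acc⟩,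
      hn'C.1, ?_, hB'C.trans Set.diff_subset⟩
    simpa using hn'C.2
  choose nxt hnxt1 hnxt2 hnxt3 using hnext
  obtain ⟨n0, B0, hn0A, hB0A, hB0inf, hB0acc⟩ := step A (le_refl A) hA
  let p0 : St := ⟨(n0, B0), hn0A, hB0A, hB0inf, hB0acc⟩
  let g : ℕ → St := fun k => nxt^[k] p0
  have hg : ∀ k, g (k + 1) = nxt (g k) := by
    intro k
    simp only [g, Function.iterate_succ_apply']
  set nseq : ℕ → ℕ := fun k => (g k).1.1 with hnseq
  set Bseq : ℕ → Set ℕ := fun k => (g k).1.2 with hBseq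
  have hmono : StrictMono nseq := by
    apply strictMono_nat_of_lt_succ
    intro k
    have := hnxt2 (g k)
    rw [← hg k] at this
    exact this
  have hBanti : ∀ j k, k ≤ j → Bseq j ⊆ Bseq k := by
    intro j
    induction j with
    | zero => intro k hk; rw [Nat.le_zero.1 hk]
    | succ m ih =>
        intro k hk
        rcases Nat.lt_or_ge k (m + 1) with h | h
        · have h1 : Bseq (m + 1) ⊆ Bseq m := by
            have := hnxt3 (g m); rw [← hg m] at this; exact this
          exact h1.trans (ih k (Nat.lt_succ_iff.1 h))
        · rw [Nat.le_antisymm hk h]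
  have hnB : ∀ k j, k < j → nseq j ∈ Bseq k := by
    intro k j hkj
    obtain ⟨m, rfl⟩ := Nat.exists_eq_add_of_lt hkj
    have h1 : nseq (k + m + 1) ∈ Bseq (k + m) := by
      have := hnxt1 (g (k + m)); rw [← hg (k + m)] at this; exact this
    exact hBanti (k + m) k (Nat.le_add_right k m) h1
  -- The diagonal set
  set D : Set ℕ := Set.range nseq with hD
  have hDA : D ⊆ A := by
    rintro x ⟨k, rfl⟩
    exact (g k).2.1
  have hDinf : D.Infinite := Set.infinite_range_of_injective hmono.injective
  refine hrej D hDA hDinf ?_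
  -- D accepts s
  intro E hED hEinf
  have hEne : E.Nonempty := hEinf.nonempty
  have hmE : sInf E ∈ E := Nat.sInf_mem hEne
  obtain ⟨k, hk⟩ := hED hmE
  -- E \ {min E} ⊆ Bseq k
  have hsub : E \ {sInf E} ⊆ Bseq k := by
    rintro x ⟨hxE, hxm⟩
    simp only [Set.mem_singleton_iff] at hxm
    obtain ⟨j, rfl⟩ := hED hxE
    have hkj : k < j := by
      by_contra hle
      push_neg at hle
      have : nseq j ≤ nseq k := hmono.monotone hle
      rw [hk] at this
      exact hxm (le_antisymm this (Nat.sInf_le hxE))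
    exact hnB k j hkj
  have hsubinf : (E \ {sInf E}).Infinite := hEinf.diff (Set.finite_singleton _)
  obtain ⟨t, ⟨htsub, htseg⟩, htF⟩ := (g k).2.2.2.2 (E \ {sInf E}) hsub hsubinf
  refine ⟨insert (sInf E) t, ⟨?_, ?_⟩, ?_⟩
  · intro x hx
    simp only [Finset.coe_insert, Set.mem_insert_iff] at hx
    rcases hx with rfl | hx
    · exact hmE
    · exact (htsub hx).1
  · intro x hxE hxn y hy
    rcases Finset.mem_insert.1 hy with rfl | hyt
    · rcases (Nat.sInf_le hxE).lt_or_eq with h | h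
      · exact h
      · exact (hxn (by rw [← h]; exact Finset.mem_insert_self _ t)).elim
    · have hxne : x ≠ sInf E := by
        rintro rfl
        exact hxn (Finset.mem_insert_self _ t)
      exact htseg x ⟨hxE, hxne⟩ (fun hxt => hxn (Finset.mem_insert_of_mem hxt)) y hyt
  · have : s ∪ insert (sInf E) t = (s ∪ {nseq k}) ∪ t := by
      rw [hk]; ext x; simp
    rw [this]
    exact htF

/-- Iterated key lemma over a finite collection of rejected sets. -/
lemma keyL2 {F : Set (Finset ℕ)} (S : Finset (Finset ℕ)) {A : Set ℕ} (hA : A.Infinite)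
    (h : ∀ s ∈ S, Rejects F A s) :
    ∃ A' : Set ℕ, A' ⊆ A ∧ A'.Infinite ∧ ∀ s ∈ S, ∀ n ∈ A', Rejects F A' (s ∪ {n}) := by
  induction S using Finset.induction_on generalizing A with
  | empty => exact ⟨A, le_refl A, hA, by simp⟩
  | @insert s S hs ih =>
      obtain ⟨A₁, hA₁A, hA₁inf, hA₁⟩ := ih hA (fun s' hs' => h s' (Finset.mem_insert_of_mem hs'))
      obtain ⟨A₂, hA₂A₁, hA₂inf, hA₂⟩ :=
        keyL hA₁inf (rejects_mono hA₁A (h s (Finset.mem_insert_self s S)))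
      refine ⟨A₂, hA₂A₁.trans hA₁A, hA₂inf, ?_⟩
      intro s' hs' n hn
      rcases Finset.mem_insert.1 hs' with rfl | hs'S
      · exact hA₂ n hn
      · exact rejects_mono hA₂A₁ (hA₁ s' hs'S n (hA₂A₁ hn))

/-- The fusion argument: if `univ` rejects `∅`, then there is an infinite set
none of whose finite subsets belongs to `F`. -/
lemma fusion {F : Set (Finset ℕ)} (hrej : Rejects F Set.univ ∅) :
    ∃ A : Set ℕ, A.Infinite ∧ ∀ a : Finset ℕ, ↑a ⊆ A → a ∉ F := by
  classical
  let St := {p : Finset ℕ × Set ℕ // p.2.Infinite ∧ Disjoint (↑p.1 : Set ℕ) p.2 ∧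
      ∀ s ⊆ p.1, Rejects F p.2 s}
  have hnext : ∀ p : St, ∃ q : St, p.1.1 ⊆ q.1.1 ∧ q.1.1.card = p.1.1.card + 1 ∧
      q.1.2 ⊆ p.1.2 := by
    rintro ⟨⟨E, A⟩, hAinf, hdisj, hrejs⟩
    obtain ⟨A', hA'A, hA'inf, hA'⟩ := keyL2 E.powerset hAinf
      (fun s hs => hrejs s (Finset.mem_powerset.1 hs))
    obtain ⟨a, ha⟩ := hA'inf.nonempty
    have haE : a ∉ E := fun haE => Set.disjoint_left.1 hdisj (by simpa using haE) (hA'A ha)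
    have hrej' : ∀ s ⊆ insert a E, Rejects F (A' \ {a}) s := by
      intro s hs
      by_cases has : a ∈ s
      · have hs' : s.erase a ⊆ E := fun x hx =>
          (Finset.mem_of_mem_insert_of_ne (hs (Finset.mem_of_mem_erase hx))
            (Finset.ne_of_mem_erase hx))
        have := hA' (s.erase a) (Finset.mem_powerset.2 hs') a ha
        have heq : s.erase a ∪ {a} = s := by
          ext x
          simp only [Finset.mem_union, Finset.mem_erase, Finset.mem_singleton]
          constructor
          · rintro (⟨_, hx⟩ | rfl) <;> [exact hx; exact has]
          · intro hx
            by_cases hxa : x = a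
            · exact Or.inr hxa
            · exact Or.inl ⟨hxa, hx⟩
        rw [heq] at this
        exact rejects_mono Set.diff_subset this
      · have hs' : s ⊆ E := fun x hx =>
          Finset.mem_of_mem_insert_of_ne (hs hx) (fun h => has (h ▸ hx))
        exact rejects_mono (Set.diff_subset.trans hA'A) (hrejs s hs')
    have hdisj' : Disjoint (↑(insert a E) : Set ℕ) (A' \ {a}) := by
      rw [Set.disjoint_left]
      intro x hx hx'
      simp only [Finset.coe_insert, Set.mem_insert_iff] at hx
      rcases hx with rfl | hx
      · exact hx'.2 rfl
      · exact Set.disjoint_left.1 hdisj hx (hA'A hx'.1)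
    exact ⟨⟨(insert a E, A' \ {a}), hA'inf.diff (Set.finite_singleton a), hdisj', hrej'⟩,
      Finset.subset_insert a E, Finset.card_insert_of_notMem haE,
      Set.diff_subset.trans hA'A⟩
  choose nxt hnxt1 hnxt2 hnxt3 using hnext
  have hp0 : ∀ s ⊆ (∅ : Finset ℕ), Rejects F Set.univ s := by
    intro s hs
    rw [Finset.subset_empty.1 hs]
    exact hrej
  let p0 : St := ⟨((∅ : Finset ℕ), Set.univ), Set.infinite_univ, by simp, hp0⟩
  let g : ℕ → St := fun k => nxt^[k] p0
  have hg : ∀ k, g (k + 1) = nxt (g k) := by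
    intro k
    simp only [g, Function.iterate_succ_apply']
  set Eseq : ℕ → Finset ℕ := fun k => (g k).1.1 with hEseq
  set Aseq : ℕ → Set ℕ := fun k => (g k).1.2 with hAseq
  have hcard : ∀ k, (Eseq k).card = k := by
    intro k
    induction k with
    | zero => rfl
    | succ m ih =>
        have := hnxt2 (g m)
        rw [← hg m] at this
        simp only [hEseq] at ih ⊢
        rw [this, ih]
  have hEmono : Monotone Eseq := by
    apply monotone_nat_of_le_succ
    intro k
    have := hnxt1 (g k)
    rw [← hg k] at this
    exact Finset.le_iff_subset.2 this
  refine ⟨⋃ k, ↑(Eseq k), ?_, ?_⟩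
  · intro hfin
    have hsub : ∀ k, Eseq k ⊆ hfin.toFinset := by
      intro k x hx
      exact hfin.mem_toFinset.2 (Set.mem_iUnion.2 ⟨k, hx⟩)
    have := Finset.card_le_card (hsub (hfin.toFinset.card + 1))
    rw [hcard] at this
    omega
  · have hex : ∀ b : Finset ℕ, ↑b ⊆ ⋃ k, (↑(Eseq k) : Set ℕ) → ∃ k, b ⊆ Eseq k := by
      intro b
      induction b using Finset.induction_on with
      | empty => exact fun _ => ⟨0, by simp⟩
      | @insert x b hxb ih =>
          intro hsub
          have hb : (↑b : Set ℕ) ⊆ ⋃ k, (↑(Eseq k) : Set ℕ) := by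
            intro y hy
            apply hsub
            simp only [Finset.coe_insert, Set.mem_insert_iff]
            exact Or.inr hy
          obtain ⟨k, hk⟩ := ih hb
          have hx : x ∈ ⋃ k, (↑(Eseq k) : Set ℕ) := hsub (by simp)
          obtain ⟨j, hj⟩ := Set.mem_iUnion.1 hx
          exact ⟨max k j, Finset.insert_subset (hEmono (le_max_right k j) hj)
            (hk.trans (hEmono (le_max_left k j)))⟩
    intro a haA haF
    obtain ⟨k, hk⟩ := hex a haA
    exact (g k).2.2.2 a hk (Aseq k) le_rfl (g k).2.1 (accepts_of_mem haF _)

end GalvinAux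

open GalvinAux in
/-- Galvin's lemma. -/
theorem galvin_lemma (F : Set (Finset ℕ)) :
    ∃ A : Set ℕ, A.Infinite ∧
      ((∀ a : Finset ℕ, ↑a ⊆ A → a ∉ F) ∨
        (∀ B : Set ℕ, B ⊆ A → B.Infinite → ∃ a ∈ F, IsInitSeg a B)) := by
  by_cases hrej : Rejects F Set.univ ∅
  · obtain ⟨A, hAinf, hA⟩ := fusion hrej
    exact ⟨A, hAinf, Or.inl hA⟩
  · obtain ⟨B, _, hBinf, hBacc⟩ := not_rejects hrej
    refine ⟨B, hBinf, Or.inr fun C hCB hCinf => ?_⟩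
    obtain ⟨t, hseg, htF⟩ := hBacc C hCB hCinf
    exact ⟨t, by simpa using htF, hseg⟩
end

section
/- If X is a Borel subset of the space of infinite subsets of ℕ (with the metric/product topology, identifying sets with their characteristic functions), then there exists an infinite set B ⊆ ℕ such that every infinite subset of B lies in X, or every infinite subset of B lies in the complement of X. -/
open Classical in
/-- The characteristic function of a set of natural numbers. -/
noncomputable def chi (C : Set ℕ) : ℕ → Bool := fun n => if n ∈ C then true else false

namespace GP
open Set

/-- `a` is above every element of the finite set `s`. -/
def ab (s : Finset ℕ) (a : ℕ) : Prop := ∀ x ∈ s, x < a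

/-- Elements of `A` above `s`. -/
def fil (s : Finset ℕ) (A : Set ℕ) : Set ℕ := {a ∈ A | ab s a}

/-- Ellentuck-style neighborhood: infinite sets with stem `s` and further elements in `A`. -/
def Nb (s : Finset ℕ) (A : Set ℕ) : Set (Set ℕ) :=
  {C | C.Infinite ∧ ↑s ⊆ C ∧ C ⊆ ↑s ∪ fil s A}

def Acc (X : Set (Set ℕ)) (s : Finset ℕ) (A : Set ℕ) : Prop := Nb s A ⊆ X

def Rej (X : Set (Set ℕ)) (s : Finset ℕ) (A : Set ℕ) : Prop :=
  ∀ B ⊆ A, B.Infinite → ¬ Acc X s B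

/-- Completely Ramsey. -/
def CR (X : Set (Set ℕ)) : Prop :=
  ∀ s A, A.Infinite → ∃ B, B ⊆ A ∧ B.Infinite ∧ (Nb s B ⊆ X ∨ Nb s B ⊆ Xᶜ)

/-- Locally determined: membership is decided by a finite initial segment. -/
def LD (X : Set (Set ℕ)) : Prop :=
  ∀ C ∈ X, ∃ n : ℕ, ∀ D : Set ℕ, (∀ k < n, (k ∈ D ↔ k ∈ C)) → D ∈ X

lemma fil_subset (s : Finset ℕ) (A : Set ℕ) : fil s A ⊆ A := fun _ h => h.1

lemma fil_mono {A B : Set ℕ} (s : Finset ℕ) (h : B ⊆ A) : fil s B ⊆ fil s A :=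
  fun a ha => ⟨h ha.1, ha.2⟩

lemma notab_finite (s : Finset ℕ) : {a : ℕ | ¬ ab s a}.Finite := by
  apply Set.Finite.subset (Set.finite_Iic (s.sup id))
  intro a ha
  simp only [ab, not_forall] at ha
  obtain ⟨x, hx, hxa⟩ := ha
  exact le_trans (not_lt.mp hxa) (Finset.le_sup (f := id) hx)

lemma fil_infinite {A : Set ℕ} (s : Finset ℕ) (hA : A.Infinite) : (fil s A).Infinite := by
  have : fil s A = A \ {a | ¬ ab s a} := by
    ext a; simp [fil, Set.mem_diff, and_comm, mem_setOf_eq, not_not]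
  rw [this]
  exact hA.diff (notab_finite s)

lemma fil_fil {s u : Finset ℕ} (h : s ⊆ u) (A : Set ℕ) : fil u (fil s A) = fil u A := by
  ext a
  simp only [fil, mem_setOf_eq]
  exact ⟨fun ⟨⟨h1, _⟩, h3⟩ => ⟨h1, h3⟩, fun ⟨h1, h3⟩ => ⟨⟨h1, fun x hx => h3 x (h hx)⟩, h3⟩⟩

lemma Nb_mono {A B : Set ℕ} (s : Finset ℕ) (h : B ⊆ A) : Nb s B ⊆ Nb s A :=
  fun C hC => ⟨hC.1, hC.2.1, hC.2.2.trans (Set.union_subset_union_right _ (fil_mono s h))⟩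

lemma Nb_fil {s u : Finset ℕ} (h : s ⊆ u) (A : Set ℕ) : Nb u (fil s A) = Nb u A := by
  unfold Nb; rw [fil_fil h]

lemma Acc_anti {X s A B} (h : B ⊆ A) (hacc : Acc X s A) : Acc X s B :=
  fun C hC => hacc (Nb_mono s h hC)

lemma Rej_anti {X s A B} (h : B ⊆ A) (hrej : Rej X s A) : Rej X s B :=
  fun B' hB' => hrej B' (hB'.trans h)

lemma exists_decide (X : Set (Set ℕ)) (s : Finset ℕ) (A : Set ℕ) (hA : A.Infinite) :
    ∃ B, B ⊆ A ∧ B.Infinite ∧ (Acc X s B ∨ Rej X s B) := by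
  by_cases h : ∃ B, B ⊆ A ∧ B.Infinite ∧ Acc X s B
  · obtain ⟨B, h1, h2, h3⟩ := h
    exact ⟨B, h1, h2, Or.inl h3⟩
  · push_neg at h
    exact ⟨A, Set.Subset.rfl, hA, Or.inr fun B hB hBinf => h B hB hBinf⟩

/-- `Rej` transfers from `fil t A` back to `A` when `t ⊆ u`. -/
lemma Rej_of_fil {X : Set (Set ℕ)} {t u : Finset ℕ} {A : Set ℕ} (h : t ⊆ u)
    (hrej : Rej X u (fil t A)) : Rej X u A := by
  intro B hB hBinf hacc
  refine hrej (fil u B) ?_ (fil_infinite u hBinf) ?_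
  · intro a ha
    exact ⟨hB ha.1, fun x hx => ha.2 x (h hx)⟩
  · intro C hC
    apply hacc
    rwa [← Nb_fil (Finset.Subset.rfl) B]

lemma iter_shrink {ι : Type*} (T : Finset ι) (P : ι → Set ℕ → Prop)
    (hmono : ∀ i B B', B' ⊆ B → P i B → P i B')
    (hstep : ∀ i B, B.Infinite → ∃ B', B' ⊆ B ∧ B'.Infinite ∧ P i B')
    (B : Set ℕ) (hB : B.Infinite) :
    ∃ B', B' ⊆ B ∧ B'.Infinite ∧ ∀ i ∈ T, P i B' := by
  classical
  induction T using Finset.induction_on with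
  | empty => exact ⟨B, Set.Subset.rfl, hB, fun i hi => absurd hi (Finset.notMem_empty i)⟩
  | insert _ _ hnotmem ih =>
    rename_i a T
    obtain ⟨B1, h1, h2, h3⟩ := ih
    obtain ⟨B2, g1, g2, g3⟩ := hstep a B1 h2
    refine ⟨B2, g1.trans h1, g2, fun i hi => ?_⟩
    rcases Finset.mem_insert.mp hi with rfl | hi
    · exact g3
    · exact hmono i B1 B2 g1 (h3 i hi)

section helpers

/-- A finite subset of an increasing union of finsets lies in one of them. -/
lemma finset_subset_of_mono (g : ℕ → Finset ℕ) (hg : Monotone g)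
    (t : Finset ℕ) (ht : ↑t ⊆ ⋃ n, (↑(g n) : Set ℕ)) : ∃ n, t ⊆ g n := by
  classical
  induction t using Finset.induction_on with
  | empty => exact ⟨0, Finset.empty_subset _⟩
  | insert _ _ hnot ih =>
    rename_i a t
    obtain ⟨n, hn⟩ := ih (fun x hx => ht (by simp [hx]))
    have ha : (a : ℕ) ∈ ⋃ n, (↑(g n) : Set ℕ) := ht (by simp)
    obtain ⟨m, hm⟩ := Set.mem_iUnion.mp ha
    refine ⟨max n m, Finset.insert_subset ?_ (hn.trans (hg (le_max_left n m)))⟩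
    exact hg (le_max_right n m) hm

/-- The union of finsets of unbounded cardinality is infinite. -/
lemma union_infinite (g : ℕ → Finset ℕ) (hcard : ∀ n, n ≤ (g n).card) :
    (⋃ n, (↑(g n) : Set ℕ)).Infinite := by
  intro hfin
  have hsub : ∀ n, g n ⊆ hfin.toFinset := by
    intro n x hx
    rw [Set.Finite.mem_toFinset]
    exact Set.mem_iUnion.mpr ⟨n, hx⟩
  have := (hcard (hfin.toFinset.card + 1)).trans (Finset.card_le_card (hsub _))
  omega

end helpers


lemma fusion (P : Finset ℕ → Set ℕ → Prop)
    (hmono : ∀ s B B', B' ⊆ B → P s B → P s B')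
    (hstep : ∀ s B, B.Infinite → ∃ B', B' ⊆ B ∧ B'.Infinite ∧ P s B')
    (A : Set ℕ) (hA : A.Infinite) :
    ∃ B, B ⊆ A ∧ B.Infinite ∧ ∀ s : Finset ℕ, ↑s ⊆ B → P s (fil s B) := by
  classical
  -- the type of "good states"
  let Good := {p : Finset ℕ × Set ℕ // p.2 ⊆ A ∧ p.2.Infinite ∧
    (∀ x ∈ p.1, ∀ y ∈ p.2, x < y) ∧ (∀ t ⊆ p.1, P t p.2)}
  -- initial state
  obtain ⟨A0, hA0sub, hA0inf, hA0P⟩ := hstep ∅ A hA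
  have hp0inv : (∀ x ∈ (∅ : Finset ℕ), ∀ y ∈ A0, x < y) ∧ (∀ t ⊆ (∅ : Finset ℕ), P t A0) :=
    ⟨fun x hx => absurd hx (Finset.notMem_empty x), by
      intro t ht
      rw [Finset.subset_empty.mp ht]
      exact hA0P⟩
  let p0 : Good := ⟨(∅, A0), hA0sub, hA0inf, hp0inv.1, hp0inv.2⟩
  -- the step
  have step : ∀ p : Good, ∃ q : Good, q.1.2 ⊆ p.1.2 ∧
      ∃ a ∈ p.1.2, q.1.1 = insert a p.1.1 := by
    rintro ⟨⟨s, B⟩, hBA, hBinf, hord, hP⟩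
    have hne : B.Nonempty := hBinf.nonempty
    set a := sInf B with ha
    have haB : a ∈ B := Nat.sInf_mem hne
    have hfinf : (fil {a} B).Infinite := fil_infinite {a} hBinf
    obtain ⟨B', hB'sub, hB'inf, hB'P⟩ :=
      iter_shrink (insert a s).powerset (fun t C => P t C)
        (fun t C C' h hp => hmono t C C' h hp) (fun t C hC => hstep t C hC)
        (fil {a} B) hfinf
    have hB'B : B' ⊆ B := hB'sub.trans (fun x hx => hx.1)
    refine ⟨⟨(insert a s, B'), hB'B.trans hBA, hB'inf, ?_, ?_⟩, hB'B, a, haB, rfl⟩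
    · intro x hx y hy
      rcases Finset.mem_insert.mp hx with rfl | hx
      · exact (hB'sub hy).2 _ (Finset.mem_singleton_self _)
      · exact hord x hx y (hB'B hy)
    · intro t ht
      exact hB'P t (Finset.mem_powerset.mpr ht)
  -- iterate
  let f : ℕ → Good := fun n => Nat.rec p0 (fun _ p => (step p).choose) n
  have hf : ∀ n, f (n + 1) = (step (f n)).choose := fun _ => rfl
  have hsub : ∀ n, (f (n + 1)).1.2 ⊆ (f n).1.2 := fun n => by
    rw [hf n]; exact (step (f n)).choose_spec.1
  have hins : ∀ n, ∃ a ∈ (f n).1.2, (f (n + 1)).1.1 = insert a (f n).1.1 := fun n => by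
    rw [hf n]; exact (step (f n)).choose_spec.2
  have hf0 : (f 0).1.1 = ∅ := rfl
  have smono : Monotone (fun n => (f n).1.1) := by
    apply monotone_nat_of_le_succ
    intro n
    obtain ⟨a, _, he⟩ := hins n
    rw [he]
    exact Finset.subset_insert a _
  have Aanti : ∀ m n, m ≤ n → (f n).1.2 ⊆ (f m).1.2 := by
    intro m n h
    induction h with
    | refl => exact Set.Subset.rfl
    | step h ih => exact (hsub _).trans ih
  have hcard : ∀ n, n ≤ (f n).1.1.card := by
    intro n
    induction n with
    | zero => simp
    | succ n ih =>
      obtain ⟨a, haA, he⟩ := hins n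
      have hnot : a ∉ (f n).1.1 := fun hmem =>
        lt_irrefl a ((f n).2.2.2.1 a hmem a haA)
      rw [he, Finset.card_insert_of_notMem hnot]
      omega
  -- the resulting set
  set B : Set ℕ := ⋃ n, (↑(f n).1.1 : Set ℕ) with hB
  have hBA : B ⊆ A := by
    rintro x hx
    obtain ⟨n, hn⟩ := Set.mem_iUnion.mp hx
    clear hx
    induction n with
    | zero => rw [hf0] at hn; exact absurd hn (Finset.notMem_empty x)
    | succ n ih =>
      obtain ⟨a, haA, he⟩ := hins n
      rw [he] at hn
      rcases Finset.mem_insert.mp hn with rfl | hn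
      · exact (f n).2.1 haA
      · exact ih hn
  have hBinf : B.Infinite := union_infinite _ hcard
  refine ⟨B, hBA, hBinf, ?_⟩
  intro s hs
  have hex : ∃ n, s ⊆ (f n).1.1 := finset_subset_of_mono _ smono s hs
  -- the main contradiction: no element of (f N).1.1 lies above s, for the least
  -- stage N containing s
  have main : ∀ N, s ⊆ (f N).1.1 → (∀ m, m < N → ¬ s ⊆ (f m).1.1) → ∀ b, ab s b →
      b ∈ (f N).1.1 → False := by
    intro N hsN hmin b hab hbn
    cases N with
    | zero => rw [hf0] at hbn; exact Finset.notMem_empty b hbn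
    | succ m =>
      have hmins : ¬ s ⊆ (f m).1.1 := hmin m (Nat.lt_succ_self m)
      obtain ⟨a, haA, he⟩ := hins m
      rw [he] at hsN hbn
      have has : a ∈ s := by
        by_contra hasn
        refine hmins (fun x hx => ?_)
        rcases Finset.mem_insert.mp (hsN hx) with rfl | h
        · exact absurd hx hasn
        · exact h
      have halt : a < b := hab a has
      rcases Finset.mem_insert.mp hbn with rfl | hbm
      · exact lt_irrefl b halt
      · exact lt_irrefl b (((f m).2.2.2.1 b hbm a haA).trans halt)
  -- elements of B that appear at some stage but not at stage n are in (f n).1.2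
  have key : ∀ n k, ∀ b ∈ (f k).1.1, b ∉ (f n).1.1 → b ∈ (f n).1.2 := by
    intro n k
    induction k with
    | zero => intro b hb; rw [hf0] at hb; exact absurd hb (Finset.notMem_empty b)
    | succ k ih =>
      intro b hb hbn
      obtain ⟨a, haA, he⟩ := hins k
      rw [he] at hb
      rcases Finset.mem_insert.mp hb with rfl | hb
      · rcases le_or_gt n k with h | h
        · exact Aanti n k h haA
        · exfalso
          apply hbn
          have : b ∈ (f (k+1)).1.1 := by rw [he]; exact Finset.mem_insert_self b _
          exact smono (Nat.succ_le_of_lt h) this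
      · exact ih b hb hbn
  set n := Nat.find hex with hn
  have hsn : s ⊆ (f n).1.1 := Nat.find_spec hex
  have hPn : P s (f n).1.2 := (f n).2.2.2.2 s hsn
  have hfilsub : fil s B ⊆ (f n).1.2 := by
    rintro b ⟨hbB, hab⟩
    obtain ⟨k, hk⟩ := Set.mem_iUnion.mp hbB
    refine key n k b hk (fun hbn => ?_)
    exact main n hsn (fun m hm => Nat.find_min hex hm) b hab hbn
  exact hmono s (f n).1.2 (fil s B) hfilsub hPn



/-- If `A'` consists of elements above `u` such that `B₀` accepts each one-point
extension `u ∪ {a}`, then `A'` accepts `u`. -/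
lemma acc_of_insert (X : Set (Set ℕ)) (u : Finset ℕ) (B₀ A' : Set ℕ)
    (hsub : A' ⊆ B₀) (habove : ∀ a ∈ A', ab u a)
    (hacc : ∀ a ∈ A', Acc X (insert a u) B₀) : Acc X u A' := by
  rintro C ⟨hCinf, huC, hCsub⟩
  have hne : (C \ ↑u).Nonempty := (hCinf.diff (u.finite_toSet)).nonempty
  set b := sInf (C \ ↑u) with hb
  have hbmem : b ∈ C \ ↑u := Nat.sInf_mem hne
  have hbA' : b ∈ A' := by
    rcases hCsub hbmem.1 with h | h
    · exact absurd h hbmem.2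
    · exact h.1
  apply hacc b hbA'
  refine ⟨hCinf, ?_, ?_⟩
  · intro x hx
    rcases Finset.mem_insert.mp (by exact_mod_cast hx) with rfl | hxu
    · exact hbmem.1
    · exact huC hxu
  · intro c hc
    by_cases hcu : c ∈ (↑u : Set ℕ)
    · exact Or.inl (by exact_mod_cast Finset.mem_insert_of_mem (by exact_mod_cast hcu))
    · by_cases hcb : c = b
      · exact Or.inl (by rw [hcb]; exact_mod_cast Finset.mem_insert_self b u)
      · have hcCu : c ∈ C \ ↑u := ⟨hc, hcu⟩
        have hcA' : c ∈ A' := by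
          rcases hCsub hc with h | h
          · exact absurd h hcu
          · exact h.1
        have hblt : b < c := lt_of_le_of_ne (Nat.sInf_le hcCu) (fun h => hcb h.symm)
        refine Or.inr ⟨hsub hcA', ?_⟩
        intro x hx
        rcases Finset.mem_insert.mp hx with rfl | hxu
        · exact hblt
        · exact habove c hcA' x hxu

/-- If `B₀` rejects `u` and decides all one-point extensions by its elements, then
only finitely many elements give non-rejected extensions. -/
lemma rej_insert_cofinite (X : Set (Set ℕ)) (u : Finset ℕ) (B₀ : Set ℕ)
    (hrej : Rej X u B₀)
    (hdec : ∀ b ∈ B₀, ab u b → Acc X (insert b u) B₀ ∨ Rej X (insert b u) B₀) :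
    {b ∈ B₀ | ab u b ∧ ¬ Rej X (insert b u) B₀}.Finite := by
  by_contra hinf
  set A' := {b ∈ B₀ | ab u b ∧ ¬ Rej X (insert b u) B₀} with hA'
  have hsub : A' ⊆ B₀ := fun b hb => hb.1
  have hacc : Acc X u A' := by
    refine acc_of_insert X u B₀ A' hsub (fun a ha => ha.2.1) (fun a ha => ?_)
    rcases hdec a ha.1 ha.2.1 with h | h
    · exact h
    · exact absurd h ha.2.2
  exact hrej A' hsub hinf hacc

/-- Growing an infinite set of points one at a time, maintaining a downward-closed
condition `R` on finite subsets. -/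
lemma grow (B₀ : Set ℕ) (hB₀ : B₀.Infinite) (R : Finset ℕ → Prop) (h0 : R ∅)
    (hdown : ∀ t t' : Finset ℕ, t' ⊆ t → R t → R t')
    (hstep : ∀ t : Finset ℕ, ↑t ⊆ B₀ → R t →
      ∃ F : Set ℕ, F.Finite ∧ ∀ c ∈ B₀, c ∉ F → (∀ x ∈ t, x < c) → R (insert c t)) :
    ∃ B₁, B₁ ⊆ B₀ ∧ B₁.Infinite ∧ ∀ t : Finset ℕ, ↑t ⊆ B₁ → R t := by
  classical
  let G := {t : Finset ℕ // ↑t ⊆ B₀ ∧ R t}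
  have step : ∀ p : G, ∃ q : G, ∃ c, (∀ x ∈ p.1, x < c) ∧ q.1 = insert c p.1 := by
    rintro ⟨t, htB, htR⟩
    obtain ⟨F, hFfin, hF⟩ := hstep t htB htR
    have hne : (B₀ \ (F ∪ {a | ¬ ab t a})).Nonempty :=
      (hB₀.diff (hFfin.union (notab_finite t))).nonempty
    obtain ⟨c, hcB, hcF⟩ := hne
    have hcab : ab t c := by
      by_contra h
      exact hcF (Or.inr h)
    have hcR : R (insert c t) := hF c hcB (fun h => hcF (Or.inl h)) hcab
    exact ⟨⟨insert c t, by
      intro x hx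
      rcases Finset.mem_insert.mp (by exact_mod_cast hx) with rfl | hx
      · exact hcB
      · exact htB hx, hcR⟩, c, hcab, rfl⟩
  let g0 : G := ⟨∅, by simp, h0⟩
  let f : ℕ → G := fun n => Nat.rec g0 (fun _ p => (step p).choose) n
  have hins : ∀ n, ∃ c, (∀ x ∈ (f n).1, x < c) ∧ (f (n+1)).1 = insert c (f n).1 :=
    fun n => (step (f n)).choose_spec
  have hf0 : (f 0).1 = ∅ := rfl
  have smono : Monotone (fun n => (f n).1) := by
    apply monotone_nat_of_le_succ
    intro n
    obtain ⟨c, _, he⟩ := hins n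
    rw [he]
    exact Finset.subset_insert c _
  have hcard : ∀ n, n ≤ (f n).1.card := by
    intro n
    induction n with
    | zero => simp
    | succ n ih =>
      obtain ⟨c, hcab, he⟩ := hins n
      have hnot : c ∉ (f n).1 := fun hmem => lt_irrefl c (hcab c hmem)
      rw [he, Finset.card_insert_of_notMem hnot]
      omega
  refine ⟨⋃ n, (↑(f n).1 : Set ℕ), ?_, union_infinite _ hcard, ?_⟩
  · intro x hx
    obtain ⟨n, hn⟩ := Set.mem_iUnion.mp hx
    exact (f n).2.1 hn
  · intro t ht
    obtain ⟨n, hn⟩ := finset_subset_of_mono _ smono t ht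
    exact hdown (f n).1 t hn (f n).2.2



lemma Acc_of_fil {X : Set (Set ℕ)} {t u : Finset ℕ} {A : Set ℕ} (h : t ⊆ u)
    (hacc : Acc X u (fil t A)) : Acc X u A := by
  unfold Acc at *
  rwa [Nb_fil h] at hacc

/-- The main construction: a set deciding all stems over `s₀` (with auxiliary
property `Q`), which either accepts `s₀` or has an infinite subset all of whose
finite subsets give rejected stems. -/
lemma main_core (X : Set (Set ℕ)) (s₀ : Finset ℕ)
    (Q : Finset ℕ → Set ℕ → Prop)
    (hQmono : ∀ t B B', B' ⊆ B → Q t B → Q t B')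
    (hQstep : ∀ t B, B.Infinite → ∃ B', B' ⊆ B ∧ B'.Infinite ∧ Q t B')
    (A : Set ℕ) (hA : A.Infinite) :
    ∃ B₀, B₀ ⊆ A ∧ B₀.Infinite ∧ (∀ t : Finset ℕ, ↑t ⊆ B₀ → Q t (fil t B₀)) ∧
      (Acc X s₀ B₀ ∨ ∃ B₁, B₁ ⊆ B₀ ∧ B₁.Infinite ∧
        ∀ t : Finset ℕ, ↑t ⊆ B₁ → Rej X (s₀ ∪ t) B₀) := by
  classical
  set P : Finset ℕ → Set ℕ → Prop :=
    fun t B => (Acc X (s₀ ∪ t) B ∨ Rej X (s₀ ∪ t) B) ∧ Q t B with hP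
  have hPmono : ∀ t B B', B' ⊆ B → P t B → P t B' := by
    rintro t B B' hsub ⟨hd, hq⟩
    refine ⟨?_, hQmono t B B' hsub hq⟩
    rcases hd with h | h
    · exact Or.inl (Acc_anti hsub h)
    · exact Or.inr (Rej_anti hsub h)
  have hPstep : ∀ t B, B.Infinite → ∃ B', B' ⊆ B ∧ B'.Infinite ∧ P t B' := by
    intro t B hB
    obtain ⟨B', h1, h2, h3⟩ := exists_decide X (s₀ ∪ t) B hB
    obtain ⟨B'', g1, g2, g3⟩ := hQstep t B' h2
    refine ⟨B'', g1.trans h1, g2, ?_, g3⟩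
    rcases h3 with h | h
    · exact Or.inl (Acc_anti g1 h)
    · exact Or.inr (Rej_anti g1 h)
  obtain ⟨B₀, hB₀A, hB₀inf, hB₀P⟩ := fusion P hPmono hPstep A hA
  have hQfin : ∀ t : Finset ℕ, ↑t ⊆ B₀ → Q t (fil t B₀) := fun t ht => (hB₀P t ht).2
  have hdec : ∀ t : Finset ℕ, ↑t ⊆ B₀ →
      Acc X (s₀ ∪ t) B₀ ∨ Rej X (s₀ ∪ t) B₀ := by
    intro t ht
    rcases (hB₀P t ht).1 with h | h
    · exact Or.inl (Acc_of_fil Finset.subset_union_right h)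
    · exact Or.inr (Rej_of_fil Finset.subset_union_right h)
  refine ⟨B₀, hB₀A, hB₀inf, hQfin, ?_⟩
  rcases hdec ∅ (by simp) with h | h
  · rw [Finset.union_empty] at h
    exact Or.inl h
  · rw [Finset.union_empty] at h
    right
    -- grow a set all of whose finite subsets give rejected stems
    set R : Finset ℕ → Prop := fun t => ∀ t' ⊆ t, Rej X (s₀ ∪ t') B₀ with hR
    have h0 : R ∅ := by
      intro t' ht'
      rw [Finset.subset_empty.mp ht', Finset.union_empty]
      exact h
    have hdown : ∀ t t' : Finset ℕ, t' ⊆ t → R t → R t' :=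
      fun t t' hsub hRt t'' ht'' => hRt t'' (ht''.trans hsub)
    have hstep : ∀ t : Finset ℕ, ↑t ⊆ B₀ → R t →
        ∃ F : Set ℕ, F.Finite ∧ ∀ c ∈ B₀, c ∉ F → (∀ x ∈ t, x < c) → R (insert c t) := by
      intro t htB hRt
      refine ⟨(⋃ t' ∈ t.powerset,
        {b ∈ B₀ | ab (s₀ ∪ t') b ∧ ¬ Rej X (insert b (s₀ ∪ t')) B₀}) ∪
        {a | ¬ ab s₀ a}, ?_, ?_⟩
      · refine Set.Finite.union ?_ (notab_finite s₀)
        refine Set.Finite.biUnion (t.powerset).finite_toSet ?_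
        intro t' ht'
        refine rej_insert_cofinite X (s₀ ∪ t') B₀
          (hRt t' (Finset.mem_powerset.mp ht')) ?_
        intro b hb hab
        have : insert b (s₀ ∪ t') = s₀ ∪ insert b t' := by
          rw [Finset.union_insert]
        rw [this]
        refine hdec (insert b t') ?_
        intro x hx
        rcases Finset.mem_insert.mp (by exact_mod_cast hx) with rfl | hx
        · exact hb
        · exact htB ((Finset.mem_powerset.mp ht') hx)
      · intro c hcB hcF hcab t'' ht''
        by_cases hct : c ∈ t''
        · have ht''e : t'' = insert c (t''.erase c) := (Finset.insert_erase hct).symm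
          have hsub : t''.erase c ⊆ t := by
            intro x hx
            have := ht'' (Finset.mem_of_mem_erase hx)
            rcases Finset.mem_insert.mp this with rfl | hxt
            · exact absurd hx (Finset.notMem_erase _ t'')
            · exact hxt
          have hrejer : Rej X (s₀ ∪ t''.erase c) B₀ := hRt _ hsub
          have hcnotbad : ¬ (ab (s₀ ∪ t''.erase c) c ∧
              ¬ Rej X (insert c (s₀ ∪ t''.erase c)) B₀) := by
            intro hbad
            apply hcF
            left
            exact Set.mem_biUnion (Finset.mem_powerset.mpr hsub) ⟨hcB, hbad⟩
          have hcab' : ab (s₀ ∪ t''.erase c) c := by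
            intro x hx
            rcases Finset.mem_union.mp hx with hx | hx
            · by_contra hlt
              exact hcF (Or.inr (fun hall => hlt (hall x hx)))
            · exact hcab x (hsub hx)
          have : Rej X (insert c (s₀ ∪ t''.erase c)) B₀ := by
            by_contra hn
            exact hcnotbad ⟨hcab', hn⟩
          rw [ht''e, Finset.union_insert]
          exact this
        · exact hRt t'' (fun x hx => by
            rcases Finset.mem_insert.mp (ht'' hx) with rfl | h2
            · exact absurd hx hct
            · exact h2)
    obtain ⟨B₁, h1, h2, h3⟩ := grow B₀ hB₀inf R h0 hdown hstep
    exact ⟨B₁, h1, h2, fun t ht => h3 t ht t Finset.Subset.rfl⟩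



/-- Locally determined (e.g. open) sets are completely Ramsey. -/
lemma CR_of_LD {X : Set (Set ℕ)} (hLD : LD X) : CR X := by
  classical
  intro s₀ A hA
  obtain ⟨B₀, hB₀A, hB₀inf, -, hcase⟩ := main_core X s₀ (fun _ _ => True)
    (fun _ _ _ _ _ => trivial) (fun _ B hB => ⟨B, Set.Subset.rfl, hB, trivial⟩) A hA
  rcases hcase with hacc | ⟨B₁, hB₁sub, hB₁inf, hrej⟩
  · exact ⟨B₀, hB₀A, hB₀inf, Or.inl hacc⟩
  · refine ⟨B₁, hB₁sub.trans hB₀A, hB₁inf, Or.inr ?_⟩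
    rintro C ⟨hCinf, hsC, hCsub⟩ hCX
    obtain ⟨n, hn⟩ := hLD C hCX
    set m := max n ((s₀.sup id) + 1) with hm
    have hs₀m : ∀ x ∈ s₀, x < m :=
      fun x hx => lt_of_lt_of_le (Nat.lt_succ_of_le (Finset.le_sup (f := id) hx))
        (le_max_right _ _)
    have htfin : ((C \ ↑s₀) ∩ Iio m).Finite := (finite_Iio m).subset inter_subset_right
    set t := htfin.toFinset with ht
    have htco : (↑t : Set ℕ) = (C \ ↑s₀) ∩ Iio m := htfin.coe_toFinset
    have hEB₁ : C \ ↑s₀ ⊆ B₁ := by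
      intro x hx
      rcases hCsub hx.1 with h | h
      · exact absurd h hx.2
      · exact h.1
    have htB₁ : ↑t ⊆ B₁ := by rw [htco]; exact inter_subset_left.trans hEB₁
    have hrejt := hrej t htB₁
    set A' := C \ {c | c < m} with hA'
    have hA'inf : A'.Infinite := hCinf.diff (finite_Iio m)
    have hA'B₀ : A' ⊆ B₀ := by
      rintro c ⟨hcC, hcm⟩
      have : c ∉ (↑s₀ : Set ℕ) := fun hs => hcm (hs₀m c hs)
      exact hB₁sub (hEB₁ ⟨hcC, this⟩)
    refine hrejt A' hA'B₀ hA'inf ?_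
    rintro D ⟨hDinf, hsD, hDsub⟩
    refine hn D (fun k hk => ?_)
    have hkm : k < m := lt_of_lt_of_le hk (le_max_left _ _)
    constructor
    · intro hkD
      rcases hDsub hkD with h | h
      · rcases Finset.mem_coe.mp h with h'
        rcases Finset.mem_union.mp h' with h2 | h2
        · exact hsC h2
        · have : (k : ℕ) ∈ (↑t : Set ℕ) := h2
          rw [htco] at this
          exact this.1.1
      · exact absurd hkm (not_lt.mpr (not_lt.mp (fun hc => h.1.2 hc)))
    · intro hkC
      by_cases hks : k ∈ s₀
      · exact hsD (Finset.mem_coe.mpr (Finset.mem_union_left _ hks))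
      · have : (k : ℕ) ∈ (↑t : Set ℕ) := by
          rw [htco]; exact ⟨⟨hkC, hks⟩, hkm⟩
        exact hsD (Finset.mem_coe.mpr (Finset.mem_union_right _ (Finset.mem_coe.mp this)))



lemma CR_iUnion (Y : ℕ → Set (Set ℕ)) (hY : ∀ i, CR (Y i)) : CR (⋃ i, Y i) := by
  classical
  intro s₀ A hA
  set X := ⋃ i, Y i with hX
  set Q : Finset ℕ → Set ℕ → Prop :=
    fun t B => ∀ i ≤ t.card, Nb (s₀ ∪ t) B ⊆ Y i ∨ Nb (s₀ ∪ t) B ⊆ (Y i)ᶜ with hQ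
  have hQmono : ∀ t B B', B' ⊆ B → Q t B → Q t B' := by
    intro t B B' hsub hq i hi
    rcases hq i hi with h | h
    · exact Or.inl ((Nb_mono _ hsub).trans h)
    · exact Or.inr ((Nb_mono _ hsub).trans h)
  have hQstep : ∀ t B, B.Infinite → ∃ B', B' ⊆ B ∧ B'.Infinite ∧ Q t B' := by
    intro t B hB
    obtain ⟨B', h1, h2, h3⟩ := iter_shrink (Finset.range (t.card + 1))
      (fun i C => Nb (s₀ ∪ t) C ⊆ Y i ∨ Nb (s₀ ∪ t) C ⊆ (Y i)ᶜ)
      (by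
        intro i C C' hsub h
        rcases h with h | h
        · exact Or.inl ((Nb_mono _ hsub).trans h)
        · exact Or.inr ((Nb_mono _ hsub).trans h))
      (fun i C hC => hY i (s₀ ∪ t) C hC) B hB
    exact ⟨B', h1, h2, fun i hi => h3 i (Finset.mem_range.mpr (Nat.lt_succ_of_le hi))⟩
  obtain ⟨B₀, hB₀A, hB₀inf, hQfin, hcase⟩ := main_core X s₀ Q hQmono hQstep A hA
  rcases hcase with hacc | ⟨B₁, hB₁sub, hB₁inf, hrej⟩
  · exact ⟨B₀, hB₀A, hB₀inf, Or.inl hacc⟩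
  · refine ⟨B₁, hB₁sub.trans hB₀A, hB₁inf, Or.inr ?_⟩
    rintro C ⟨hCinf, hsC, hCsub⟩ hCX
    obtain ⟨i, hCi⟩ := Set.mem_iUnion.mp hCX
    have hEB₁ : C \ ↑s₀ ⊆ B₁ := by
      intro x hx
      rcases hCsub hx.1 with h | h
      · exact absurd h hx.2
      · exact h.1
    have hEinf : (C \ ↑s₀).Infinite := hCinf.diff s₀.finite_toSet
    obtain ⟨t₀, ht₀sub, ht₀card⟩ := hEinf.exists_subset_card_eq i
    set m := max ((t₀.sup id) + 1) ((s₀.sup id) + 1) with hm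
    have hs₀m : ∀ x ∈ s₀, x < m :=
      fun x hx => lt_of_lt_of_le (Nat.lt_succ_of_le (Finset.le_sup (f := id) hx))
        (le_max_right _ _)
    have ht₀m : ∀ x ∈ t₀, x < m :=
      fun x hx => lt_of_lt_of_le (Nat.lt_succ_of_le (Finset.le_sup (f := id) hx))
        (le_max_left _ _)
    have htfin : ((C \ ↑s₀) ∩ Iio m).Finite := (finite_Iio m).subset inter_subset_right
    set t := htfin.toFinset with ht
    have htco : (↑t : Set ℕ) = (C \ ↑s₀) ∩ Iio m := htfin.coe_toFinset
    have ht₀t : t₀ ⊆ t := by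
      intro x hx
      have : (x : ℕ) ∈ (↑t : Set ℕ) := by
        rw [htco]; exact ⟨ht₀sub hx, ht₀m x hx⟩
      exact Finset.mem_coe.mp this
    have hicard : i ≤ t.card := ht₀card ▸ Finset.card_le_card ht₀t
    have htB₁ : ↑t ⊆ B₁ := by rw [htco]; exact inter_subset_left.trans hEB₁
    have hdec := hQfin t (htB₁.trans hB₁sub) i hicard
    rw [Nb_fil Finset.subset_union_right] at hdec
    have hCmem : C ∈ Nb (s₀ ∪ t) B₀ := by
      refine ⟨hCinf, ?_, ?_⟩
      · intro x hx
        rcases Finset.mem_union.mp (Finset.mem_coe.mp hx) with h | h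
        · exact hsC h
        · have : (x : ℕ) ∈ (↑t : Set ℕ) := h
          rw [htco] at this
          exact this.1.1
      · intro c hc
        by_cases hcs : c ∈ (↑s₀ : Set ℕ)
        · exact Or.inl (Finset.mem_coe.mpr
            (Finset.mem_union_left _ (Finset.mem_coe.mp hcs)))
        · have hcE : c ∈ C \ ↑s₀ := ⟨hc, hcs⟩
          by_cases hcm : c < m
          · refine Or.inl (Finset.mem_coe.mpr (Finset.mem_union_right _ ?_))
            have : (c : ℕ) ∈ (↑t : Set ℕ) := by rw [htco]; exact ⟨hcE, hcm⟩
            exact Finset.mem_coe.mp this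
          · refine Or.inr ⟨hB₁sub (hEB₁ hcE), ?_⟩
            intro x hx
            rcases Finset.mem_union.mp hx with h | h
            · exact lt_of_lt_of_le (hs₀m x h) (not_lt.mp hcm)
            · have : (x : ℕ) ∈ (↑t : Set ℕ) := h
              rw [htco] at this
              exact lt_of_lt_of_le this.2 (not_lt.mp hcm)
    rcases hdec with h | h
    · refine hrej t htB₁ B₀ Set.Subset.rfl hB₀inf ?_
      intro D hD
      exact Set.mem_iUnion.mpr ⟨i, h hD⟩
    · exact h hCmem hCi

lemma CR_compl {X : Set (Set ℕ)} (h : CR X) : CR Xᶜ := by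
  intro s A hA
  obtain ⟨B, h1, h2, h3⟩ := h s A hA
  refine ⟨B, h1, h2, ?_⟩
  rcases h3 with h | h
  · exact Or.inr (by rwa [compl_compl])
  · exact Or.inl h

lemma LD_of_open {X : Set (ℕ → Bool)} (hX : IsOpen X) : LD {C : Set ℕ | chi C ∈ X} := by
  intro C hC
  obtain ⟨I, u, hu, hsub⟩ := isOpen_pi_iff.mp hX (chi C) hC
  refine ⟨I.sup id + 1, fun D hD => ?_⟩
  apply hsub
  intro i hi
  have hin : i < I.sup id + 1 := Nat.lt_succ_of_le (Finset.le_sup (f := id) hi)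
  have : chi D i = chi C i := by
    have hiff := hD i hin
    unfold chi
    by_cases h : i ∈ C
    · rw [if_pos h, if_pos (hiff.mpr h)]
    · rw [if_neg h, if_neg (fun hd => h (hiff.mp hd))]
  rw [this]
  exact (hu i hi).2

lemma CR_of_generated (Z : Set (ℕ → Bool))
    (hZ : MeasurableSpace.GenerateMeasurable {s : Set (ℕ → Bool) | IsOpen s} Z) :
    CR {C : Set ℕ | chi C ∈ Z} := by
  induction hZ with
  | basic u hu => exact CR_of_LD (LD_of_open hu)
  | empty =>
    intro s A hA
    exact ⟨A, Set.Subset.rfl, hA, Or.inr (fun C _ hmem => Set.notMem_empty (chi C) hmem)⟩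
  | compl u hu ih =>
    have he : {C : Set ℕ | chi C ∈ uᶜ} = {C : Set ℕ | chi C ∈ u}ᶜ := rfl
    rw [he]
    exact CR_compl ih
  | iUnion f hf ih =>
    have he : {C : Set ℕ | chi C ∈ ⋃ n, f n} = ⋃ n, {C : Set ℕ | chi C ∈ f n} := by
      ext C
      simp [Set.mem_iUnion]
    rw [he]
    exact CR_iUnion _ ih


end GP

/-- The Galvin–Prikry theorem: Borel subsets of the space of infinite subsets of ℕ
(identified with characteristic functions in `2^ℕ` with the product topology) are Ramsey. -/
theorem galvin_prikry (X : Set (ℕ → Bool))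
    (hX : @MeasurableSet (ℕ → Bool) (borel (ℕ → Bool)) X) :
    ∃ B : Set ℕ, B.Infinite ∧
      ((∀ C : Set ℕ, C ⊆ B → C.Infinite → chi C ∈ X) ∨
        (∀ C : Set ℕ, C ⊆ B → C.Infinite → chi C ∉ X)) := by
  have hX' : MeasurableSpace.GenerateMeasurable {s : Set (ℕ → Bool) | IsOpen s} X := hX
  obtain ⟨B, -, hBinf, hor⟩ := GP.CR_of_generated X hX' ∅ Set.univ Set.infinite_univ
  have hmem : ∀ C : Set ℕ, C ⊆ B → C.Infinite → C ∈ GP.Nb ∅ B := by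
    intro C hCB hCinf
    refine ⟨hCinf, by simp, fun c hc => Or.inr ⟨hCB hc, fun x hx => ?_⟩⟩
    exact absurd hx (Finset.notMem_empty x)
  refine ⟨B, hBinf, ?_⟩
  rcases hor with h | h
  · exact Or.inl (fun C hCB hCinf => h (hmem C hCB hCinf))
  · exact Or.inr (fun C hCB hCinf => h (hmem C hCB hCinf))
end

section
/- If X is an open subset of the space of infinite subsets of ℕ (with the product topology from 2^ℕ), then there exists an infinite B ⊆ ℕ such that either all infinite subsets of B are in X or all infinite subsets of B are in the complement of X. -/
namespace GalvinPrikryAux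

/-- `s` is an initial segment of `C`. -/
def Init (s : Finset ℕ) (C : Set ℕ) : Prop :=
  ↑s ⊆ C ∧ ∀ k ∈ C, k ∉ s → ∀ j ∈ s, j < k

def Accepts (F : Set (Finset ℕ)) (s : Finset ℕ) (A : Set ℕ) : Prop :=
  ∀ C : Set ℕ, C ⊆ A → C.Infinite → ∃ t ∈ F, Init t (↑s ∪ C)

def Rejects (F : Set (Finset ℕ)) (s : Finset ℕ) (A : Set ℕ) : Prop :=
  ∀ B : Set ℕ, B ⊆ A → B.Infinite → ¬ Accepts F s B

def Above (E : Finset ℕ) (A : Set ℕ) : Prop := ∀ a ∈ A, ∀ j ∈ E, j < a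

variable {F : Set (Finset ℕ)} {s t E : Finset ℕ} {A B D : Set ℕ}

lemma Accepts.mono (h : Accepts F s A) (hBA : B ⊆ A) : Accepts F s B :=
  fun C hC => h C (hC.trans hBA)

lemma Rejects.mono (h : Rejects F s A) (hBA : B ⊆ A) : Rejects F s B :=
  fun C hC => h C (hC.trans hBA)

lemma decide (s : Finset ℕ) (hA : A.Infinite) :
    ∃ B, B ⊆ A ∧ B.Infinite ∧ (Accepts F s B ∨ Rejects F s B) := by
  by_cases h : ∃ B, B ⊆ A ∧ B.Infinite ∧ Accepts F s B
  · obtain ⟨B, h1, h2, h3⟩ := h; exact ⟨B, h1, h2, Or.inl h3⟩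
  · exact ⟨A, subset_rfl, hA, Or.inr fun B hB hBi hacc => h ⟨B, hB, hBi, hacc⟩⟩

lemma decideAll (S : Finset (Finset ℕ)) (hA : A.Infinite) :
    ∃ B, B ⊆ A ∧ B.Infinite ∧ ∀ s ∈ S, Accepts F s B ∨ Rejects F s B := by
  induction S using Finset.induction_on generalizing A with
  | empty => exact ⟨A, subset_rfl, hA, by simp⟩
  | @insert a S ha ih =>
    obtain ⟨B, hBA, hBi, hB⟩ := ih hA
    obtain ⟨B', hB'B, hB'i, hB'⟩ := decide (F := F) a hBi
    refine ⟨B', hB'B.trans hBA, hB'i, fun s hs => ?_⟩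
    rcases Finset.mem_insert.mp hs with rfl | hs
    · exact hB'
    · rcases hB s hs with h | h
      · exact Or.inl (h.mono hB'B)
      · exact Or.inr (h.mono hB'B)

lemma accepts_of_mem (hs : s ∈ F) (h : Above s A) : Accepts F s A := by
  intro C hCA _
  refine ⟨s, hs, Set.subset_union_left, fun k hk hks j hj => ?_⟩
  rcases hk with hk | hk
  · exact absurd hk hks
  · exact h k (hCA hk) j hj

lemma infinite_inter_Ioi (hA : A.Infinite) (n : ℕ) : (A ∩ Set.Ioi n).Infinite := by
  refine (hA.diff (Set.finite_Iic n)).mono fun x hx => ⟨hx.1, ?_⟩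
  simpa using hx.2

lemma reject_accept_insert (hrej : Rejects F s A) (hD : D ⊆ A) (hDi : D.Infinite)
    (h : ∀ a ∈ D, Accepts F (insert a s) (D ∩ Set.Ioi a)) : False := by
  refine hrej D hD hDi fun C hCD hCi => ?_
  set a := sInf C with ha
  have haC : a ∈ C := Nat.sInf_mem hCi.nonempty
  obtain ⟨t, htF, hti⟩ := h a (hCD haC) (C ∩ Set.Ioi a)
    (Set.inter_subset_inter_left _ hCD) (infinite_inter_Ioi hCi a)
  refine ⟨t, htF, ?_⟩
  have hEq : (↑(insert a s) : Set ℕ) ∪ (C ∩ Set.Ioi a) = ↑s ∪ C := by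
    ext k
    simp only [Finset.coe_insert, Set.mem_union, Set.mem_insert_iff, Set.mem_inter_iff,
      Set.mem_Ioi, Finset.mem_coe]
    constructor
    · rintro ((rfl | hk) | ⟨hk, -⟩)
      · exact Or.inr haC
      · exact Or.inl hk
      · exact Or.inr hk
    · rintro (hk | hk)
      · exact Or.inl (Or.inr hk)
      · have : a ≤ k := Nat.sInf_le hk
        rcases this.lt_or_eq with h' | h'
        · exact Or.inr ⟨hk, h'⟩
        · exact Or.inl (Or.inl h'.symm)
  rwa [hEq] at hti

lemma step (E : Finset ℕ) (hA : A.Infinite) (hrej : ∀ s ⊆ E, Rejects F s A) :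
    ∃ a ∈ A, ∃ B, B ⊆ A ∧ B ⊆ Set.Ioi a ∧ B.Infinite ∧
      ∀ s ⊆ E, Rejects F (insert a s) B := by
  have key : ∀ B : Set ℕ, B.Infinite →
      ∃ B', B' ⊆ B ∩ Set.Ioi (sInf B) ∧ B'.Infinite ∧
        ∀ s ⊆ E, Accepts F (insert (sInf B) s) B' ∨ Rejects F (insert (sInf B) s) B' := by
    intro B hB
    obtain ⟨B', h1, h2, h3⟩ :=
      decideAll (F := F) (E.powerset.image (insert (sInf B))) (infinite_inter_Ioi hB _)
    exact ⟨B', h1, h2, fun s hs =>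
      h3 _ (Finset.mem_image_of_mem _ (Finset.mem_powerset.mpr hs))⟩
  let f : {B : Set ℕ // B.Infinite} → {B : Set ℕ // B.Infinite} := fun p =>
    ⟨(key p.1 p.2).choose, (key p.1 p.2).choose_spec.2.1⟩
  let seq : ℕ → {B : Set ℕ // B.Infinite} := fun i => f^[i] ⟨A, hA⟩
  let b : ℕ → ℕ := fun i => sInf (seq i).1
  have hstep : ∀ i, seq (i + 1) = f (seq i) := fun i => Function.iterate_succ_apply' f i _
  have h1 : ∀ i, (seq (i + 1)).1 ⊆ (seq i).1 ∩ Set.Ioi (b i) := by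
    intro i; rw [hstep]; exact (key (seq i).1 (seq i).2).choose_spec.1
  have h2 : ∀ i, ∀ s ⊆ E,
      Accepts F (insert (b i) s) (seq (i + 1)).1 ∨ Rejects F (insert (b i) s) (seq (i + 1)).1 := by
    intro i; rw [hstep]; exact (key (seq i).1 (seq i).2).choose_spec.2.2
  have hsub : ∀ i j, i ≤ j → (seq j).1 ⊆ (seq i).1 := by
    intro i j hij
    induction j, hij using Nat.le_induction with
    | base => exact subset_rfl
    | succ n hn ih => exact ((h1 n).trans Set.inter_subset_left).trans ih
  have hbmem : ∀ i, b i ∈ (seq i).1 := fun i => Nat.sInf_mem (seq i).2.nonempty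
  have hIoi : ∀ i j, i < j → (seq j).1 ⊆ Set.Ioi (b i) := fun i j h =>
    (hsub (i + 1) j h).trans ((h1 i).trans Set.inter_subset_right)
  have hbsm : StrictMono b := strictMono_nat_of_lt_succ fun i =>
    hIoi i (i + 1) (Nat.lt_succ_self i) (hbmem (i + 1))
  have hseqA : ∀ i, (seq i).1 ⊆ A := fun i => hsub 0 i (Nat.zero_le i)
  by_cases hcase : ∃ i, ∀ s ⊆ E, Rejects F (insert (b i) s) (seq (i + 1)).1
  · obtain ⟨i, hi⟩ := hcase
    exact ⟨b i, hseqA i (hbmem i), (seq (i + 1)).1, hseqA (i + 1),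
      (h1 i).trans Set.inter_subset_right, (seq (i + 1)).2, hi⟩
  · exfalso
    push_neg at hcase
    have hacc : ∀ i, ∃ s, s ⊆ E ∧ Accepts F (insert (b i) s) (seq (i + 1)).1 := by
      intro i
      obtain ⟨s, hsE, hsnr⟩ := hcase i
      refine ⟨s, hsE, ?_⟩
      rcases h2 i s hsE with h | h
      · exact h
      · exact absurd h hsnr
    choose sfun hsfE hsfacc using hacc
    have : ∃ y : {x // x ∈ E.powerset}, Infinite ((fun i : ℕ =>
        (⟨sfun i, Finset.mem_powerset.mpr (hsfE i)⟩ : {x // x ∈ E.powerset})) ⁻¹' {y}) :=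
      Finite.exists_infinite_fiber _
    obtain ⟨y, hy⟩ := this
    set I : Set ℕ := (fun i : ℕ =>
      (⟨sfun i, Finset.mem_powerset.mpr (hsfE i)⟩ : {x // x ∈ E.powerset})) ⁻¹' {y} with hIdef
    have hI : I.Infinite := Set.infinite_coe_iff.mp hy
    have hIs : ∀ i ∈ I, sfun i = y.1 := by
      intro i hi
      have : (⟨sfun i, _⟩ : {x // x ∈ E.powerset}) = y := hi
      exact congrArg Subtype.val this
    set D : Set ℕ := b '' I with hDdef
    have hDi : D.Infinite := hI.image (hbsm.injective.injOn)
    have hDA : D ⊆ A := by rintro x ⟨i, -, rfl⟩; exact hseqA i (hbmem i)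
    refine reject_accept_insert (hrej y.1 (Finset.mem_powerset.mp y.2)) hDA hDi ?_
    rintro x ⟨i, hiI, rfl⟩
    have hsubD : D ∩ Set.Ioi (b i) ⊆ (seq (i + 1)).1 := by
      rintro x ⟨⟨j, -, rfl⟩, hx⟩
      have hij : i < j := hbsm.lt_iff_lt.mp hx
      exact hsub (i + 1) j hij (hbmem j)
    have := (hsfacc i).mono hsubD
    rwa [hIs i hiI] at this

theorem galvin (F : Set (Finset ℕ)) :
    ∃ N : Set ℕ, N.Infinite ∧
      ((∀ C : Set ℕ, C ⊆ N → C.Infinite → ∃ t ∈ F, Init t C) ∨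
        (∀ s ∈ F, ¬ (↑s : Set ℕ) ⊆ N)) := by
  obtain ⟨B, -, hBi, hB⟩ := decide (F := F) (A := Set.univ) ∅ Set.infinite_univ
  rcases hB with hB | hB
  · refine ⟨B, hBi, Or.inl fun C hCB hCi => ?_⟩
    obtain ⟨t, htF, hti⟩ := hB C hCB hCi
    refine ⟨t, htF, ?_⟩
    rwa [show ((↑(∅ : Finset ℕ) : Set ℕ) ∪ C) = C by simp] at hti
  · -- B rejects ∅; run the fusion construction.
    have key : ∀ p : Finset ℕ × Set ℕ, p.2.Infinite → (∀ s ⊆ p.1, Rejects F s p.2) →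
        Above p.1 p.2 →
        ∃ q : Finset ℕ × Set ℕ, q.2.Infinite ∧ (∀ s ⊆ q.1, Rejects F s q.2) ∧
          Above q.1 q.2 ∧ q.2 ⊆ p.2 ∧ ∃ a ∈ p.2, q.1 = insert a p.1 ∧ a ∉ p.1 := by
      rintro ⟨E, A⟩ hA hrej habove
      obtain ⟨a, haA, B', hB'A, hB'Ioi, hB'i, hB'rej⟩ := step E hA hrej
      have haE : a ∉ E := fun h => lt_irrefl a (habove a haA a h)
      refine ⟨(insert a E, B'), hB'i, ?_, ?_, hB'A, a, haA, rfl, haE⟩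
      · intro s hs
        by_cases has : a ∈ s
        · have : s = insert a (s.erase a) := (Finset.insert_erase has).symm
          rw [this]
          exact hB'rej (s.erase a) (fun x hx => by
            have := hs (Finset.mem_erase.mp hx |>.2)
            rcases Finset.mem_insert.mp this with h' | h'
            · exact absurd h' (Finset.mem_erase.mp hx).1
            · exact h')
        · have hsE : s ⊆ E := fun x hx => by
            rcases Finset.mem_insert.mp (hs hx) with rfl | h'
            · exact absurd hx has
            · exact h'
          exact (hrej s hsE).mono hB'A
      · intro x hx j hj
        rcases Finset.mem_insert.mp hj with rfl | hj
        · exact hB'Ioi hx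
        · exact habove x (hB'A hx) j hj
    let St := {p : Finset ℕ × Set ℕ //
      p.2.Infinite ∧ (∀ s ⊆ p.1, Rejects F s p.2) ∧ Above p.1 p.2}
    let f : St → St := fun p =>
      ⟨(key p.1 p.2.1 p.2.2.1 p.2.2.2).choose,
        (key p.1 p.2.1 p.2.2.1 p.2.2.2).choose_spec.1,
        (key p.1 p.2.1 p.2.2.1 p.2.2.2).choose_spec.2.1,
        (key p.1 p.2.1 p.2.2.1 p.2.2.2).choose_spec.2.2.1⟩
    have hrejB : ∀ s ⊆ (∅ : Finset ℕ), Rejects F s B := by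
      intro s hs
      rw [Finset.subset_empty.mp hs]
      exact hB
    have habB : Above ∅ B := fun a _ j hj => absurd hj (Finset.notMem_empty j)
    let st : ℕ → St := fun i => f^[i] ⟨(∅, B), hBi, hrejB, habB⟩
    let E : ℕ → Finset ℕ := fun i => (st i).1.1
    let A : ℕ → Set ℕ := fun i => (st i).1.2
    have hstep : ∀ i, st (i + 1) = f (st i) := fun i => Function.iterate_succ_apply' f i _
    have hnew : ∀ i, ∃ a ∈ A i, E (i + 1) = insert a (E i) ∧ a ∉ E i := by
      intro i
      have h := (key (st i).1 (st i).2.1 (st i).2.2.1 (st i).2.2.2).choose_spec.2.2.2.2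
      obtain ⟨a, ha, h1, h2⟩ := h
      refine ⟨a, ha, ?_, h2⟩
      show (st (i + 1)).1.1 = _
      rw [hstep]
      exact h1
    have hEmono : ∀ i j, i ≤ j → E i ⊆ E j := by
      intro i j hij
      induction j, hij using Nat.le_induction with
      | base => exact subset_rfl
      | succ n hn ih =>
        obtain ⟨a, -, h1, -⟩ := hnew n
        rw [h1]
        exact ih.trans (Finset.subset_insert a (E n))
    have hEcard : ∀ i, (E i).card = i := by
      intro i
      induction i with
      | zero => rfl
      | succ n ih =>
        obtain ⟨a, -, h1, h2⟩ := hnew n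
        rw [h1, Finset.card_insert_of_notMem h2, ih]
    refine ⟨⋃ i, (↑(E i) : Set ℕ), ?_, Or.inr ?_⟩
    · intro hfin
      have hsub : E (hfin.toFinset.card + 1) ⊆ hfin.toFinset := fun x hx =>
        hfin.mem_toFinset.mpr (Set.mem_iUnion.mpr ⟨_, hx⟩)
      have := Finset.card_le_card hsub
      rw [hEcard] at this
      omega
    · intro s hsF hsN
      have hfind : ∀ t : Finset ℕ, (↑t : Set ℕ) ⊆ ⋃ i, (↑(E i) : Set ℕ) → ∃ i, t ⊆ E i := by
        intro t
        induction t using Finset.induction_on with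
        | empty => exact fun _ => ⟨0, Finset.empty_subset _⟩
        | @insert x t hx ih =>
          intro ht
          obtain ⟨i, hi⟩ := ih fun y hy =>
            ht (Finset.mem_coe.mpr (Finset.mem_insert_of_mem (Finset.mem_coe.mp hy)))
          obtain ⟨j, hj⟩ := Set.mem_iUnion.mp (ht (Finset.mem_coe.mpr (Finset.mem_insert_self x t)))
          exact ⟨max i j, Finset.insert_subset (hEmono j _ (le_max_right i j) hj)
            (hi.trans (hEmono i _ (le_max_left i j)))⟩
      obtain ⟨i, hi⟩ := hfind s hsN
      have hrej : Rejects F s (A i) := (st i).2.2.1 s hi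
      have habove : Above s (A i) := fun a ha j hj => (st i).2.2.2 a ha j (hi hj)
      exact hrej (A i) subset_rfl (st i).2.1 (accepts_of_mem hsF habove)

end GalvinPrikryAux

open GalvinPrikryAux in
/-- The open case of the Galvin–Prikry theorem: open subsets of the space of infinite
subsets of ℕ (identified with characteristic functions in `2^ℕ` with the product topology)
are Ramsey. -/
theorem galvin_prikry_open (X : Set (ℕ → Bool)) (hX : IsOpen X) :
    ∃ B : Set ℕ, B.Infinite ∧
      ((∀ C : Set ℕ, C ⊆ B → C.Infinite → chi C ∈ X) ∨
        (∀ C : Set ℕ, C ⊆ B → C.Infinite → chi C ∉ X)) := by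
  classical
  set F : Set (Finset ℕ) :=
    {s | s.Nonempty ∧ ∀ D : Set ℕ, (∀ k ≤ s.sup id, (k ∈ D ↔ k ∈ s)) → chi D ∈ X} with hF
  -- Bridge 2: membership in `F` plus initial segment implies membership in `X`.
  have bridge2 : ∀ s ∈ F, ∀ C : Set ℕ, Init s C → chi C ∈ X := by
    intro s hs C hinit
    refine hs.2 C fun k hk => ⟨fun hkC => ?_, fun hks => hinit.1 hks⟩
    by_contra hks
    have hlt : ∀ j ∈ s, j < k := hinit.2 k hkC hks
    have hpos : 0 < k := lt_of_le_of_lt (Nat.zero_le _) (hlt _ hs.1.choose_spec)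
    have : s.sup id < k := Finset.sup_lt_iff hpos |>.mpr hlt
    omega
  -- Bridge 1: `chi C ∈ X` implies some initial segment of `C` is in `F`.
  have bridge1 : ∀ C : Set ℕ, C.Infinite → chi C ∈ X → ∃ s ∈ F, Init s C := by
    intro C hCi hCX
    obtain ⟨I, u, hu, hsub⟩ := isOpen_pi_iff.mp hX (chi C) hCX
    obtain ⟨m, hmC, hmI⟩ := hCi.exists_gt (I.sup id)
    set s : Finset ℕ := (Finset.range (m + 1)).filter (· ∈ C) with hsdef
    have hms : m ∈ s := by simp [hsdef, hmC]
    have hsC : (↑s : Set ℕ) ⊆ C := fun x hx => (Finset.mem_filter.mp hx).2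
    have hsup : s.sup id = m := by
      refine le_antisymm (Finset.sup_le fun k hk => ?_) (Finset.le_sup (f := id) hms)
      have := (Finset.mem_filter.mp hk).1
      simpa [Nat.lt_succ_iff] using Finset.mem_range.mp this
    have hmem : ∀ k ≤ m, (k ∈ s ↔ k ∈ C) := by
      intro k hk
      simp [hsdef, Nat.lt_succ_iff, hk]
    refine ⟨s, ⟨⟨m, hms⟩, ?_⟩, hsC, fun k hkC hks j hj => ?_⟩
    · intro D hD
      refine hsub fun i hi => ?_
      have hiI : i ≤ I.sup id := Finset.le_sup (f := id) hi
      have him : i ≤ m := le_of_lt (lt_of_le_of_lt hiI hmI)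
      have : (i ∈ D ↔ i ∈ C) := by
        rw [hD i (by rw [hsup]; exact him)]
        exact hmem i him
      have hchieq : chi D i = chi C i := by
        simp only [chi]
        by_cases h : i ∈ C
        · rw [if_pos (this.mpr h), if_pos h]
        · rw [if_neg (fun h' => h (this.mp h')), if_neg h]
      rw [hchieq]
      exact (hu i hi).2
    · -- k ∈ C, k ∉ s ⇒ k > m ≥ j
      have hkm : m < k := by
        by_contra h
        exact hks ((hmem k (le_of_not_gt h)).mpr hkC)
      have hjm : j ≤ m := by
        have := (Finset.mem_filter.mp hj).1
        simpa [Nat.lt_succ_iff] using Finset.mem_range.mp this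
      omega
  obtain ⟨N, hNi, hN⟩ := galvin F
  refine ⟨N, hNi, ?_⟩
  rcases hN with hN | hN
  · refine Or.inl fun C hCN hCi => ?_
    obtain ⟨t, htF, hti⟩ := hN C hCN hCi
    exact bridge2 t htF C hti
  · refine Or.inr fun C hCN hCi hCX => ?_
    obtain ⟨s, hsF, hsi⟩ := bridge1 C hCi hCX
    exact hN s hsF (hsi.1.trans hCN)
end

section
/- For all k, n, s ∈ ℕ there exists M ∈ ℕ such that for every coloring c of the k-element subsets of {0,…,M−1} with s colors, there exists an n-element set H ⊆ {0,…,M−1} such that c is constant on the k-element subsets of H. -/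
/-- Ramsey's theorem for subsets of an arbitrary sufficiently large finite set. -/
theorem ramsey_aux (k : ℕ) : ∀ s n : ℕ, 0 < s →
    ∃ M : ℕ, ∀ S : Finset ℕ, M ≤ S.card → ∀ c : Finset ℕ → Fin s,
      ∃ H : Finset ℕ, H ⊆ S ∧ H.card = n ∧
        ∀ t₁ t₂ : Finset ℕ, t₁ ⊆ H → t₂ ⊆ H → t₁.card = k → t₂.card = k →
          c t₁ = c t₂ := by
  induction k with
  | zero =>
    intro s n _
    refine ⟨n, fun S hS c => ?_⟩
    obtain ⟨H, hHS, hHcard⟩ := Finset.exists_subset_card_eq hS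
    refine ⟨H, hHS, hHcard, fun t₁ t₂ _ _ h₁ h₂ => ?_⟩
    rw [Finset.card_eq_zero] at h₁ h₂
    rw [h₁, h₂]
  | succ k IH =>
    intro s n hs
    obtain ⟨Mk, hMk⟩ := Classical.axiomOfChoice (fun m => IH s m hs)
    have key : ∀ L : ℕ, ∃ m : ℕ, ∀ (c : Finset ℕ → Fin s) (S : Finset ℕ), m ≤ S.card →
        ∃ (A : Finset ℕ) (f : ℕ → Fin s), A ⊆ S ∧ A.card = L ∧
          ∀ a ∈ A, ∀ t : Finset ℕ, t ⊆ A → t.card = k → (∀ x ∈ t, a < x) →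
            c (insert a t) = f a := by
      intro L
      induction L with
      | zero =>
        exact ⟨0, fun c S _ => ⟨∅, fun _ => ⟨0, hs⟩, Finset.empty_subset S, rfl,
          fun a ha => absurd ha (Finset.notMem_empty a)⟩⟩
      | succ L IHL =>
        obtain ⟨m, hm⟩ := IHL
        refine ⟨Mk m + 1, fun c S hScard => ?_⟩
        have hSne : S.Nonempty := by
          rw [← Finset.card_pos]; omega
        obtain ⟨a, haS, hamin⟩ : ∃ a ∈ S, ∀ x ∈ S, a ≤ x :=
          ⟨S.min' hSne, S.min'_mem hSne, fun x hx => S.min'_le x hx⟩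
        have hS'card : Mk m ≤ (S.erase a).card := by
          rw [Finset.card_erase_of_mem haS]; omega
        obtain ⟨T, hTS', hTcard, hThom⟩ :=
          hMk m (S.erase a) hS'card (fun t => c (insert a t))
        obtain ⟨A', f', hA'T, hA'card, hA'prop⟩ := hm c T hTcard.ge
        have haA' : a ∉ A' := fun h => Finset.notMem_erase a S (hTS' (hA'T h))
        have hA'S : ∀ x ∈ A', a < x := by
          intro x hx
          have hxS : x ∈ S.erase a := hTS' (hA'T hx)
          exact lt_of_le_of_ne (hamin x (Finset.mem_of_mem_erase hxS))
            (Ne.symm (Finset.ne_of_mem_erase hxS))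
        obtain ⟨v, hv⟩ : ∃ v : Fin s, ∀ t : Finset ℕ, t ⊆ A' → t.card = k →
            c (insert a t) = v := by
          by_cases h : ∃ t : Finset ℕ, t ⊆ A' ∧ t.card = k
          · obtain ⟨t₀, ht₀A, ht₀k⟩ := h
            exact ⟨c (insert a t₀), fun t ht htk =>
              hThom t t₀ (ht.trans hA'T) (ht₀A.trans hA'T) htk ht₀k⟩
          · exact ⟨⟨0, hs⟩, fun t ht htk => absurd ⟨t, ht, htk⟩ h⟩
        refine ⟨insert a A', Function.update f' a v, ?_, ?_, ?_⟩
        · intro x hx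
          rcases Finset.mem_insert.mp hx with rfl | hx
          · exact haS
          · exact Finset.erase_subset a S (hTS' (hA'T hx))
        · rw [Finset.card_insert_of_notMem haA', hA'card]
        · intro x hx t htA htk htgt
          have hax : a ≤ x := by
            rcases Finset.mem_insert.mp hx with h | h
            · exact h.ge
            · exact (hA'S x h).le
          have htA' : t ⊆ A' := by
            intro b hb
            rcases Finset.mem_insert.mp (htA hb) with h | hbA'
            · exfalso
              have h1 := htgt b hb
              omega
            · exact hbA'
          rcases Finset.mem_insert.mp hx with h | hxA'
          · subst h
            rw [Function.update_self]
            exact hv t htA' htk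
          · have hxa : x ≠ a := fun h => haA' (h ▸ hxA')
            rw [Function.update_of_ne hxa]
            exact hA'prop x hxA' t htA' htk htgt
    obtain ⟨m, hm⟩ := key (s * n + 1)
    refine ⟨m, fun S hS c => ?_⟩
    obtain ⟨A, f, hAS, hAcard, hAprop⟩ := hm c S hS
    have hcard : (Finset.univ : Finset (Fin s)).card * n < A.card := by
      rw [hAcard, Finset.card_univ, Fintype.card_fin]
      omega
    obtain ⟨y, -, hy⟩ := Finset.exists_lt_card_fiber_of_mul_lt_card_of_maps_to
      (fun a _ => Finset.mem_univ (f a)) hcard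
    obtain ⟨H, hHsub, hHcard⟩ := Finset.exists_subset_card_eq hy.le
    have hHA : H ⊆ A := hHsub.trans (Finset.filter_subset _ A)
    have hmono : ∀ t : Finset ℕ, t ⊆ H → t.card = k + 1 → c t = y := by
      intro t htH htk
      have htne : t.Nonempty := by
        rw [← Finset.card_pos]; omega
      set b := t.min' htne with hb
      have hbt : b ∈ t := t.min'_mem htne
      have hbH : b ∈ H := htH hbt
      have hrest : (t.erase b).card = k := by
        rw [Finset.card_erase_of_mem hbt, htk]
        omega
      have hgt : ∀ x ∈ t.erase b, b < x := by
        intro x hx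
        exact lt_of_le_of_ne (t.min'_le x (Finset.mem_of_mem_erase hx))
          (Ne.symm (Finset.ne_of_mem_erase hx))
      have h1 : c (insert b (t.erase b)) = f b :=
        hAprop b (hHA hbH) (t.erase b)
          ((Finset.erase_subset b t).trans (htH.trans hHA)) hrest hgt
      rw [Finset.insert_erase hbt] at h1
      have h2 : f b = y := by
        have := hHsub hbH
        simpa using (Finset.mem_filter.mp this).2
      rw [h1, h2]
    exact ⟨H, hHA.trans hAS, hHcard, fun t₁ t₂ h₁ h₂ hc₁ hc₂ => by
      rw [hmono t₁ h₁ hc₁, hmono t₂ h₂ hc₂]⟩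

/-- Finite Ramsey's theorem. -/
theorem finite_ramsey (k n s : ℕ) :
    ∃ M : ℕ, ∀ c : Finset ℕ → Fin s,
      ∃ H : Finset ℕ, H ⊆ Finset.range M ∧ H.card = n ∧
        ∀ t₁ t₂ : Finset ℕ, t₁ ⊆ H → t₂ ⊆ H → t₁.card = k → t₂.card = k →
          c t₁ = c t₂ := by
  rcases Nat.eq_zero_or_pos s with rfl | hs
  · exact ⟨0, fun c => (c ∅).elim0⟩
  · obtain ⟨M, hM⟩ := ramsey_aux k s n hs
    exact ⟨M, fun c => hM (Finset.range M) (by rw [Finset.card_range]) c⟩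
end

section
/- For all k, s ∈ ℕ and every coloring c with s colors of the set of all partitions of initial segments {0,…,n−1} of ℕ into exactly k nonempty blocks (n ranging over ℕ), there exists an infinite partition Y of ℕ such that c is constant on the set of k-block finite partitions that are reducts of Y, i.e., coarsenings of restrictions of Y to initial segments obtained by merging blocks. -/
/-- `g` codes an infinite partition of ℕ (with blocks ordered by their minima):
`g x` is the minimum of the block containing `x`, and there are infinitely many blocks. -/
def IsInfPart (g : ℕ → ℕ) : Prop :=
  (∀ x, g x ≤ x) ∧ (∀ x, g (g x) = g x) ∧ (Set.range g).Infinite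

/-- `Z` is coarser than `Y`: every block of `Y` is contained in a block of `Z`. -/
def Coarser (Z Y : ℕ → ℕ) : Prop := ∀ a b, Y a = Y b → Z a = Z b

/-- `p = (n, f)` codes a partition of `{0,…,n-1}` (with blocks labeled by their minima,
and `f` normalized to `0` beyond `n`). -/
def IsFinPart (p : ℕ × (ℕ → ℕ)) : Prop :=
  (∀ x < p.1, p.2 x ≤ x ∧ p.2 (p.2 x) = p.2 x) ∧ ∀ x, p.1 ≤ x → p.2 x = 0

/-- The number of blocks of the finite partition `p`. -/
def blocks (p : ℕ × (ℕ → ℕ)) : ℕ := ((Finset.range p.1).image p.2).card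

/-- The `k`-th approximation of the infinite partition `g`: its first `k` blocks,
cut below the minimum of the `k`-th block. -/
noncomputable def rPart (k : ℕ) (g : ℕ → ℕ) : ℕ × (ℕ → ℕ) :=
  (Nat.nth (fun x => g x = x) k,
    fun x => if x < Nat.nth (fun x => g x = x) k then g x else 0)

open Filter Set

namespace DR

/-! ### Words and the ultrafilter semigroup -/

instance listSemigroup {α : Type*} : Semigroup (List α) where
  mul := (· ++ ·)
  mul_assoc := List.append_assoc

lemma lmul_def {α : Type*} (a b : List α) : a * b = a ++ b := rfl

attribute [local instance] Ultrafilter.mul Ultrafilter.semigroup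

abbrev W (m : ℕ) := List (Fin m)

theorem exists_ucol {α : Type*} [Nonempty α] {s : ℕ} (p : Ultrafilter α) (f : α → Fin s) :
    ∃ i, {a | f a = i} ∈ p := by
  by_contra hc
  push_neg at hc
  have h2 : ∀ i : Fin s, {a | f a ≠ i} ∈ p := fun i => (p.compl_mem_iff_notMem).2 (hc i)
  have h3 : {a : α | ∀ i, f a ≠ i} ∈ p := by
    have : {a : α | ∀ i, f a ≠ i} = ⋂ i ∈ (Finset.univ : Finset (Fin s)), {a | f a ≠ i} := by
      ext a; simp
    rw [this]
    exact (Filter.biInter_finset_mem _).2 fun i _ => h2 i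
  rcases p.nonempty_of_mem h3 with ⟨a, ha⟩
  exact ha (f a) rfl

/-- The color that a coloring takes `p`-almost everywhere. -/
noncomputable def ucol {α : Type*} [Nonempty α] {s : ℕ} (p : Ultrafilter α) (f : α → Fin s) :
    Fin s := Classical.choose (exists_ucol p f)

theorem ucol_mem {α : Type*} [Nonempty α] {s : ℕ} (p : Ultrafilter α) (f : α → Fin s) :
    {a | f a = ucol p f} ∈ p := Classical.choose_spec (exists_ucol p f)

theorem ucol_eq {α : Type*} [Nonempty α] {s : ℕ} (p : Ultrafilter α) (f : α → Fin s) {i : Fin s}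
    (h : {a | f a = i} ∈ p) : ucol p f = i := by
  by_contra hne
  have := p.nonempty_of_mem (inter_mem (ucol_mem p f) h)
  rcases this with ⟨a, ha1, ha2⟩
  exact hne (ha1 ▸ ha2 ▸ rfl)

/-! ### Variable words -/

/-- A variable word over `Fin m`: a constant head `h`, then a body `b` whose entries are
either fixed letters (`some a`) or the variable (`none`); the body starts with the variable. -/
structure VW (m : ℕ) where
  h : List (Fin m)
  b : List (Option (Fin m))
  hb : b.head? = some none

/-- Evaluation of a variable word at a letter. -/
def eval {m : ℕ} (a : Fin m) (u : VW m) : W m := u.h ++ u.b.map (fun o => o.getD a)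

/-- A Carlson–Simpson ultrafilter: an idempotent ultrafilter on words such that every large
set contains the head and all evaluations of some variable word. -/
def IsCS {m : ℕ} (p : Ultrafilter (W m)) : Prop :=
  p * p = p ∧ ∀ B ∈ p, ∃ u : VW m, u.h ∈ B ∧ ∀ a, eval a u ∈ B

theorem idem_mem {m : ℕ} {p : Ultrafilter (W m)} (hp : p * p = p) {B : Set (W m)} (hB : B ∈ p) :
    {w | {w' | w ++ w' ∈ B} ∈ p} ∈ p := by
  have : B ∈ p * p := by rw [hp]; exact hB
  exact this

section Chat

variable {m M s : ℕ}

/-- The stable color of prefix `P`. -/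
noncomputable def chat (p : Ultrafilter (W m)) (χ : W M → Fin s) (ι : W m → W M) (P : W M) :
    Fin s := ucol p (fun w => χ (P ++ ι w))

theorem chat_mem (p : Ultrafilter (W m)) (χ : W M → Fin s) (ι : W m → W M) (P : W M) :
    {w | χ (P ++ ι w) = chat p χ ι P} ∈ p := ucol_mem p _

/-- Words whose appending preserves both the color readout and the stable color. -/
def GSet (p : Ultrafilter (W m)) (χ : W M → Fin s) (ι : W m → W M) (P : W M) : Set (W m) :=
  {w | χ (P ++ ι w) = chat p χ ι P ∧ chat p χ ι (P ++ ι w) = chat p χ ι P}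

theorem GSet_mem (p : Ultrafilter (W m)) (χ : W M → Fin s) (ι : W m → W M)
    (hp : p * p = p) (hι : ∀ v w, ι (v ++ w) = ι v ++ ι w) (P : W M) :
    GSet p χ ι P ∈ p := by
  apply inter_mem (chat_mem p χ ι P)
  have h1 := idem_mem hp (chat_mem p χ ι P)
  filter_upwards [h1] with w hw
  show chat p χ ι (P ++ ι w) = chat p χ ι P
  apply ucol_eq
  have he : {w' | χ (P ++ ι (w ++ w')) = chat p χ ι P}
      = {a | χ (P ++ ι w ++ ι a) = chat p χ ι P} := by
    ext w'; simp only [Set.mem_setOf_eq, hι, List.append_assoc]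
  exact he ▸ hw

/-- Intersection of finitely many `p`-large sets is `p`-large (list version). -/
theorem list_inter_mem {α β : Type*} (p : Ultrafilter α) (l : List β) (f : β → Set α)
    (hf : ∀ x ∈ l, f x ∈ p) : {a | ∀ x ∈ l, a ∈ f x} ∈ p := by
  induction l with
  | nil =>
      have : {a : α | ∀ x ∈ ([] : List β), a ∈ f x} = univ := by ext a; simp
      rw [this]; exact univ_mem
  | cons y l ih =>
      have h1 : f y ∩ {a | ∀ x ∈ l, a ∈ f x} ∈ p :=
        inter_mem (hf y (by simp)) (ih fun x hx => hf x (List.mem_cons_of_mem _ hx))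
      filter_upwards [h1] with a ha
      intro x hx
      rcases List.mem_cons.mp hx with rfl | hx'
      · exact ha.1
      · exact ha.2 x hx'

end Chat

section Call

variable {m s : ℕ}

/-- `span u b J` is the concatenation of the first `J` variable words, the `j`-th
evaluated at letter `b j`. -/
def span (u : ℕ → VW m) (b : ℕ → Fin m) : ℕ → W m
  | 0 => []
  | J + 1 => span u b J ++ eval (b J) (u J)

/-- The `p`-large set of "good" words relative to a finite set of prefixes. -/
def BSet (p : Ultrafilter (W m)) (χ : W m → Fin s) (S : List (W m)) : Set (W m) :=
  {w | ∀ P ∈ S, w ∈ GSet p χ id P}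

theorem BSet_mem (p : Ultrafilter (W m)) (hp : IsCS p) (χ : W m → Fin s) (S : List (W m)) :
    BSet p χ S ∈ p :=
  list_inter_mem p S _ fun P _ => GSet_mem p χ id hp.1 (fun _ _ => rfl) P

/-- Choice of a variable word good for all prefixes in `S`. -/
noncomputable def pick (p : Ultrafilter (W m)) (hp : IsCS p) (χ : W m → Fin s)
    (S : List (W m)) : VW m :=
  Classical.choose (hp.2 _ (BSet_mem p hp χ S))

theorem pick_spec (p : Ultrafilter (W m)) (hp : IsCS p) (χ : W m → Fin s) (S : List (W m)) :
    (pick p hp χ S).h ∈ BSet p χ S ∧ ∀ a, eval a (pick p hp χ S) ∈ BSet p χ S :=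
  Classical.choose_spec (hp.2 _ (BSet_mem p hp χ S))

/-- The prefix bookkeeping of the Carlson–Simpson recursion. -/
noncomputable def Plist (p : Ultrafilter (W m)) (hp : IsCS p) (χ : W m → Fin s) :
    ℕ → List (W m)
  | 0 => [[]]
  | n + 1 => Plist p hp χ n ++ (Plist p hp χ n).flatMap (fun P =>
      (List.finRange m).map (fun b => P ++ eval b (pick p hp χ (Plist p hp χ n))))

/-- The chosen variable words. -/
noncomputable def uu (p : Ultrafilter (W m)) (hp : IsCS p) (χ : W m → Fin s) (n : ℕ) : VW m :=
  pick p hp χ (Plist p hp χ n)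

theorem Plist_invariant (p : Ultrafilter (W m)) (hp : IsCS p) (χ : W m → Fin s) :
    ∀ n, ∀ P ∈ Plist p hp χ n, chat p χ id P = chat p χ id [] := by
  intro n
  induction n with
  | zero =>
      intro P hP
      simp only [Plist, List.mem_singleton] at hP
      rw [hP]
  | succ n ih =>
      intro P hP
      simp only [Plist, List.mem_append, List.mem_flatMap, List.mem_map] at hP
      rcases hP with h | ⟨Q, hQ, b, _, rfl⟩
      · exact ih P h
      · have h2 := ((pick_spec p hp χ (Plist p hp χ n)).2 b) Q hQ
        have h3 : chat p χ id (Q ++ id (eval b (pick p hp χ (Plist p hp χ n)))) = chat p χ id Q :=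
          h2.2
        simp only [id] at h3
        rw [h3]
        exact ih Q hQ

theorem span_mem_Plist (p : Ultrafilter (W m)) (hp : IsCS p) (χ : W m → Fin s)
    (b : ℕ → Fin m) : ∀ J, span (uu p hp χ) b J ∈ Plist p hp χ J := by
  intro J
  induction J with
  | zero => simp [span, Plist]
  | succ J ih =>
      simp only [Plist, List.mem_append, List.mem_flatMap, List.mem_map]
      right
      exact ⟨_, ih, b J, List.mem_finRange _, rfl⟩

/-- The Carlson–Simpson recursion: all cut-spans get the same color. -/
theorem call (p : Ultrafilter (W m)) (hp : IsCS p) (χ : W m → Fin s) :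
    ∃ u : ℕ → VW m, ∀ (J : ℕ) (b : ℕ → Fin m),
    χ (span u b J ++ (u J).h) = χ ((u 0).h) := by
  refine ⟨uu p hp χ, fun J b => ?_⟩
  have h1 : (uu p hp χ J).h ∈ BSet p χ (Plist p hp χ J) := (pick_spec p hp χ _).1
  have h2 := h1 _ (span_mem_Plist p hp χ b J)
  have h3 : χ (span (uu p hp χ) b J ++ id (uu p hp χ J).h)
      = chat p χ id (span (uu p hp χ) b J) := h2.1
  simp only [id] at h3
  rw [h3, Plist_invariant p hp χ J _ (span_mem_Plist p hp χ b J)]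
  have h4 : (uu p hp χ 0).h ∈ BSet p χ (Plist p hp χ 0) := (pick_spec p hp χ _).1
  have h5 := (h4 [] (by simp [Plist])).1
  simp only [id, List.nil_append] at h5
  exact h5.symm

end Call

section Existence

variable {m s : ℕ}

/-! #### Base case -/

theorem isCS_zero : IsCS (pure ([] : W 0) : Ultrafilter (W 0)) := by
  constructor
  · apply Ultrafilter.coe_injective
    apply Filter.ext
    intro B
    constructor
    · intro hB
      have h : {w : W 0 | {w' : W 0 | w ++ w' ∈ B} ∈ (pure ([] : W 0) : Ultrafilter (W 0))}
          ∈ (pure ([] : W 0) : Ultrafilter (W 0)) := hB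
      rw [Ultrafilter.mem_pure] at h
      have h2 := h
      simp only [Set.mem_setOf_eq, Ultrafilter.mem_pure, List.nil_append] at h2
      simpa using h2
    · intro hB
      show {w : W 0 | {w' : W 0 | w ++ w' ∈ B} ∈ (pure ([] : W 0) : Ultrafilter (W 0))}
          ∈ (pure ([] : W 0) : Ultrafilter (W 0))
      rw [Ultrafilter.mem_pure]
      simp only [Set.mem_setOf_eq, Ultrafilter.mem_pure, List.nil_append]
      simpa using hB
  · intro B hB
    rw [Ultrafilter.mem_pure] at hB
    exact ⟨⟨[], [none], rfl⟩, hB, fun a => a.elim0⟩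

/-! #### Letter embeddings -/

/-- Embedding of words over `Fin m` into words over `Fin (m+1)`. -/
def emb : W m → W (m + 1) := List.map Fin.castSucc

theorem emb_append (v w : W m) : emb (v ++ w) = emb v ++ emb w := List.map_append

/-- Body of a variable word, letters embedded. -/
def mbody (u : VW m) : List (Option (Fin (m + 1))) := u.b.map (Option.map Fin.castSucc)

/-- Evaluation of an embedded variable word at the new letter. -/
def evalStar (u : VW m) : W (m + 1) :=
  emb u.h ++ u.b.map (fun o => (Option.map Fin.castSucc o).getD (Fin.last m))

theorem mbody_eval_cast (u : VW m) (b : Fin m) :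
    (mbody u).map (fun o => o.getD (Fin.castSucc b)) = emb (u.b.map (fun o => o.getD b)) := by
  unfold mbody emb
  rw [List.map_map, List.map_map]
  apply List.map_congr_left
  intro o _
  cases o <;> rfl

theorem mbody_eval_last (u : VW m) :
    (mbody u).map (fun o => o.getD (Fin.last m))
      = u.b.map (fun o => (Option.map Fin.castSucc o).getD (Fin.last m)) := by
  unfold mbody
  rw [List.map_map]
  rfl

theorem map_some_eval (l : W (m + 1)) (c : Fin (m + 1)) :
    (l.map some).map (fun o => o.getD c) = l := by
  rw [List.map_map]
  have h : ((fun (o : Option (Fin (m+1))) => o.getD c) ∘ some) = id := rfl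
  rw [h, List.map_id]

/-! #### The chain construction -/

/-- Good sets relative to the embedding. -/
def BSet' (p : Ultrafilter (W m)) (γ : W (m + 1) → Fin s) (S : List (W (m + 1))) : Set (W m) := {w | ∀ P ∈ S, w ∈ GSet p γ emb P}

theorem BSet'_mem (p : Ultrafilter (W m)) (hp : IsCS p) (γ : W (m + 1) → Fin s)
    (S : List (W (m + 1))) : BSet' p γ S ∈ p :=
  list_inter_mem p S _ fun P _ => GSet_mem p γ emb hp.1 emb_append P

noncomputable def pick' (p : Ultrafilter (W m)) (hp : IsCS p) (γ : W (m + 1) → Fin s)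
    (S : List (W (m + 1))) : VW m :=
  Classical.choose (hp.2 _ (BSet'_mem p hp γ S))

theorem pick'_spec (p : Ultrafilter (W m)) (hp : IsCS p) (γ : W (m + 1) → Fin s)
    (S : List (W (m + 1))) :
    (pick' p hp γ S).h ∈ BSet' p γ S ∧ ∀ a, eval a (pick' p hp γ S) ∈ BSet' p γ S :=
  Classical.choose_spec (hp.2 _ (BSet'_mem p hp γ S))

/-- The chain state: current node and prefix bookkeeping. -/
noncomputable def chainS (p : Ultrafilter (W m)) (hp : IsCS p) (γ : W (m + 1) → Fin s) :
    ℕ → W (m + 1) × List (W (m + 1))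
  | 0 => ([], [[]])
  | t + 1 =>
      let st := chainS p hp γ t
      let u := pick' p hp γ st.2
      (st.1 ++ evalStar u,
        st.2 ++ st.2.flatMap (fun P =>
          (P ++ evalStar u) :: (List.finRange m).map (fun b => P ++ emb (eval b u))))

noncomputable def QQ (p : Ultrafilter (W m)) (hp : IsCS p) (γ : W (m + 1) → Fin s) (t : ℕ) : W (m + 1) := (chainS p hp γ t).1

noncomputable def SS (p : Ultrafilter (W m)) (hp : IsCS p) (γ : W (m + 1) → Fin s) (t : ℕ) : List (W (m + 1)) := (chainS p hp γ t).2

noncomputable def cu (p : Ultrafilter (W m)) (hp : IsCS p) (γ : W (m + 1) → Fin s) (t : ℕ) : VW m := pick' p hp γ (SS p hp γ t)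

theorem SS_mono_succ (p : Ultrafilter (W m)) (hp : IsCS p) (γ : W (m + 1) → Fin s) (t : ℕ) : ∀ P ∈ SS p hp γ t, P ∈ SS p hp γ (t + 1) := by
  intro P hP
  show P ∈ (chainS p hp γ (t+1)).2
  simp only [chainS, List.mem_append]
  exact Or.inl hP

theorem SS_star_mem (p : Ultrafilter (W m)) (hp : IsCS p) (γ : W (m + 1) → Fin s) (t : ℕ) {P : W (m + 1)} (hP : P ∈ SS p hp γ t) :
    P ++ evalStar (cu p hp γ t) ∈ SS p hp γ (t + 1) := by
  show _ ∈ (chainS p hp γ (t+1)).2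
  simp only [chainS, List.mem_append, List.mem_flatMap]
  exact Or.inr ⟨P, hP, List.mem_cons_self⟩

theorem SS_eval_mem (p : Ultrafilter (W m)) (hp : IsCS p) (γ : W (m + 1) → Fin s) (t : ℕ) {P : W (m + 1)} (hP : P ∈ SS p hp γ t) (b : Fin m) :
    P ++ emb (eval b (cu p hp γ t)) ∈ SS p hp γ (t + 1) := by
  show _ ∈ (chainS p hp γ (t+1)).2
  simp only [chainS, List.mem_append, List.mem_flatMap]
  refine Or.inr ⟨P, hP, ?_⟩
  simp only [List.mem_cons, List.mem_map]
  exact Or.inr ⟨b, List.mem_finRange _, rfl⟩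

theorem QQ_mem (p : Ultrafilter (W m)) (hp : IsCS p) (γ : W (m + 1) → Fin s) (t : ℕ) : QQ p hp γ t ∈ SS p hp γ t := by
  induction t with
  | zero => simp [QQ, SS, chainS]
  | succ t ih =>
      have := SS_star_mem p hp γ t ih
      exact this

theorem QQ_succ (p : Ultrafilter (W m)) (hp : IsCS p) (γ : W (m + 1) → Fin s) (t : ℕ) : QQ p hp γ (t + 1) = QQ p hp γ t ++ evalStar (cu p hp γ t) := rfl

end Existence

section Chain2

variable {m s : ℕ}

/-- Mixed-letter continuation from node `i`. -/
noncomputable def RB (p : Ultrafilter (W m)) (hp : IsCS p) (γ : W (m + 1) → Fin s)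
    (i : ℕ) (b : Fin m) : ℕ → W (m + 1)
  | 0 => QQ p hp γ i
  | d + 1 => RB p hp γ i b d ++ emb (eval b (cu p hp γ (i + d)))

theorem RB_mem (p : Ultrafilter (W m)) (hp : IsCS p) (γ : W (m + 1) → Fin s) (i : ℕ) (b : Fin m) :
    ∀ d, RB p hp γ i b d ∈ SS p hp γ (i + d) := by
  intro d
  induction d with
  | zero => exact QQ_mem p hp γ i
  | succ d ih => exact SS_eval_mem p hp γ (i + d) ih b

theorem RB_chat (p : Ultrafilter (W m)) (hp : IsCS p) (γ : W (m + 1) → Fin s) (i : ℕ) (b : Fin m) :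
    ∀ d, chat p γ emb (RB p hp γ i b d) = chat p γ emb (QQ p hp γ i) := by
  intro d
  induction d with
  | zero => rfl
  | succ d ih =>
      have h1 := ((pick'_spec p hp γ (SS p hp γ (i + d))).2 b) _ (RB_mem p hp γ i b d)
      have h2 : chat p γ emb (RB p hp γ i b d ++ emb (eval b (cu p hp γ (i + d))))
          = chat p γ emb (RB p hp γ i b d) := h1.2
      rw [show RB p hp γ i b (d+1) = RB p hp γ i b d ++ emb (eval b (cu p hp γ (i + d))) from rfl,
        h2, ih]

/-- The middle body of the assembled variable word. -/
noncomputable def MidB (p : Ultrafilter (W m)) (hp : IsCS p) (γ : W (m + 1) → Fin s)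
    (i : ℕ) : ℕ → List (Option (Fin (m + 1)))
  | 0 => mbody (cu p hp γ i)
  | d + 1 => MidB p hp γ i d
      ++ ((emb (cu p hp γ (i + d + 1)).h).map some ++ mbody (cu p hp γ (i + d + 1)))

theorem MidB_shape (p : Ultrafilter (W m)) (hp : IsCS p) (γ : W (m + 1) → Fin s) (i : ℕ) :
    ∀ d, ∃ tl, MidB p hp γ i d = none :: tl := by
  intro d
  induction d with
  | zero =>
      have h := (cu p hp γ i).hb
      rcases hcb : (cu p hp γ i).b with _ | ⟨o, tl⟩
      · rw [hcb] at h; cases h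
      · rw [hcb] at h
        simp only [List.head?] at h
        obtain rfl : o = none := by injection h
        exact ⟨tl.map (Option.map Fin.castSucc), by simp [MidB, mbody, hcb]⟩
  | succ d ih =>
      rcases ih with ⟨tl, htl⟩
      exact ⟨_, by rw [show MidB p hp γ i (d+1) = MidB p hp γ i d ++ _ from rfl, htl]; rfl⟩

theorem MidB_eval_cast (p : Ultrafilter (W m)) (hp : IsCS p) (γ : W (m + 1) → Fin s)
    (i : ℕ) (b : Fin m) : ∀ d,
    (QQ p hp γ i ++ emb (cu p hp γ i).h)
        ++ (MidB p hp γ i d).map (fun o => o.getD (Fin.castSucc b))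
      = RB p hp γ i b (d + 1) := by
  intro d
  induction d with
  | zero =>
      show (QQ p hp γ i ++ emb (cu p hp γ i).h) ++ (mbody (cu p hp γ i)).map _
          = QQ p hp γ i ++ emb (eval b (cu p hp γ i))
      rw [mbody_eval_cast, List.append_assoc, ← emb_append]
      rfl
  | succ d ih =>
      show (QQ p hp γ i ++ emb (cu p hp γ i).h)
          ++ (MidB p hp γ i d ++ ((emb (cu p hp γ (i + d + 1)).h).map some
              ++ mbody (cu p hp γ (i + d + 1)))).map _
        = RB p hp γ i b (d + 1) ++ emb (eval b (cu p hp γ (i + d + 1)))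
      rw [List.map_append, List.map_append, ← List.append_assoc, ih, map_some_eval,
        mbody_eval_cast, ← emb_append]
      rfl

theorem MidB_eval_last (p : Ultrafilter (W m)) (hp : IsCS p) (γ : W (m + 1) → Fin s)
    (i : ℕ) : ∀ d,
    (QQ p hp γ i ++ emb (cu p hp γ i).h)
        ++ (MidB p hp γ i d).map (fun o => o.getD (Fin.last m))
      = QQ p hp γ (i + d + 1) := by
  intro d
  induction d with
  | zero =>
      show (QQ p hp γ i ++ emb (cu p hp γ i).h) ++ (mbody (cu p hp γ i)).map _
          = QQ p hp γ (i + 1)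
      rw [mbody_eval_last, List.append_assoc]
      exact (QQ_succ p hp γ i).symm
  | succ d ih =>
      show (QQ p hp γ i ++ emb (cu p hp γ i).h)
          ++ (MidB p hp γ i d ++ ((emb (cu p hp γ (i + d + 1)).h).map some
              ++ mbody (cu p hp γ (i + d + 1)))).map _
        = QQ p hp γ (i + d + 1 + 1)
      rw [List.map_append, List.map_append, ← List.append_assoc, ih, map_some_eval,
        mbody_eval_last]
      exact (QQ_succ p hp γ (i + d + 1)).symm

/-- The key pigeonhole step: every coloring of words over the extended alphabet admits a
variable word all of whose evaluations, together with its head, are monochromatic. -/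
theorem step_regular (p : Ultrafilter (W m)) (hp : IsCS p) {s : ℕ} (γ : W (m + 1) → Fin s) :
    ∃ u : VW (m + 1), ∀ c, γ (eval c u) = γ u.h := by
  rcases Nat.eq_zero_or_pos s with rfl | hs
  · exact (γ []).elim0
  -- pigeonhole on the stable colors along the chain
  obtain ⟨x, y, hxy, hfxy⟩ := Fintype.exists_ne_map_eq_of_card_lt
    (fun t : Fin (s + 1) => chat p γ emb (QQ p hp γ t)) (by simp)
  have hij : ∃ i j : ℕ, i < j ∧ chat p γ emb (QQ p hp γ i) = chat p γ emb (QQ p hp γ j) := by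
    rcases lt_or_gt_of_ne hxy with h | h
    · exact ⟨x, y, h, hfxy⟩
    · exact ⟨y, x, h, hfxy.symm⟩
  obtain ⟨i, j, hij, hchat⟩ := hij
  obtain ⟨d, rfl⟩ : ∃ d, j = i + d + 1 := ⟨j - i - 1, by omega⟩
  -- the tail normalizer
  have hT : GSet p γ emb (QQ p hp γ (i + d + 1))
      ∩ {w | ∀ b ∈ List.finRange m, w ∈ GSet p γ emb (RB p hp γ i b (d + 1))} ∈ p :=
    inter_mem (GSet_mem p γ emb hp.1 emb_append _)
      (list_inter_mem p _ _ fun b _ => GSet_mem p γ emb hp.1 emb_append _)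
  obtain ⟨hplus, hhp1, hhp2⟩ := p.nonempty_of_mem hT
  -- the assembled variable word
  obtain ⟨tl, htl⟩ := MidB_shape p hp γ i d
  refine ⟨⟨QQ p hp γ i ++ emb (cu p hp γ i).h, MidB p hp γ i d ++ (emb hplus).map some,
    by rw [htl]; rfl⟩, ?_⟩
  have hhead : γ (QQ p hp γ i ++ emb (cu p hp γ i).h) = chat p γ emb (QQ p hp γ i) := by
    have h1 := (pick'_spec p hp γ (SS p hp γ i)).1 _ (QQ_mem p hp γ i)
    exact h1.1
  intro c
  have heval : eval c ⟨QQ p hp γ i ++ emb (cu p hp γ i).h,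
      MidB p hp γ i d ++ (emb hplus).map some, by rw [htl]; rfl⟩
      = ((QQ p hp γ i ++ emb (cu p hp γ i).h)
          ++ (MidB p hp γ i d).map (fun o => o.getD c)) ++ emb hplus := by
    show (QQ p hp γ i ++ emb (cu p hp γ i).h)
        ++ (MidB p hp γ i d ++ (emb hplus).map some).map (fun o => o.getD c) = _
    rw [List.map_append, map_some_eval, ← List.append_assoc]
  rw [heval, hhead]
  show γ _ = chat p γ emb (QQ p hp γ i)
  induction c using Fin.lastCases with
  | last =>
      rw [MidB_eval_last p hp γ i d]
      have := hhp1.1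
      rw [this, ← hchat]
  | cast b =>
      rw [MidB_eval_cast p hp γ i b d]
      have h2 := (hhp2 b (List.mem_finRange b)).1
      rw [h2, RB_chat p hp γ i b (d + 1)]

end Chain2

section Ellis

variable {m : ℕ}

/-- A set of words admitting a variable word witness. -/
def HasWit (B : Set (W (m + 1))) : Prop := ∃ u : VW (m + 1), u.h ∈ B ∧ ∀ a, eval a u ∈ B

theorem avoid_of_not_hasWit (p : Ultrafilter (W m)) (hp : IsCS p) (L : List (Set (W (m + 1))))
    (hL : ∀ X ∈ L, ¬ HasWit X) : ∃ w : W (m + 1), ∀ X ∈ L, w ∉ X := by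
  classical
  obtain ⟨u, hu⟩ := step_regular p hp (fun w =>
    if h : ∃ i : Fin L.length, w ∈ L.get i then (Classical.choose h).castSucc
    else Fin.last L.length)
  by_cases hh : ∃ i : Fin L.length, u.h ∈ L.get i
  · exfalso
    have hγh : (if h : ∃ i : Fin L.length, u.h ∈ L.get i then (Classical.choose h).castSucc
        else Fin.last L.length) = (Classical.choose hh).castSucc := dif_pos hh
    have hmem : ∀ w, (if h : ∃ i : Fin L.length, w ∈ L.get i then (Classical.choose h).castSucc
        else Fin.last L.length) = (Classical.choose hh).castSucc → w ∈ L.get (Classical.choose hh) := by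
      intro w hw
      by_cases h2 : ∃ j : Fin L.length, w ∈ L.get j
      · rw [dif_pos h2] at hw
        have he2 := Fin.castSucc_injective _ hw
        rw [← he2]
        exact Classical.choose_spec h2
      · rw [dif_neg h2] at hw
        exact absurd hw (Fin.castSucc_lt_last _).ne'
    refine hL (L.get (Classical.choose hh)) (List.get_mem L _)
      ⟨u, hmem _ hγh, fun a => hmem _ ?_⟩
    rw [hu a]
    exact hγh
  · refine ⟨u.h, fun X hX hmemX => ?_⟩
    obtain ⟨i, hi⟩ := List.mem_iff_get.mp hX
    exact hh ⟨i, by rw [hi]; exact hmemX⟩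

theorem exists_CS_succ (p : Ultrafilter (W m)) (hp : IsCS p) :
    ∃ q : Ultrafilter (W (m + 1)), IsCS q := by
  classical
  let H : Set (Ultrafilter (W (m + 1))) := {q | ∀ B ∈ q, HasWit B}
  have hne : H.Nonempty := by
    set gen : Set (Set (W (m + 1))) := {Y | ∃ X, ¬ HasWit X ∧ Y = Xᶜ} with hgen
    have hproper : Filter.NeBot (Filter.generate gen) := by
      rw [Filter.generate_neBot_iff]
      intro t hsub hfin
      have hL : ∀ X ∈ hfin.toFinset.toList.map compl, ¬ HasWit X := by
        intro X hX
        simp only [List.mem_map, Finset.mem_toList, Set.Finite.mem_toFinset] at hX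
        rcases hX with ⟨Y, hY, rfl⟩
        obtain ⟨X₀, hX₀, rfl⟩ := hsub hY
        rwa [compl_compl]
      obtain ⟨w, hw⟩ := avoid_of_not_hasWit p hp _ hL
      refine ⟨w, Set.mem_sInter.mpr fun Y hY => ?_⟩
      obtain ⟨X₀, hX₀, rfl⟩ := hsub hY
      exact hw X₀ (by
        simp only [List.mem_map, Finset.mem_toList, Set.Finite.mem_toFinset]
        exact ⟨X₀ᶜ, hY, compl_compl X₀⟩)
    obtain ⟨q, hq⟩ := Ultrafilter.exists_le (f := Filter.generate gen)
    refine ⟨q, fun B hB => ?_⟩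
    by_contra hB2
    have h3 : Bᶜ ∈ Filter.generate gen := Filter.mem_generate_of_mem ⟨B, hB2, rfl⟩
    exact (Ultrafilter.compl_notMem_iff.mpr hB) (hq h3)
  have hclosed : IsClosed H := by
    have hH : H = ⋂ X ∈ {X : Set (W (m + 1)) | ¬ HasWit X}, {q : Ultrafilter (W (m + 1)) | Xᶜ ∈ q} := by
      ext q
      simp only [Set.mem_iInter, Set.mem_setOf_eq]
      constructor
      · intro hq X hX
        rcases Ultrafilter.mem_or_compl_mem q X with h | h
        · exact absurd (hq X h) hX
        · exact h
      · intro hq B hB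
        by_contra hB2
        exact (Ultrafilter.compl_notMem_iff.mpr hB) (hq B hB2)
    rw [hH]
    exact isClosed_biInter fun X _ => ultrafilter_isClosed_basic _
  have hmul : ∀ q₁ ∈ H, ∀ q₂ ∈ H, q₁ * q₂ ∈ H := by
    intro q₁ _ q₂ hq₂ B hB
    have hC : {w | {w' | w ++ w' ∈ B} ∈ q₂} ∈ q₁ := hB
    obtain ⟨w₀, hw₀⟩ := q₁.nonempty_of_mem hC
    obtain ⟨u₂, hu₂h, hu₂e⟩ := hq₂ _ hw₀
    refine ⟨⟨w₀ ++ u₂.h, u₂.b, u₂.hb⟩, hu₂h, fun a => ?_⟩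
    show (w₀ ++ u₂.h) ++ u₂.b.map (fun o => o.getD a) ∈ B
    rw [List.append_assoc]
    exact hu₂e a
  obtain ⟨q, hqH, hidem⟩ := exists_idempotent_in_compact_subsemigroup
    Ultrafilter.continuous_mul_left H hne hclosed.isCompact hmul
  exact ⟨q, hidem, hqH⟩

theorem exists_CS : ∀ m : ℕ, ∃ p : Ultrafilter (W m), IsCS p := by
  intro m
  induction m with
  | zero => exact ⟨_, isCS_zero⟩
  | succ m ih =>
      obtain ⟨p, hp⟩ := ih
      exact exists_CS_succ p hp

end Ellis

section Transfer

/-- Fixed points of a partition function, i.e. block minima. -/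
def fixP (g : ℕ → ℕ) : ℕ → Prop := fun x => g x = x

instance fixP_dec (g : ℕ → ℕ) : DecidablePred (fixP g) := fun x => Nat.decEq (g x) x

theorem fix_infinite {g : ℕ → ℕ} (hg : IsInfPart g) : (setOf (fixP g)).Infinite := by
  apply Set.Infinite.mono _ hg.2.2
  rintro y ⟨x, rfl⟩
  exact hg.2.1 x

/-- Block-minima enumeration. -/
noncomputable def MM (g : ℕ → ℕ) : ℕ → ℕ := Nat.nth (fixP g)

/-- Index of a block minimum. -/
def cnt (g : ℕ → ℕ) : ℕ → ℕ := Nat.count (fixP g)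

theorem MM_strictMono {g : ℕ → ℕ} (hg : IsInfPart g) : StrictMono (MM g) :=
  Nat.nth_strictMono (fix_infinite hg)

theorem MM_fix {g : ℕ → ℕ} (hg : IsInfPart g) (i : ℕ) : g (MM g i) = MM g i :=
  Nat.nth_mem_of_infinite (fix_infinite hg) i

theorem cnt_MM {g : ℕ → ℕ} (hg : IsInfPart g) (i : ℕ) : cnt g (MM g i) = i :=
  Nat.count_nth_of_infinite (fix_infinite hg) i

theorem MM_cnt {g : ℕ → ℕ} {x : ℕ} (hx : g x = x) : MM g (cnt g x) = x :=
  Nat.nth_count hx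

theorem fix_apply {g : ℕ → ℕ} (hg : IsInfPart g) (x : ℕ) : g (g x) = g x := hg.2.1 x

theorem cnt_lt_of_lt_MM {g : ℕ → ℕ} (hg : IsInfPart g) {x j : ℕ} (hx : g x = x)
    (h : x < MM g j) : cnt g x < j := by
  have := MM_cnt (g := g) hx
  by_contra hc
  push_neg at hc
  have h2 := (MM_strictMono hg).monotone hc
  rw [this] at h2
  omega

/-- Composition of an index partition `φ` with a base partition `X`. -/
noncomputable def act (X φ : ℕ → ℕ) : ℕ → ℕ :=
  fun x => MM X (φ (cnt X (X x)))

theorem act_isInfPart {X φ : ℕ → ℕ} (hX : IsInfPart X) (hφ : IsInfPart φ) :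
    IsInfPart (act X φ) := by
  have hle : ∀ x, act X φ x ≤ x := by
    intro x
    calc act X φ x = MM X (φ (cnt X (X x))) := rfl
      _ ≤ MM X (cnt X (X x)) := (MM_strictMono hX).monotone (hφ.1 _)
      _ = X x := MM_cnt (fix_apply hX x)
      _ ≤ x := hX.1 x
  have hXfix : ∀ x, X (act X φ x) = act X φ x := fun x => MM_fix hX _
  have hcnt : ∀ x, cnt X (act X φ x) = φ (cnt X (X x)) := fun x => cnt_MM hX _
  refine ⟨hle, fun x => ?_, ?_⟩
  · show MM X (φ (cnt X (X (act X φ x)))) = act X φ x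
    rw [hXfix x, hcnt x, hφ.2.1]
    rfl
  · have himg : MM X '' (Set.range φ) ⊆ Set.range (act X φ) := by
      rintro y ⟨i, ⟨j, rfl⟩, rfl⟩
      refine ⟨MM X j, ?_⟩
      show MM X (φ (cnt X (X (MM X j)))) = MM X (φ j)
      rw [MM_fix hX, cnt_MM hX]
    exact Set.Infinite.mono himg (Set.Infinite.image
      ((MM_strictMono hX).injective.injOn) hφ.2.2)

theorem act_coarser {X φ : ℕ → ℕ} : Coarser (act X φ) X := by
  intro a b hab
  show MM X (φ (cnt X (X a))) = MM X (φ (cnt X (X b)))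
  rw [hab]

theorem fix_of_coarser {Z X : ℕ → ℕ} (hZX : Coarser Z X) (hX : IsInfPart X)
    (hZ : IsInfPart Z) {x : ℕ} (hx : Z x = x) : X x = x := by
  have h1 : Z (X x) = Z x := hZX (X x) x (fix_apply hX x)
  have h2 : Z (X x) ≤ X x := hZ.1 _
  have := hX.1 x
  omega

/-- The index partition of a coarsening. -/
noncomputable def phiOf (X Z : ℕ → ℕ) : ℕ → ℕ := fun i => cnt X (Z (MM X i))

theorem phiOf_isInfPart {X Z : ℕ → ℕ} (hX : IsInfPart X) (hZ : IsInfPart Z)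
    (hZX : Coarser Z X) : IsInfPart (phiOf X Z) := by
  have hfix : ∀ y, Z y = y → X y = y := fun y hy => fix_of_coarser hZX hX hZ hy
  have hZfix : ∀ i, X (Z (MM X i)) = Z (MM X i) := fun i => hfix _ (fix_apply hZ _)
  refine ⟨fun i => ?_, fun i => ?_, ?_⟩
  · calc phiOf X Z i = cnt X (Z (MM X i)) := rfl
      _ ≤ cnt X (MM X i) := Nat.count_monotone _ (hZ.1 _)
      _ = i := cnt_MM hX i
  · show cnt X (Z (MM X (cnt X (Z (MM X i))))) = cnt X (Z (MM X i))
    rw [MM_cnt (hZfix i), fix_apply hZ]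
  · have himg : cnt X '' {y | Z y = y} ⊆ Set.range (phiOf X Z) := by
      rintro j ⟨y, hy, rfl⟩
      refine ⟨cnt X y, ?_⟩
      show cnt X (Z (MM X (cnt X y))) = cnt X y
      rw [MM_cnt (hfix y hy), hy]
    refine Set.Infinite.mono himg (Set.Infinite.image ?_ (fix_infinite hZ))
    intro a ha b hb hab
    have : MM X (cnt X a) = MM X (cnt X b) := by rw [hab]
    rwa [MM_cnt (hfix a ha), MM_cnt (hfix b hb)] at this

theorem act_phiOf {X Z : ℕ → ℕ} (hX : IsInfPart X) (hZ : IsInfPart Z)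
    (hZX : Coarser Z X) : act X (phiOf X Z) = Z := by
  funext x
  have hfix : ∀ y, Z y = y → X y = y := fun y hy => fix_of_coarser hZX hX hZ hy
  show MM X (cnt X (Z (MM X (cnt X (X x))))) = Z x
  rw [MM_cnt (fix_apply hX x), MM_cnt (hfix _ (fix_apply hZ (X x)))]
  exact hZX (X x) x (fix_apply hX x)

/-- Fixed points of `act X φ` are the `MM X`-images of fixed points of `φ`. -/
theorem act_fix_iff {X φ : ℕ → ℕ} (hX : IsInfPart X) (hφ : IsInfPart φ) (y : ℕ) :
    act X φ y = y ↔ ∃ i, φ i = i ∧ y = MM X i := by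
  constructor
  · intro hy
    have hXfix : X y = y := by
      have h1 : X (act X φ y) = act X φ y := MM_fix hX _
      rwa [hy] at h1
    refine ⟨cnt X y, ?_, (MM_cnt hXfix).symm⟩
    have h2 : MM X (φ (cnt X y)) = MM X (cnt X y) := by
      have : act X φ y = y := hy
      unfold act at this
      rw [hXfix] at this
      rw [this, MM_cnt hXfix]
    exact (MM_strictMono hX).injective h2
  · rintro ⟨i, hi, rfl⟩
    show MM X (φ (cnt X (X (MM X i)))) = MM X i
    rw [MM_fix hX, cnt_MM hX, hi]

theorem act_nth_fix {X φ : ℕ → ℕ} (hX : IsInfPart X) (hφ : IsInfPart φ) (j : ℕ) :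
    Nat.nth (fixP (act X φ)) j = MM X (Nat.nth (fixP φ) j) := by
  have hinf : (setOf (fixP (act X φ))).Infinite := fix_infinite (act_isInfPart hX hφ)
  set T := Nat.nth (fixP φ) j with hT
  have hTfix : φ T = T := Nat.nth_mem_of_infinite (fix_infinite hφ) j
  have hfixact : fixP (act X φ) (MM X T) := (act_fix_iff hX hφ _).mpr ⟨T, hTfix, rfl⟩
  have hcount : Nat.count (fixP (act X φ)) (MM X T) = j := by
    rw [Nat.count_eq_card_filter_range, ← Nat.count_nth_of_infinite (fix_infinite hφ) j,
      Nat.count_eq_card_filter_range]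
    apply Finset.card_bij' (fun y _ => cnt X y) (fun i _ => MM X i)
    · intro y hy
      simp only [Finset.mem_filter, Finset.mem_range] at hy ⊢
      obtain ⟨i, hi, rfl⟩ := (act_fix_iff hX hφ _).mp hy.2
      rw [cnt_MM hX]
      exact ⟨(MM_strictMono hX).lt_iff_lt.mp hy.1, hi⟩
    · intro i hi
      simp only [Finset.mem_filter, Finset.mem_range] at hi ⊢
      exact ⟨(MM_strictMono hX) hi.1, (act_fix_iff hX hφ _).mpr ⟨i, hi.2, rfl⟩⟩
    · intro y hy
      simp only [Finset.mem_filter, Finset.mem_range] at hy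
      obtain ⟨i, _, rfl⟩ := (act_fix_iff hX hφ _).mp hy.2
      rw [cnt_MM hX]
    · intro i hi
      exact cnt_MM hX i
  rw [← hcount]
  exact Nat.nth_count hfixact

/-- Transfer of a finite partition along a base partition. -/
noncomputable def trn (X : ℕ → ℕ) (q : ℕ × (ℕ → ℕ)) : ℕ × (ℕ → ℕ) :=
  (MM X q.1, fun x => if x < MM X q.1 then MM X (q.2 (cnt X (X x))) else 0)

theorem rPart_act {X φ : ℕ → ℕ} (hX : IsInfPart X) (hφ : IsInfPart φ) (j : ℕ) :
    rPart j (act X φ) = trn X (rPart j φ) := by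
  unfold rPart trn
  have h1 : Nat.nth (fun x => act X φ x = x) j = MM X (Nat.nth (fun x => φ x = x) j) :=
    act_nth_fix hX hφ j
  set T := Nat.nth (fun x => φ x = x) j with hT
  refine Prod.ext h1 ?_
  funext x
  simp only [h1]
  by_cases hx : x < MM X T
  · rw [if_pos hx, if_pos hx]
    have hXx : X x ≤ x := hX.1 x
    have hXfix : X (X x) = X x := fix_apply hX x
    have hlt : cnt X (X x) < T := cnt_lt_of_lt_MM hX hXfix (by omega)
    show MM X (φ (cnt X (X x))) = MM X (if cnt X (X x) < T then φ (cnt X (X x)) else 0)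
    rw [if_pos hlt]
  · rw [if_neg hx, if_neg hx]

end Transfer



section FusionDefs

variable {κ : ℕ}

/-- Head length. -/
def hlen (v : VW κ) : ℕ := v.h.length

/-- Total length of a variable word. -/
def len (v : VW κ) : ℕ := v.h.length + v.b.length

theorem b_ne_nil (v : VW κ) : v.b ≠ [] := by
  intro h
  have := v.hb
  rw [h] at this
  cases this

theorem len_pos (v : VW κ) : 0 < len v := by
  have := b_ne_nil v
  have : v.b.length ≠ 0 := fun h => this (List.length_eq_zero_iff.mp h)
  unfold len
  omega

/-- The pattern of a variable word: head letters as `some`, then the body. -/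
def patL (v : VW κ) : List (Option (Fin κ)) := v.h.map some ++ v.b

theorem patL_length (v : VW κ) : (patL v).length = len v := by
  unfold patL len
  rw [List.length_append, List.length_map]

/-- Chunk offsets of a sequence of variable words. -/
def ofs (u : ℕ → VW κ) : ℕ → ℕ
  | 0 => 0
  | j + 1 => ofs u j + len (u j)

theorem ofs_lt_succ (u : ℕ → VW κ) (j : ℕ) : ofs u j < ofs u (j + 1) := by
  have := len_pos (u j)
  show ofs u j < ofs u j + len (u j)
  omega

theorem ofs_mono (u : ℕ → VW κ) {i j : ℕ} (h : i ≤ j) : ofs u i ≤ ofs u j := by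
  induction h with
  | refl => exact le_rfl
  | step _ ih => exact ih.trans (ofs_lt_succ u _).le

theorem lt_ofs_succ_self (u : ℕ → VW κ) (t : ℕ) : t < ofs u (t + 1) := by
  induction t with
  | zero => exact ofs_lt_succ u 0
  | succ t ih => exact Nat.lt_of_lt_of_le (Nat.succ_lt_succ ih) (ofs_lt_succ u (t+1))

/-- The index of the word containing global position `t`. -/
noncomputable def wIdx (u : ℕ → VW κ) (t : ℕ) : ℕ :=
  Nat.find (⟨t, lt_ofs_succ_self u t⟩ : ∃ j, t < ofs u (j + 1))

theorem wIdx_lt (u : ℕ → VW κ) (t : ℕ) : t < ofs u (wIdx u t + 1) :=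
  Nat.find_spec (⟨t, lt_ofs_succ_self u t⟩ : ∃ j, t < ofs u (j + 1))

theorem wIdx_le (u : ℕ → VW κ) (t : ℕ) : ofs u (wIdx u t) ≤ t := by
  rcases h : wIdx u t with _ | j
  · exact Nat.zero_le t
  · have := Nat.find_min (⟨t, lt_ofs_succ_self u t⟩ : ∃ j, t < ofs u (j + 1))
      (show j < wIdx u t by omega)
    push_neg at this
    exact this

theorem wIdx_eq (u : ℕ → VW κ) {t j : ℕ} (h1 : ofs u j ≤ t) (h2 : t < ofs u (j + 1)) :
    wIdx u t = j := by
  rw [wIdx, Nat.find_eq_iff]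
  refine ⟨h2, fun m hm => ?_⟩
  push_neg
  exact le_trans (ofs_mono u (by omega)) h1

/-- The pattern entry at global position `t`. -/
noncomputable def entry (u : ℕ → VW κ) (t : ℕ) : Option (Fin κ) :=
  (patL (u (wIdx u t))).getD (t - ofs u (wIdx u t)) none

theorem entry_eq (u : ℕ → VW κ) {j r : ℕ} (hr : r < len (u j)) :
    entry u (ofs u j + r) = (patL (u j)).getD r none := by
  have h1 : ofs u j ≤ ofs u j + r := Nat.le_add_right _ _
  have h2 : ofs u j + r < ofs u (j + 1) := by
    show ofs u j + r < ofs u j + len (u j)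
    omega
  rw [entry, wIdx_eq u h1 h2]
  congr 1
  omega

theorem wIdx_eq' (u : ℕ → VW κ) {j r : ℕ} (hr : r < len (u j)) :
    wIdx u (ofs u j + r) = j :=
  wIdx_eq u (Nat.le_add_right _ _) (by show ofs u j + r < ofs u j + len (u j); omega)

theorem eval_length (a : Fin κ) (v : VW κ) : (eval a v).length = len v := by
  unfold eval len
  rw [List.length_append, List.length_map]

theorem span_length (u : ℕ → VW κ) (b : ℕ → Fin κ) (J : ℕ) :
    (span u b J).length = ofs u J := by
  induction J with
  | zero => rfl
  | succ J ih =>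
      show (span u b J ++ eval (b J) (u J)).length = ofs u J + len (u J)
      rw [List.length_append, ih, eval_length]

theorem eval_getD (a : Fin κ) (v : VW κ) {r : ℕ} (hr : r < len v) (d : Fin κ) :
    (eval a v).getD r d = ((patL v).getD r none).getD a := by
  unfold eval patL
  rcases Nat.lt_or_ge r v.h.length with h | h
  · rw [List.getD_append _ _ _ _ (by omega), List.getD_append _ _ _ _ (by
      rw [List.length_map]; omega)]
    rw [List.getD_eq_getElem?_getD, List.getD_eq_getElem?_getD, List.getElem?_map]
    rcases List.getElem?_eq_getElem (l := v.h) (i := r) h with he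
    rw [he]
    rfl
  · rw [List.getD_append_right _ _ _ _ h, List.getD_append_right _ _ _ _ (by
      rw [List.length_map]; omega), List.length_map]
    rw [List.getD_eq_getElem?_getD, List.getD_eq_getElem?_getD]
    have hrb : r - v.h.length < v.b.length := by unfold len at hr; omega
    rw [List.getElem?_map, List.getElem?_eq_getElem (l := v.b) hrb]
    rfl

theorem span_getD (u : ℕ → VW κ) (b : ℕ → Fin κ) {J j t : ℕ} (hj : j < J)
    (h1 : ofs u j ≤ t) (h2 : t < ofs u (j + 1)) (d : Fin κ) :
    (span u b J).getD t d = (eval (b j) (u j)).getD (t - ofs u j) d := by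
  induction J with
  | zero => omega
  | succ J ih =>
      show (span u b J ++ eval (b J) (u J)).getD t d = _
      rcases Nat.lt_or_ge j J with hjJ | hjJ
      · rw [List.getD_append _ _ _ _ (by
          rw [span_length]
          exact lt_of_lt_of_le h2 (ofs_mono u hjJ))]
        exact ih hjJ
      · have hjJ' : j = J := by omega
        subst hjJ'
        rw [List.getD_append_right _ _ _ _ (by rw [span_length]; exact h1), span_length]

end FusionDefs

section Machine

variable {k s : ℕ}

/-- The fusion state: `nCom` committed blocks and the assignment of each position to a
committed block (`inl`) or a reservoir atom (`inr`). -/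
structure St (k : ℕ) where
  nCom : ℕ
  part : ℕ → ℕ ⊕ ℕ

noncomputable def bmin (S : St k) (i : ℕ) : ℕ := sInf {x | S.part x = Sum.inl i}

noncomputable def amin (S : St k) (j : ℕ) : ℕ := sInf {x | S.part x = Sum.inr j}

structure Inv (S : St k) : Prop where
  hlt : ∀ x i, S.part x = Sum.inl i → i < S.nCom
  bne : ∀ i, i < S.nCom → ∃ x, S.part x = Sum.inl i
  ane : ∀ j, ∃ x, S.part x = Sum.inr j
  bmono : ∀ i i', i < i' → i' < S.nCom → bmin S i < bmin S i'
  amono : ∀ j j', j < j' → amin S j < amin S j'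
  bamin : ∀ i, i < S.nCom → ∀ j, bmin S i < amin S j

theorem amin_mem {S : St k} (h : Inv S) (j : ℕ) : S.part (amin S j) = Sum.inr j :=
  Nat.sInf_mem (h.ane j)

theorem amin_le {S : St k} {x j : ℕ} (hx : S.part x = Sum.inr j) : amin S j ≤ x :=
  Nat.sInf_le hx

theorem bmin_mem {S : St k} (h : Inv S) {i : ℕ} (hi : i < S.nCom) :
    S.part (bmin S i) = Sum.inl i :=
  Nat.sInf_mem (h.bne i hi)

theorem bmin_le {S : St k} {x i : ℕ} (hx : S.part x = Sum.inl i) : bmin S i ≤ x :=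
  Nat.sInf_le hx

theorem amin_mono {S : St k} (h : Inv S) {j j' : ℕ} (hj : j ≤ j') :
    amin S j ≤ amin S j' := by
  rcases Nat.lt_or_ge j j' with h' | h'
  · exact (h.amono j j' h').le
  · have : j = j' := by omega
    rw [this]

/-- Positions below the `J`-th atom minimum are committed or in earlier atoms. -/
theorem pos_classify {S : St k} (h : Inv S) {x J : ℕ} (hx : x < amin S J) :
    (∃ i, S.part x = Sum.inl i ∧ i < S.nCom) ∨ (∃ t, S.part x = Sum.inr t ∧ t < J) := by
  rcases hpart : S.part x with i | t
  · exact Or.inl ⟨i, rfl, h.hlt x i hpart⟩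
  · refine Or.inr ⟨t, rfl, ?_⟩
    by_contra hc
    push_neg at hc
    have h1 : amin S J ≤ amin S t := amin_mono h hc
    have h2 : amin S t ≤ x := amin_le hpart
    omega

/-! #### Updates -/

noncomputable def callUpd (S : St k) (u : ℕ → VW (k + 1)) (τ : Fin (k + 1) → ℕ) : St k where
  nCom := S.nCom
  part := fun x => match S.part x with
    | Sum.inl i => Sum.inl i
    | Sum.inr t => match entry u t with
      | some a => Sum.inl (τ a)
      | none => Sum.inr (wIdx u t)

def commitUpd (S : St k) : St k where
  nCom := S.nCom + 1
  part := fun x => match S.part x with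
    | Sum.inl i => Sum.inl i
    | Sum.inr 0 => Sum.inl S.nCom
    | Sum.inr (j + 1) => Sum.inr j

theorem callUpd_inl {S : St k} {u τ x i} (hx : S.part x = Sum.inl i) :
    (callUpd S u τ).part x = Sum.inl i := by
  show (match S.part x with
    | Sum.inl i => Sum.inl i
    | Sum.inr t => match entry u t with
      | some a => Sum.inl (τ a)
      | none => Sum.inr (wIdx u t)) = Sum.inl i
  rw [hx]

theorem callUpd_some {S : St k} {u τ x t a} (hx : S.part x = Sum.inr t)
    (he : entry u t = some a) : (callUpd S u τ).part x = Sum.inl (τ a) := by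
  show (match S.part x with
    | Sum.inl i => Sum.inl i
    | Sum.inr t => match entry u t with
      | some a => Sum.inl (τ a)
      | none => Sum.inr (wIdx u t)) = _
  rw [hx]
  show (match entry u t with
    | some a => Sum.inl (τ a)
    | none => Sum.inr (wIdx u t)) = _
  rw [he]

theorem callUpd_none {S : St k} {u τ x t} (hx : S.part x = Sum.inr t)
    (he : entry u t = none) : (callUpd S u τ).part x = Sum.inr (wIdx u t) := by
  show (match S.part x with
    | Sum.inl i => Sum.inl i
    | Sum.inr t => match entry u t with
      | some a => Sum.inl (τ a)
      | none => Sum.inr (wIdx u t)) = _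
  rw [hx]
  show (match entry u t with
    | some a => Sum.inl (τ a)
    | none => Sum.inr (wIdx u t)) = _
  rw [he]

theorem commitUpd_inl {S : St k} {x i : ℕ} (hx : S.part x = Sum.inl i) :
    (commitUpd S).part x = Sum.inl i := by
  show (match S.part x with
    | Sum.inl i => Sum.inl i
    | Sum.inr 0 => Sum.inl S.nCom
    | Sum.inr (j + 1) => Sum.inr j) = _
  rw [hx]

theorem commitUpd_zero {S : St k} {x : ℕ} (hx : S.part x = Sum.inr 0) :
    (commitUpd S).part x = Sum.inl S.nCom := by
  show (match S.part x with
    | Sum.inl i => Sum.inl i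
    | Sum.inr 0 => Sum.inl S.nCom
    | Sum.inr (j + 1) => Sum.inr j) = _
  rw [hx]

theorem commitUpd_succ {S : St k} {x j : ℕ} (hx : S.part x = Sum.inr (j + 1)) :
    (commitUpd S).part x = Sum.inr j := by
  show (match S.part x with
    | Sum.inl i => Sum.inl i
    | Sum.inr 0 => Sum.inl S.nCom
    | Sum.inr (j + 1) => Sum.inr j) = _
  rw [hx]

/-- The first variable position of chunk `j`. -/
def nofs (u : ℕ → VW (k + 1)) (j : ℕ) : ℕ := ofs u j + hlen (u j)

theorem hlen_lt_len (v : VW (k + 1)) : hlen v < len v := by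
  have := b_ne_nil v
  have : v.b.length ≠ 0 := fun h => this (List.length_eq_zero_iff.mp h)
  unfold hlen len
  omega

theorem entry_nofs (u : ℕ → VW (k + 1)) (j : ℕ) : entry u (nofs u j) = none := by
  rw [show nofs u j = ofs u j + hlen (u j) from rfl, entry_eq u (hlen_lt_len (u j))]
  unfold patL
  rw [List.getD_append_right _ _ _ _ (by rw [List.length_map]; exact le_rfl)]
  rw [List.length_map]
  show (u j).b.getD (hlen (u j) - hlen (u j)) none = none
  rw [Nat.sub_self]
  have hb := (u j).hb
  rcases hbb : (u j).b with _ | ⟨o, tl⟩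
  · rw [hbb] at hb; cases hb
  · rw [hbb] at hb
    simp only [List.head?] at hb
    have : o = none := by injection hb
    rw [this]
    rfl

theorem wIdx_nofs (u : ℕ → VW (k + 1)) (j : ℕ) : wIdx u (nofs u j) = j :=
  wIdx_eq' u (hlen_lt_len (u j))

theorem entry_head {u : ℕ → VW (k + 1)} {j r : ℕ} (hr : r < hlen (u j)) :
    entry u (ofs u j + r) = some ((u j).h.getD r ⟨0, Nat.succ_pos k⟩) := by
  rw [entry_eq u (lt_of_lt_of_le hr (hlen_lt_len (u j)).le)]
  unfold patL
  rw [List.getD_append _ _ _ _ (by rw [List.length_map]; exact hr)]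
  rw [List.getD_eq_getElem?_getD, List.getElem?_map, List.getD_eq_getElem?_getD,
    List.getElem?_eq_getElem (l := (u j).h) hr]
  rfl

/-- Entries below `nofs u j` within chunk `j` are heads, i.e. `some`. -/
theorem entry_of_lt_nofs {u : ℕ → VW (k + 1)} {t j : ℕ} (hj : wIdx u t = j)
    (ht : t < nofs u j) : ∃ a, entry u t = some a := by
  have h1 : ofs u j ≤ t := hj ▸ wIdx_le u t
  have hr : t - ofs u j < hlen (u j) := by unfold nofs at ht; omega
  refine ⟨(u j).h.getD (t - ofs u j) ⟨0, Nat.succ_pos k⟩, ?_⟩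
  have := entry_head (u := u) (j := j) hr
  rw [show ofs u j + (t - ofs u j) = t by omega] at this
  exact this

/-- The atom minimum of the `j`-th new atom after a call update. -/
theorem amin_callUpd {S : St k} (hS : Inv S) (u : ℕ → VW (k + 1)) (τ : Fin (k + 1) → ℕ)
    (j : ℕ) : amin (callUpd S u τ) j = amin S (nofs u j) := by
  apply le_antisymm
  · apply Nat.sInf_le
    show (callUpd S u τ).part (amin S (nofs u j)) = Sum.inr j
    rw [callUpd_none (amin_mem hS (nofs u j)) (entry_nofs u j), wIdx_nofs]
  · apply le_csInf
    · exact ⟨amin S (nofs u j), by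
        rw [Set.mem_setOf_eq,
          callUpd_none (amin_mem hS (nofs u j)) (entry_nofs u j), wIdx_nofs]⟩
    · intro x hx
      rw [Set.mem_setOf_eq] at hx
      rcases hpart : S.part x with i | t
      · rw [callUpd_inl hpart] at hx; cases hx
      · rcases hent : entry u t with _ | a
        · rw [callUpd_none hpart hent] at hx
          have hw : wIdx u t = j := by injection hx
          have ht : nofs u j ≤ t := by
            by_contra hc
            push_neg at hc
            obtain ⟨a, ha⟩ := entry_of_lt_nofs hw hc
            rw [ha] at hent; cases hent
          calc amin S (nofs u j) ≤ amin S t := amin_mono hS ht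
            _ ≤ x := amin_le hpart
        · rw [callUpd_some hpart hent] at hx; cases hx

theorem bmin_callUpd {S : St k} (hS : Inv S) {u : ℕ → VW (k + 1)} {τ : Fin (k + 1) → ℕ}
    {i : ℕ} (hi : i < S.nCom) : bmin (callUpd S u τ) i = bmin S i := by
  apply le_antisymm
  · exact Nat.sInf_le (callUpd_inl (bmin_mem hS hi))
  · apply le_csInf ⟨bmin S i, callUpd_inl (bmin_mem hS hi)⟩
    intro x hx
    rw [Set.mem_setOf_eq] at hx
    rcases hpart : S.part x with i' | t
    · rw [callUpd_inl hpart] at hx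
      have : i' = i := by injection hx
      exact this ▸ bmin_le hpart
    · rcases hent : entry u t with _ | a
      · rw [callUpd_none hpart hent] at hx; cases hx
      · have h1 : bmin S i < amin S t := hS.bamin i hi t
        have h2 : amin S t ≤ x := amin_le hpart
        omega

theorem amin_commitUpd (S : St k) (j : ℕ) : amin (commitUpd S) j = amin S (j + 1) := by
  unfold amin
  congr 1
  ext x
  constructor
  · intro hx
    rcases hpart : S.part x with i | t
    · rw [Set.mem_setOf_eq, commitUpd_inl hpart] at hx; cases hx
    · rcases t with _ | t
      · rw [Set.mem_setOf_eq, commitUpd_zero hpart] at hx; cases hx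
      · rw [Set.mem_setOf_eq, commitUpd_succ hpart] at hx
        have : t = j := by injection hx
        rw [Set.mem_setOf_eq, hpart, this]
  · intro hx
    rw [Set.mem_setOf_eq] at hx ⊢
    exact commitUpd_succ hx

theorem bmin_commitUpd_lt {S : St k} (hS : Inv S) {i : ℕ} (hi : i < S.nCom) :
    bmin (commitUpd S) i = bmin S i := by
  unfold bmin
  congr 1
  ext x
  constructor
  · intro hx
    rcases hpart : S.part x with i' | t
    · rw [Set.mem_setOf_eq, commitUpd_inl hpart] at hx
      have : i' = i := by injection hx
      rw [Set.mem_setOf_eq, hpart, this]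
    · rcases t with _ | t
      · rw [Set.mem_setOf_eq, commitUpd_zero hpart] at hx
        have : S.nCom = i := by injection hx
        omega
      · rw [Set.mem_setOf_eq, commitUpd_succ hpart] at hx; cases hx
  · intro hx
    rw [Set.mem_setOf_eq] at hx ⊢
    exact commitUpd_inl hx

theorem bmin_commitUpd_new {S : St k} (hS : Inv S) :
    bmin (commitUpd S) S.nCom = amin S 0 := by
  unfold bmin amin
  congr 1
  ext x
  constructor
  · intro hx
    rcases hpart : S.part x with i' | t
    · rw [Set.mem_setOf_eq, commitUpd_inl hpart] at hx
      have h1 : i' = S.nCom := by injection hx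
      have := hS.hlt x i' hpart
      omega
    · rcases t with _ | t
      · rw [Set.mem_setOf_eq, hpart]
      · rw [Set.mem_setOf_eq, commitUpd_succ hpart] at hx; cases hx
  · intro hx
    rw [Set.mem_setOf_eq] at hx ⊢
    exact commitUpd_zero hx

theorem commitUpd_inv {S : St k} (hS : Inv S) : Inv (commitUpd S) := by
  constructor
  · intro x i hx
    show i < S.nCom + 1
    rcases hpart : S.part x with i' | t
    · rw [commitUpd_inl hpart] at hx
      have : i' = i := by injection hx
      have := hS.hlt x i' hpart
      omega
    · rcases t with _ | t
      · rw [commitUpd_zero hpart] at hx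
        have : S.nCom = i := by injection hx
        omega
      · rw [commitUpd_succ hpart] at hx
        cases hx
  · intro i hi
    rcases Nat.lt_or_ge i S.nCom with h | h
    · obtain ⟨x, hx⟩ := hS.bne i h
      exact ⟨x, commitUpd_inl hx⟩
    · have : i = S.nCom := by
        have : i < S.nCom + 1 := hi
        omega
      subst this
      obtain ⟨x, hx⟩ := hS.ane 0
      exact ⟨x, commitUpd_zero hx⟩
  · intro j
    obtain ⟨x, hx⟩ := hS.ane (j + 1)
    exact ⟨x, commitUpd_succ hx⟩
  · intro i i' hii' hi'
    have hn : (commitUpd S).nCom = S.nCom + 1 := rfl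
    rw [hn] at hi'
    rcases Nat.lt_or_ge i' S.nCom with h | h
    · rw [bmin_commitUpd_lt hS (by omega), bmin_commitUpd_lt hS h]
      exact hS.bmono i i' hii' h
    · have : i' = S.nCom := by omega
      subst this
      rw [bmin_commitUpd_lt hS (by omega), bmin_commitUpd_new hS]
      exact hS.bamin i (by omega) 0
  · intro j j' hjj'
    rw [amin_commitUpd, amin_commitUpd]
    exact hS.amono _ _ (by omega)
  · intro i hi j
    have hn : (commitUpd S).nCom = S.nCom + 1 := rfl
    rw [hn] at hi
    rw [amin_commitUpd]
    rcases Nat.lt_or_ge i S.nCom with h | h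
    · rw [bmin_commitUpd_lt hS h]
      exact hS.bamin i h _
    · have : i = S.nCom := by omega
      subst this
      rw [bmin_commitUpd_new hS]
      exact hS.amono 0 (j + 1) (by omega)

theorem callUpd_inv {S : St k} (hS : Inv S) (u : ℕ → VW (k + 1)) {τ : Fin (k + 1) → ℕ}
    (hτ : ∀ a, τ a < S.nCom) : Inv (callUpd S u τ) := by
  constructor
  · intro x i hx
    show i < S.nCom
    rcases hpart : S.part x with i' | t
    · rw [callUpd_inl hpart] at hx
      have : i' = i := by injection hx
      exact this ▸ hS.hlt x i' hpart
    · rcases hent : entry u t with _ | a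
      · rw [callUpd_none hpart hent] at hx; cases hx
      · rw [callUpd_some hpart hent] at hx
        have : τ a = i := by injection hx
        exact this ▸ hτ a
  · intro i hi
    obtain ⟨x, hx⟩ := hS.bne i hi
    exact ⟨x, callUpd_inl hx⟩
  · intro j
    exact ⟨amin S (nofs u j), by
      rw [callUpd_none (amin_mem hS (nofs u j)) (entry_nofs u j), wIdx_nofs]⟩
  · intro i i' hii' hi'
    have hn : (callUpd S u τ).nCom = S.nCom := rfl
    rw [hn] at hi'
    rw [bmin_callUpd hS (show i < S.nCom by omega), bmin_callUpd hS hi']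
    exact hS.bmono i i' hii' hi'
  · intro j j' hjj'
    rw [amin_callUpd hS u τ, amin_callUpd hS u τ]
    apply hS.amono
    unfold nofs
    calc ofs u j + hlen (u j) < ofs u (j + 1) := by
          have := hlen_lt_len (u j)
          show ofs u j + hlen (u j) < ofs u j + len (u j)
          omega
      _ ≤ ofs u j' := ofs_mono u hjj'
      _ ≤ ofs u j' + hlen (u j') := Nat.le_add_right _ _
  · intro i hi j
    rw [bmin_callUpd hS hi, amin_callUpd hS u τ]
    exact hS.bamin i hi _

end Machine

section Run

variable {k s : ℕ}

/-- Refinement relation between states of the run. -/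
def StRel (S S' : St k) : Prop :=
  (∀ x i, S.part x = Sum.inl i → S'.part x = Sum.inl i) ∧
  (∀ x y, S.part x = S.part y → S'.part x = S'.part y) ∧
  (S.nCom ≤ S'.nCom) ∧
  (∀ i, i < S.nCom → bmin S' i = bmin S i) ∧
  (∀ j, ∃ j', amin S' j = amin S j')

theorem stRel_refl (S : St k) : StRel S S :=
  ⟨fun _ _ h => h, fun _ _ h => h, le_rfl, fun _ _ => rfl, fun j => ⟨j, rfl⟩⟩

theorem stRel_trans {S₁ S₂ S₃ : St k} (h12 : StRel S₁ S₂) (h23 : StRel S₂ S₃) :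
    StRel S₁ S₃ := by
  refine ⟨fun x i h => h23.1 x i (h12.1 x i h), fun x y h => h23.2.1 x y (h12.2.1 x y h),
    le_trans h12.2.2.1 h23.2.2.1, fun i hi => ?_, fun j => ?_⟩
  · rw [h23.2.2.2.1 i (lt_of_lt_of_le hi h12.2.2.1), h12.2.2.2.1 i hi]
  · obtain ⟨j', hj'⟩ := h23.2.2.2.2 j
    obtain ⟨j'', hj''⟩ := h12.2.2.2.2 j'
    exact ⟨j'', by rw [hj', hj'']⟩

theorem stRel_callUpd {S : St k} (hS : Inv S) (u : ℕ → VW (k + 1)) (τ : Fin (k + 1) → ℕ) :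
    StRel S (callUpd S u τ) := by
  refine ⟨fun x i h => callUpd_inl h, fun x y h => ?_, le_rfl,
    fun i hi => bmin_callUpd hS hi, fun j => ⟨nofs u j, amin_callUpd hS u τ j⟩⟩
  show (match S.part x with
    | Sum.inl i => Sum.inl i
    | Sum.inr t => match entry u t with
      | some a => Sum.inl (τ a)
      | none => Sum.inr (wIdx u t)) = (match S.part y with
    | Sum.inl i => Sum.inl i
    | Sum.inr t => match entry u t with
      | some a => Sum.inl (τ a)
      | none => Sum.inr (wIdx u t))
  rw [h]

theorem stRel_commitUpd {S : St k} (hS : Inv S) : StRel S (commitUpd S) := by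
  refine ⟨fun x i h => commitUpd_inl h, fun x y h => ?_, by show S.nCom ≤ S.nCom + 1; omega,
    fun i hi => bmin_commitUpd_lt hS hi, fun j => ⟨j + 1, amin_commitUpd S j⟩⟩
  show (match S.part x with
    | Sum.inl i => Sum.inl i
    | Sum.inr 0 => Sum.inl S.nCom
    | Sum.inr (j + 1) => Sum.inr j) = (match S.part y with
    | Sum.inl i => Sum.inl i
    | Sum.inr 0 => Sum.inl S.nCom
    | Sum.inr (j + 1) => Sum.inr j)
  rw [h]

/-- The data of the fusion: a coloring and a Carlson–Simpson ultrafilter. -/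
structure Ctx (k s : ℕ) where
  c : ℕ × (ℕ → ℕ) → Fin s
  p : Ultrafilter (W (k + 1))
  hp : IsCS p

/-- The letter of a position, as determined by a state, committed letters `σ`, and an
abstract word. -/
noncomputable def lett (S : St k) (σ : ℕ → Fin (k + 1)) (wa : W (k + 1)) (y : ℕ) :
    Fin (k + 1) :=
  match S.part y with
  | Sum.inl i => σ i
  | Sum.inr t => wa.getD t ⟨0, Nat.succ_pos k⟩

/-- The concrete finite partition encoded by an abstract word. -/
noncomputable def resolve (S : St k) (σ : ℕ → Fin (k + 1)) (wa : W (k + 1)) : ℕ × (ℕ → ℕ) :=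
  (amin S wa.length,
    fun x => if x < amin S wa.length then sInf {y | lett S σ wa y = lett S σ wa x} else 0)

/-- The induced coloring of abstract words. -/
noncomputable def χc (C : Ctx k s) (S : St k) (σ : ℕ → Fin (k + 1)) : W (k + 1) → Fin s :=
  fun wa => C.c (resolve S σ wa)

/-- Absorption targets. -/
noncomputable def tauOf (S : St k) (σ : ℕ → Fin (k + 1)) : Fin (k + 1) → ℕ := fun a =>
  if h : ∃ i, i < S.nCom ∧ σ i = a then Nat.find h else 0

theorem tauOf_lt {S : St k} (hS : 0 < S.nCom) (σ : ℕ → Fin (k + 1)) (a : Fin (k + 1)) :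
    tauOf S σ a < S.nCom := by
  unfold tauOf
  split
  · next h => exact (Nat.find_spec h).1
  · exact hS

theorem tauOf_spec {S : St k} {σ : ℕ → Fin (k + 1)} {a : Fin (k + 1)}
    (h : ∃ i, i < S.nCom ∧ σ i = a) : σ (tauOf S σ a) = a := by
  unfold tauOf
  rw [dif_pos h]
  exact (Nat.find_spec h).2

/-- The variable-word sequence chosen by the Carlson–Simpson recursion. -/
noncomputable def uOf (C : Ctx k s) (S : St k) (σ : ℕ → Fin (k + 1)) : ℕ → VW (k + 1) :=
  Classical.choose (call C.p C.hp (χc C S σ))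

theorem uOf_spec (C : Ctx k s) (S : St k) (σ : ℕ → Fin (k + 1)) :
    ∀ (J : ℕ) (b : ℕ → Fin (k + 1)),
      χc C S σ (span (uOf C S σ) b J ++ ((uOf C S σ) J).h) = χc C S σ (((uOf C S σ) 0).h) :=
  Classical.choose_spec (call C.p C.hp (χc C S σ))

/-- One σ-processing step. -/
noncomputable def sigStep (C : Ctx k s) (S : St k) (σ : ℕ → Fin (k + 1)) : St k :=
  callUpd S (uOf C S σ) (tauOf S σ)

/-- All committed-letter patterns considered at superstage `n`. -/
noncomputable def sigList (k n : ℕ) : List (ℕ → Fin (k + 1)) :=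
  (Finset.univ : Finset (Fin (n + 1) → Fin (k + 1))).toList.map
    (fun v i => if h : i < n + 1 then v ⟨i, h⟩ else 0)

/-- Partial fold of the σ-processing at superstage `n`. -/
noncomputable def foldState (C : Ctx k s) (Sn : St k) (n r : ℕ) : St k :=
  ((sigList k n).take r).foldl (sigStep C) (commitUpd Sn)

/-- The states of the run, `states C n` having `n` committed blocks. -/
noncomputable def states (C : Ctx k s) : ℕ → St k
  | 0 => ⟨0, fun x => Sum.inr x⟩
  | n + 1 => foldState C (states C n) n (sigList k n).length

theorem sigStep_inv {C : Ctx k s} {S : St k} (hS : Inv S) (h0 : 0 < S.nCom)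
    (σ : ℕ → Fin (k + 1)) : Inv (sigStep C S σ) :=
  callUpd_inv hS _ (fun a => tauOf_lt h0 σ a)

theorem sigStep_nCom (C : Ctx k s) (S : St k) (σ : ℕ → Fin (k + 1)) :
    (sigStep C S σ).nCom = S.nCom := rfl

theorem fold_inv {C : Ctx k s} (L : List (ℕ → Fin (k + 1))) {S : St k} (hS : Inv S)
    (h0 : 0 < S.nCom) :
    Inv (L.foldl (sigStep C) S) ∧ (L.foldl (sigStep C) S).nCom = S.nCom
      ∧ StRel S (L.foldl (sigStep C) S) := by
  induction L generalizing S with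
  | nil => exact ⟨hS, rfl, stRel_refl S⟩
  | cons σ L ih =>
      have h1 := sigStep_inv (C := C) hS h0 σ
      have h2 : (sigStep C S σ).nCom = S.nCom := rfl
      obtain ⟨ha, hb, hc⟩ := ih h1 (by omega)
      exact ⟨ha, by rw [List.foldl_cons, hb, h2],
        stRel_trans (stRel_callUpd hS _ _) (by rw [List.foldl_cons] at *; exact hc)⟩

theorem states_zero_inv (C : Ctx k s) : Inv (states C 0) := by
  constructor
  · intro x i hx; cases hx
  · intro i hi; cases hi
  · intro j; exact ⟨j, rfl⟩
  · intro i i' _ hi'; cases hi'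
  · intro j j' hjj'
    have hj : ∀ j : ℕ, amin (states C 0) j = j := by
      intro j
      apply le_antisymm
      · exact Nat.sInf_le (show (states C 0).part j = Sum.inr j from rfl)
      · apply le_csInf ⟨j, show (states C 0).part j = Sum.inr j from rfl⟩
        intro x hx
        have : Sum.inr (β := ℕ) x = Sum.inr (β := ℕ) j := hx
        have : x = j := by
          injection hx
        omega
  
    rw [hj, hj]
    exact hjj'
  · intro i hi; cases hi

theorem states_inv (C : Ctx k s) (n : ℕ) :
    Inv (states C n) ∧ (states C n).nCom = n := by
  induction n with
  | zero => exact ⟨states_zero_inv C, rfl⟩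
  | succ n ih =>
      obtain ⟨h1, h2⟩ := ih
      have h3 : Inv (commitUpd (states C n)) := commitUpd_inv h1
      have h4 : (commitUpd (states C n)).nCom = n + 1 := by
        show (states C n).nCom + 1 = n + 1
        omega
      have := fold_inv (C := C) ((sigList k n).take (sigList k n).length) h3 (by omega)
      exact ⟨this.1, by rw [show states C (n+1)
        = foldState C (states C n) n (sigList k n).length from rfl, foldState, this.2.1, h4]⟩

theorem states_rel_succ (C : Ctx k s) (n : ℕ) : StRel (states C n) (states C (n + 1)) := by
  obtain ⟨h1, h2⟩ := states_inv C n
  have h3 : Inv (commitUpd (states C n)) := commitUpd_inv h1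
  exact stRel_trans (stRel_commitUpd h1)
    (fold_inv (C := C) ((sigList k n).take (sigList k n).length) h3 (by
      show 0 < (states C n).nCom + 1; omega)).2.2

theorem states_rel (C : Ctx k s) {n n' : ℕ} (h : n ≤ n') :
    StRel (states C n) (states C n') := by
  induction h with
  | refl => exact stRel_refl _
  | step _ ih => exact stRel_trans ih (states_rel_succ C _)

end Run

section Limit

variable {k s : ℕ}

theorem fold_inl (C : Ctx k s) (L : List (ℕ → Fin (k + 1))) {S : St k} {x i : ℕ}
    (hx : S.part x = Sum.inl i) : (L.foldl (sigStep C) S).part x = Sum.inl i := by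
  induction L generalizing S with
  | nil => exact hx
  | cons σ L ih => exact ih (callUpd_inl hx)

theorem wIdx_le_self (u : ℕ → VW (k + 1)) (t : ℕ) : wIdx u t ≤ t :=
  Nat.find_min' _ (lt_ofs_succ_self u t)

theorem fold_dec (C : Ctx k s) (L : List (ℕ → Fin (k + 1))) {S : St k} {x t : ℕ}
    (hx : S.part x = Sum.inr t) :
    (∃ i, (L.foldl (sigStep C) S).part x = Sum.inl i) ∨
    (∃ t', (L.foldl (sigStep C) S).part x = Sum.inr t' ∧ t' ≤ t) := by
  induction L generalizing S t with
  | nil => exact Or.inr ⟨t, hx, le_rfl⟩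
  | cons σ L ih =>
      rw [List.foldl_cons]
      rcases hent : entry (uOf C S σ) t with _ | a
      · have h1 : (sigStep C S σ).part x = Sum.inr (wIdx (uOf C S σ) t) :=
          callUpd_none hx hent
        rcases ih h1 with h | ⟨t', h2, h3⟩
        · exact Or.inl h
        · exact Or.inr ⟨t', h2, le_trans h3 (wIdx_le_self _ t)⟩
      · exact Or.inl (by
          have h1 : (sigStep C S σ).part x = Sum.inl (tauOf S σ a) := callUpd_some hx hent
          exact ⟨tauOf S σ a, fold_inl C L h1⟩)

theorem states_dec (C : Ctx k s) (n x t : ℕ) (hx : (states C n).part x = Sum.inr t) :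
    (∃ i, (states C (n + 1)).part x = Sum.inl i) ∨
    (∃ t', (states C (n + 1)).part x = Sum.inr t' ∧ t' < t) := by
  have hst : states C (n + 1) = ((sigList k n).take (sigList k n).length).foldl (sigStep C)
      (commitUpd (states C n)) := rfl
  rcases t with _ | t
  · left
    have h1 : (commitUpd (states C n)).part x = Sum.inl (states C n).nCom := commitUpd_zero hx
    exact ⟨_, by rw [hst]; exact fold_inl C _ h1⟩
  · have h1 : (commitUpd (states C n)).part x = Sum.inr t := commitUpd_succ hx
    rw [hst]
    rcases fold_dec C _ h1 with h | ⟨t', h2, h3⟩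
    · exact Or.inl h
    · exact Or.inr ⟨t', h2, by omega⟩

theorem total (C : Ctx k s) (x : ℕ) : ∃ n i, (states C n).part x = Sum.inl i := by
  have aux : ∀ t n, (states C n).part x = Sum.inr t → ∃ n' i, (states C n').part x = Sum.inl i := by
    intro t
    induction t using Nat.strong_induction_on with
    | _ t ih =>
        intro n hn
        rcases states_dec C n x t hn with ⟨i, hi⟩ | ⟨t', h2, h3⟩
        · exact ⟨n + 1, i, hi⟩
        · exact ih t' h3 (n + 1) h2
  exact aux x 0 rfl

noncomputable def stageOf (C : Ctx k s) (x : ℕ) : ℕ := Classical.choose (total C x)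

noncomputable def blkOf (C : Ctx k s) (x : ℕ) : ℕ :=
  Classical.choose (Classical.choose_spec (total C x))

theorem blkOf_spec (C : Ctx k s) (x : ℕ) :
    (states C (stageOf C x)).part x = Sum.inl (blkOf C x) :=
  Classical.choose_spec (Classical.choose_spec (total C x))

theorem blk_stable (C : Ctx k s) (x : ℕ) {n : ℕ} (h : stageOf C x ≤ n) :
    (states C n).part x = Sum.inl (blkOf C x) :=
  (states_rel C h).1 x _ (blkOf_spec C x)

theorem blk_unique (C : Ctx k s) {n x i : ℕ} (h : (states C n).part x = Sum.inl i) :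
    blkOf C x = i := by
  have h1 : (states C (max n (stageOf C x))).part x = Sum.inl i :=
    (states_rel C (le_max_left _ _)).1 x i h
  have h2 : (states C (max n (stageOf C x))).part x = Sum.inl (blkOf C x) :=
    blk_stable C x (le_max_right _ _)
  rw [h1] at h2
  injection h2 with h3
  exact h3.symm

/-- The minimum of committed block `i`. -/
noncomputable def comMin (C : Ctx k s) (i : ℕ) : ℕ := bmin (states C (i + 1)) i

theorem comMin_stable (C : Ctx k s) {i n : ℕ} (h : i < n) :
    bmin (states C n) i = comMin C i :=
  (states_rel C (show i + 1 ≤ n by omega)).2.2.2.1 i (by rw [(states_inv C (i + 1)).2]; omega)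

theorem comMin_mem (C : Ctx k s) (i : ℕ) :
    (states C (i + 1)).part (comMin C i) = Sum.inl i :=
  bmin_mem (states_inv C (i + 1)).1 (by rw [(states_inv C (i + 1)).2]; omega)

theorem comMin_le (C : Ctx k s) {n x i : ℕ} (h : (states C n).part x = Sum.inl i) :
    comMin C i ≤ x := by
  have hi : i < n := by
    have := (states_inv C n).1.hlt x i h
    rwa [(states_inv C n).2] at this
  rw [← comMin_stable C hi]
  exact bmin_le h

theorem blkOf_comMin (C : Ctx k s) (i : ℕ) : blkOf C (comMin C i) = i :=
  blk_unique C (comMin_mem C i)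

theorem comMin_strictMono (C : Ctx k s) : StrictMono (comMin C) := by
  apply strictMono_nat_of_lt_succ
  intro i
  rw [← comMin_stable C (show i < i + 2 by omega),
    ← comMin_stable C (show i + 1 < i + 2 by omega)]
  exact (states_inv C (i + 2)).1.bmono i (i + 1) (by omega)
    (by rw [(states_inv C (i + 2)).2]; omega)

/-- The limit infinite partition produced by the fusion. -/
noncomputable def Yf (C : Ctx k s) : ℕ → ℕ := fun x => comMin C (blkOf C x)

theorem Yf_comMin (C : Ctx k s) (i : ℕ) : Yf C (comMin C i) = comMin C i := by
  unfold Yf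
  rw [blkOf_comMin]

theorem Yf_isInfPart (C : Ctx k s) : IsInfPart (Yf C) := by
  refine ⟨fun x => comMin_le C (blkOf_spec C x), fun x => Yf_comMin C _, ?_⟩
  apply Set.infinite_of_injective_forall_mem (f := comMin C) (comMin_strictMono C).injective
  intro i
  exact ⟨comMin C i, Yf_comMin C i⟩

theorem Yf_eq_of_part_eq (C : Ctx k s) {n x y : ℕ}
    (h : (states C n).part x = (states C n).part y) : Yf C x = Yf C y := by
  set N := max n (max (stageOf C x) (stageOf C y)) with hN
  have h1 : (states C N).part x = (states C N).part y :=
    (states_rel C (le_max_left _ _)).2.1 x y h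
  have h2 : (states C N).part x = Sum.inl (blkOf C x) :=
    blk_stable C x (le_trans (le_max_left _ _) (le_max_right _ _))
  have h3 : (states C N).part y = Sum.inl (blkOf C y) :=
    blk_stable C y (le_trans (le_max_right _ _) (le_max_right _ _))
  rw [h2, h3] at h1
  injection h1 with h4
  unfold Yf
  rw [h4]

/-- Positions assigned to block `i` at any state of the run lie in final block `i`. -/
theorem Yf_of_part (C : Ctx k s) {n x i : ℕ} (h : (states C n).part x = Sum.inl i) :
    Yf C x = comMin C i := by
  unfold Yf
  rw [blk_unique C h]

end Limit

section MidFold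

variable {k s : ℕ}

theorem foldState_inv (C : Ctx k s) (n r : ℕ) :
    Inv (foldState C (states C n) n r) ∧ (foldState C (states C n) n r).nCom = n + 1 := by
  obtain ⟨h1, h2⟩ := states_inv C n
  have h3 : Inv (commitUpd (states C n)) := commitUpd_inv h1
  have h4 : (commitUpd (states C n)).nCom = n + 1 := by
    show (states C n).nCom + 1 = n + 1
    omega
  have := fold_inv (C := C) ((sigList k n).take r) h3 (by omega)
  exact ⟨this.1, by rw [foldState, this.2.1, h4]⟩

theorem foldState_rel (C : Ctx k s) (n r : ℕ) :
    StRel (foldState C (states C n) n r) (states C (n + 1)) := by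
  have hsplit : states C (n + 1)
      = ((sigList k n).drop r).foldl (sigStep C) (foldState C (states C n) n r) := by
    show foldState C (states C n) n (sigList k n).length = _
    unfold foldState
    rw [List.take_length, ← List.foldl_append, List.take_append_drop]
  obtain ⟨h1, h2⟩ := foldState_inv C n r
  rw [hsplit]
  exact (fold_inv (C := C) _ h1 (by omega)).2.2

theorem foldState_succ (C : Ctx k s) (n r : ℕ) (hr : r < (sigList k n).length) :
    foldState C (states C n) n (r + 1)
      = sigStep C (foldState C (states C n) n r) ((sigList k n).get ⟨r, hr⟩) := by
  unfold foldState
  rw [List.take_succ, List.getElem?_eq_getElem hr]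
  rw [List.foldl_append]
  rfl

end MidFold

section Sigma

variable {k s : ℕ}

/-- The rank letter of a position under an infinite partition `Z`. -/
noncomputable def rkF (Z : ℕ → ℕ) (x : ℕ) : Fin (k + 1) :=
  ⟨min (Nat.count (fixP Z) (Z x)) k, by omega⟩

/-- The committed-letter pattern of `Z`. -/
noncomputable def sigOf (C : Ctx k s) (Z : ℕ → ℕ) (n : ℕ) : ℕ → Fin (k + 1) :=
  fun i => if i < n + 1 then rkF Z (comMin C i) else 0

theorem sigOf_mem (C : Ctx k s) (Z : ℕ → ℕ) (n : ℕ) : sigOf C Z n ∈ sigList k n := by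
  unfold sigList
  rw [List.mem_map]
  refine ⟨fun i : Fin (n + 1) => rkF Z (comMin C i.val), Finset.mem_toList.mpr
    (Finset.mem_univ _), ?_⟩
  funext i
  unfold sigOf
  by_cases h : i < n + 1
  · rw [dif_pos h, if_pos h]
  · rw [dif_neg h, if_neg h]

-- The value extracted from the call at pattern `σ`, superstage `n`.
open Classical in
noncomputable def valF (C : Ctx k s) (n : ℕ) (σ : ℕ → Fin (k + 1)) : Fin s :=
  if h : ∃ r : Fin (sigList k n).length, (sigList k n).get r = σ then
    χc C (foldState C (states C n) n (Classical.choose h).val) σ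
      ((uOf C (foldState C (states C n) n (Classical.choose h).val) σ 0).h)
  else C.c (0, fun _ => 0)

theorem count_congr {p q : ℕ → Prop} [DecidablePred p] [DecidablePred q] {n : ℕ}
    (h : ∀ i, i < n → (p i ↔ q i)) : Nat.count p n = Nat.count q n := by
  rw [Nat.count_eq_card_filter_range, Nat.count_eq_card_filter_range]
  congr 1
  apply Finset.filter_congr
  intro i hi
  simp only [Finset.mem_range] at hi
  simp [h i hi]

end Sigma

section Verify

variable {k s : ℕ}

theorem lett_inl {S : St k} {σ : ℕ → Fin (k + 1)} {w : W (k + 1)} {y i : ℕ}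
    (hy : S.part y = Sum.inl i) : lett S σ w y = σ i := by
  show (match S.part y with
    | Sum.inl i => σ i
    | Sum.inr t => w.getD t ⟨0, Nat.succ_pos k⟩) = σ i
  rw [hy]

theorem lett_inr {S : St k} {σ : ℕ → Fin (k + 1)} {w : W (k + 1)} {y t : ℕ}
    (hy : S.part y = Sum.inr t) : lett S σ w y = w.getD t ⟨0, Nat.succ_pos k⟩ := by
  show (match S.part y with
    | Sum.inl i => σ i
    | Sum.inr t => w.getD t ⟨0, Nat.succ_pos k⟩) = _
  rw [hy]

theorem rkF_congr {Z : ℕ → ℕ} {x y : ℕ} (h : Z x = Z y) :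
    rkF (k := k) Z x = rkF Z y := by
  unfold rkF
  simp only [h]

theorem rkF_nth {Z : ℕ → ℕ} (hZ : IsInfPart Z) {a : ℕ} (ha : a ≤ k) :
    rkF (k := k) Z (Nat.nth (fixP Z) a) = ⟨a, by omega⟩ := by
  have h1 : Z (Nat.nth (fixP Z) a) = Nat.nth (fixP Z) a :=
    Nat.nth_mem_of_infinite (fix_infinite hZ) a
  unfold rkF
  apply Fin.ext
  show min (Nat.count (fixP Z) (Z (Nat.nth (fixP Z) a))) k = a
  rw [h1, Nat.count_nth_of_infinite (fix_infinite hZ)]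
  omega

theorem count_le_of_lt_e {Z : ℕ → ℕ} (hZ : IsInfPart Z) {w : ℕ}
    (hw : w < Nat.nth (fixP Z) (k + 1)) : Nat.count (fixP Z) (Z w) ≤ k := by
  have h1 : Z (Z w) = Z w := hZ.2.1 w
  have h2 : Nat.nth (fixP Z) (Nat.count (fixP Z) (Z w)) = Z w := Nat.nth_count h1
  by_contra hc
  push_neg at hc
  have h3 : Nat.nth (fixP Z) (k + 1) ≤ Nat.nth (fixP Z) (Nat.count (fixP Z) (Z w)) :=
    (Nat.nth_le_nth (fix_infinite hZ)).mpr hc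
  have h4 : Z w ≤ w := hZ.1 w
  omega

theorem rkF_inj {Z : ℕ → ℕ} (hZ : IsInfPart Z) {x y : ℕ}
    (hx : x < Nat.nth (fixP Z) (k + 1)) (hy : y < Nat.nth (fixP Z) (k + 1))
    (h : rkF (k := k) Z x = rkF Z y) : Z x = Z y := by
  have h1 := count_le_of_lt_e hZ hx
  have h2 := count_le_of_lt_e hZ hy
  have h3 : min (Nat.count (fixP Z) (Z x)) k = min (Nat.count (fixP Z) (Z y)) k :=
    congrArg Fin.val h
  have h4 : Nat.count (fixP Z) (Z x) = Nat.count (fixP Z) (Z y) := by omega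
  have h5 : Nat.nth (fixP Z) (Nat.count (fixP Z) (Z x)) = Z x := Nat.nth_count (hZ.2.1 x)
  have h6 : Nat.nth (fixP Z) (Nat.count (fixP Z) (Z y)) = Z y := Nat.nth_count (hZ.2.1 y)
  rw [← h5, ← h6, h4]

theorem sub_lt_len (u : ℕ → VW (k + 1)) (t : ℕ) :
    t - ofs u (wIdx u t) < len (u (wIdx u t)) := by
  have h1 := wIdx_le u t
  have h2 := wIdx_lt u t
  have h3 : ofs u (wIdx u t + 1) = ofs u (wIdx u t) + len (u (wIdx u t)) := rfl
  omega

/-- Fixed points of `Z` coarser than the limit partition are committed minima. -/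
theorem fix_comMin (C : Ctx k s) {Z : ℕ → ℕ} (hZ : IsInfPart Z) (hZY : Coarser Z (Yf C))
    {y : ℕ} (hy : Z y = y) : comMin C (blkOf C y) = y :=
  fix_of_coarser hZY (Yf_isInfPart C) hZ hy

/-- The central verification: the color of the `(k+1)`-st approximation of any `Z` coarser
than the limit partition is the value extracted at its pattern. -/
theorem VAL (C : Ctx k s) (Z : ℕ → ℕ) (hZ : IsInfPart Z) (hZY : Coarser Z (Yf C)) :
    C.c (rPart (k + 1) Z)
      = valF C (blkOf C (Nat.nth (fixP Z) k)) (sigOf C Z (blkOf C (Nat.nth (fixP Z) k))) := by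
  classical
  have hinfZ := fix_infinite hZ
  set m := Nat.nth (fixP Z) k with hm_def
  set e := Nat.nth (fixP Z) (k + 1) with he_def
  have hm : Z m = m := Nat.nth_mem_of_infinite hinfZ k
  have hefix : Z e = e := Nat.nth_mem_of_infinite hinfZ (k + 1)
  have hme : m < e := Nat.nth_lt_nth hinfZ |>.mpr (by omega)
  set nstar := blkOf C m with hnstar_def
  have hcomM : comMin C nstar = m := fix_comMin C hZ hZY hm
  set σ := sigOf C Z nstar with hσ_def
  have hmem : σ ∈ sigList k nstar := sigOf_mem C Z nstar
  have hr : ∃ r : Fin (sigList k nstar).length, (sigList k nstar).get r = σ :=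
    List.mem_iff_get.mp hmem
  set r₀ := Classical.choose hr with hr₀_def
  set S0 := foldState C (states C nstar) nstar r₀.val with hS0_def
  set u := uOf C S0 σ with hu_def
  set τ := tauOf S0 σ with hτ_def
  have hS0inv : Inv S0 := (foldState_inv C nstar r₀.val).1
  have hS0n : S0.nCom = nstar + 1 := (foldState_inv C nstar r₀.val).2
  set S1 := sigStep C S0 σ with hS1d
  have hS1c : S1 = callUpd S0 u τ := rfl
  have hS1inv : Inv S1 := by
    rw [hS1c]
    exact callUpd_inv hS0inv u (fun a => tauOf_lt (by omega) σ a)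
  have hS1fold : S1 = foldState C (states C nstar) nstar (r₀.val + 1) := by
    rw [foldState_succ C nstar r₀.val r₀.isLt]
    rw [show (sigList k nstar).get ⟨r₀.val, r₀.isLt⟩ = σ from Classical.choose_spec hr]
  have hS0rel : StRel S0 (states C (nstar + 1)) := foldState_rel C nstar r₀.val
  have hS1rel : StRel S1 (states C (nstar + 1)) := by
    rw [hS1fold]; exact foldState_rel C nstar (r₀.val + 1)
  -- limit facts
  have hF1 : ∀ x i, S0.part x = Sum.inl i → Yf C x = comMin C i ∧ i < nstar + 1 := by
    intro x i h
    exact ⟨Yf_of_part C (hS0rel.1 x i h), by have := hS0inv.hlt x i h; omega⟩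
  have hF2 : ∀ x t a, S0.part x = Sum.inr t → entry u t = some a →
      Yf C x = comMin C (τ a) := by
    intro x t a h he
    have hx1 : S1.part x = Sum.inl (τ a) := by
      rw [hS1c]
      exact callUpd_some h he
    exact Yf_of_part C (hS1rel.1 x _ hx1)
  have hF3 : ∀ x y, S1.part x = S1.part y → Yf C x = Yf C y := by
    intro x y h
    exact Yf_eq_of_part_eq C (hS1rel.2.1 x y h)
  have hZeq : ∀ x y, Yf C x = Yf C y → Z x = Z y := fun x y h => hZY x y h
  have hσc : ∀ i, i < nstar + 1 → σ i = rkF Z (comMin C i) := by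
    intro i hi
    show (if i < nstar + 1 then rkF Z (comMin C i) else 0) = _
    rw [if_pos hi]
  -- surjectivity of the pattern and absorption letters
  have hsurj : ∀ a : Fin (k + 1), ∃ i, i < S0.nCom ∧ σ i = a := by
    intro a
    set y := Nat.nth (fixP Z) a.val with hy_def
    have hyfix : Z y = y := Nat.nth_mem_of_infinite hinfZ a.val
    have hym : y ≤ m := (Nat.nth_le_nth hinfZ).mpr (by omega)
    have hycom : comMin C (blkOf C y) = y := fix_comMin C hZ hZY hyfix
    have hile : blkOf C y ≤ nstar := by
      by_contra hc
      push_neg at hc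
      have := comMin_strictMono C hc
      omega
    refine ⟨blkOf C y, by omega, ?_⟩
    rw [hσc _ (by omega), hycom]
    exact rkF_nth hZ (by omega)
  have hτa : ∀ a, σ (τ a) = a := fun a => tauOf_spec (hsurj a)
  have hτlt : ∀ a, τ a < nstar + 1 := fun a => hS0n ▸ tauOf_lt (by omega) σ a
  -- the cut exists as a new-atom minimum
  have hNfix : comMin C (blkOf C e) = e := fix_comMin C hZ hZY hefix
  have hnN : nstar < blkOf C e := by
    by_contra hc
    push_neg at hc
    have := (comMin_strictMono C).monotone hc
    omega
  have hJ : ∃ J, amin S1 J = e := by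
    set N := blkOf C e with hN_def
    have h1 : comMin C N = amin (states C N) 0 := by
      have h2 : StRel (commitUpd (states C N)) (states C (N + 1)) := by
        have := foldState_rel C N 0
        rwa [show foldState C (states C N) N 0 = commitUpd (states C N) from rfl] at this
      have h3 : bmin (states C (N + 1)) N = bmin (commitUpd (states C N)) N := by
        apply h2.2.2.2.1
        show N < (commitUpd (states C N)).nCom
        show N < (states C N).nCom + 1
        rw [(states_inv C N).2]
        omega
      show bmin (states C (N + 1)) N = _
      rw [h3]
      have h4 := bmin_commitUpd_new (states_inv C N).1
      rwa [(states_inv C N).2] at h4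
    have h5 : StRel S1 (states C N) :=
      stRel_trans hS1rel (states_rel C (show nstar + 1 ≤ N by omega))
    obtain ⟨j', hj'⟩ := h5.2.2.2.2 0
    exact ⟨j', by rw [← hj', ← h1, hNfix]⟩
  set J := Classical.choose hJ with hJ_def
  have hJe : amin S1 J = e := Classical.choose_spec hJ
  set b : ℕ → Fin (k + 1) := fun j => rkF Z (amin S1 j) with hb_def
  set wa : W (k + 1) := span u b J ++ (u J).h with hwa_def
  have hwalen : wa.length = nofs u J := by
    rw [hwa_def, List.length_append, span_length]
    rfl
  have hS1amin : ∀ j, amin S1 j = amin S0 (nofs u j) := by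
    intro j
    rw [hS1c]
    exact amin_callUpd hS0inv u τ j
  have hE : amin S0 wa.length = e := by rw [hwalen, ← hS1amin, hJe]
  -- the positionwise letter computation
  have hlet : ∀ x, x < e → lett S0 σ wa x = rkF Z x := by
    intro x hx
    rcases hpart : S0.part x with i | t
    · rw [lett_inl hpart]
      obtain ⟨hYfx, hi⟩ := hF1 x i hpart
      rw [hσc i hi]
      apply rkF_congr
      apply hZeq
      rw [Yf_comMin, hYfx]
    · rw [lett_inr hpart]
      have htlt : t < wa.length := by
        by_contra hc
        push_neg at hc
        have h1 : amin S0 wa.length ≤ amin S0 t := amin_mono hS0inv hc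
        have h2 : amin S0 t ≤ x := amin_le hpart
        omega
      have htn : t < nofs u J := hwalen ▸ htlt
      have hjle : wIdx u t ≤ J := by
        by_contra hc
        push_neg at hc
        have h1 : ofs u (J + 1) ≤ ofs u (wIdx u t) := ofs_mono u hc
        have h2 := wIdx_le u t
        have h3 : nofs u J < ofs u (J + 1) := by
          show ofs u J + hlen (u J) < ofs u J + len (u J)
          have := hlen_lt_len (u J)
          omega
        omega
      rcases hent : entry u t with _ | a
      · -- a variable position: gets the group letter
        have hjJ : wIdx u t < J := by
          rcases Nat.lt_or_ge (wIdx u t) J with h | h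
          · exact h
          · have hw : wIdx u t = J := by omega
            obtain ⟨a, ha⟩ := entry_of_lt_nofs hw htn
            rw [ha] at hent
            cases hent
        set j := wIdx u t with hj_def
        have hgd : wa.getD t ⟨0, Nat.succ_pos k⟩ = b j := by
          rw [hwa_def, List.getD_append _ _ _ _ (by
            rw [span_length]
            exact lt_of_lt_of_le (wIdx_lt u t) (ofs_mono u hjJ))]
          rw [span_getD u b hjJ (wIdx_le u t) (wIdx_lt u t)]
          have hr2 : t - ofs u j < len (u j) := by
            have := sub_lt_len u t
            rw [← hj_def] at this
            exact this
          rw [eval_getD _ _ hr2]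
          have hpe : (patL (u j)).getD (t - ofs u j) none = entry u t := rfl
          rw [hpe, hent]
          rfl
        rw [hgd]
        have hxS1 : S1.part x = Sum.inr j := by
          rw [hS1c]
          exact callUpd_none hpart hent
        have hamem : S1.part (amin S1 j) = Sum.inr j := amin_mem hS1inv j
        exact rkF_congr (hZeq (amin S1 j) x (hF3 x (amin S1 j) (by rw [hxS1, hamem])).symm)
      · -- a fixed position: gets the absorbed letter
        have hgd : wa.getD t ⟨0, Nat.succ_pos k⟩ = a := by
          rcases Nat.lt_or_ge (wIdx u t) J with hjJ | hjJ
          · rw [hwa_def, List.getD_append _ _ _ _ (by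
              rw [span_length]
              exact lt_of_lt_of_le (wIdx_lt u t) (ofs_mono u hjJ))]
            set j := wIdx u t with hj_def
            rw [span_getD u b hjJ (wIdx_le u t) (wIdx_lt u t)]
            have hr2 : t - ofs u j < len (u j) := by
              have := sub_lt_len u t
              rw [← hj_def] at this
              exact this
            rw [eval_getD _ _ hr2]
            have hpe : (patL (u j)).getD (t - ofs u j) none = entry u t := rfl
            rw [hpe, hent]
            rfl
          · have hw : wIdx u t = J := by omega
            have hto : ofs u J ≤ t := hw ▸ wIdx_le u t
            rw [hwa_def, List.getD_append_right _ _ _ _ (by rw [span_length]; exact hto)]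
            rw [span_length]
            have hr2 : t - ofs u J < hlen (u J) := by
              unfold nofs at htn
              omega
            have hh := entry_head (u := u) (j := J) hr2
            rw [show ofs u J + (t - ofs u J) = t by omega] at hh
            rw [hent] at hh
            injection hh with hent'
            exact hent'.symm
        rw [hgd]
        have hYfx : Yf C x = comMin C (τ a) := hF2 x t a hpart hent
        have h1 : rkF (k := k) Z x = rkF Z (comMin C (τ a)) := by
          apply rkF_congr
          apply hZeq
          rw [hYfx, Yf_comMin]
        rw [h1, ← hσc (τ a) (hτlt a), hτa]
  -- the resolved pair is the (k+1)-st approximation of Z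
  have hres : resolve S0 σ wa = rPart (k + 1) Z := by
    have hfix_eq : (fun x => Z x = x) = fixP Z := rfl
    unfold resolve rPart
    rw [hfix_eq]
    refine Prod.ext (by rw [hE]) ?_
    funext x
    simp only
    by_cases hx : x < e
    · rw [if_pos (by rw [hE]; exact hx), if_pos hx]
      have hZx_lt : Z x < e := lt_of_le_of_lt (hZ.1 x) hx
      have hmem1 : lett S0 σ wa (Z x) = lett S0 σ wa x := by
        rw [hlet _ hZx_lt, hlet _ hx]
        apply rkF_congr
        exact hZ.2.1 x
      apply le_antisymm
      · exact Nat.sInf_le hmem1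
      · apply le_csInf ⟨Z x, hmem1⟩
        intro y hy
        rw [Set.mem_setOf_eq] at hy
        by_contra hc
        push_neg at hc
        have hy_lt : y < e := by omega
        rw [hlet _ hy_lt, hlet _ hx] at hy
        have := rkF_inj hZ hy_lt hx hy
        have h2 : Z y ≤ y := hZ.1 y
        omega
    · rw [if_neg (by rw [hE]; exact hx), if_neg hx]
  -- conclude via the Carlson–Simpson guarantee
  have hcall := uOf_spec C S0 σ J b
  show C.c (rPart (k + 1) Z) = _
  rw [← hres]
  have : C.c (resolve S0 σ wa) = χc C S0 σ wa := rfl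
  rw [this, hcall]
  unfold valF
  rw [dif_pos hr]

end Verify

section Assemble

variable {k s : ℕ}

theorem sig_det (C : Ctx k s) {Z₁ Z₂ : ℕ → ℕ} (h1 : IsInfPart Z₁) (h2 : IsInfPart Z₂)
    (hc1 : Coarser Z₁ (Yf C)) (hq : rPart k Z₁ = rPart k Z₂) :
    Nat.nth (fixP Z₁) k = Nat.nth (fixP Z₂) k ∧
      sigOf C Z₁ (blkOf C (Nat.nth (fixP Z₁) k))
        = sigOf C Z₂ (blkOf C (Nat.nth (fixP Z₁) k)) := by
  have hmeq : Nat.nth (fixP Z₁) k = Nat.nth (fixP Z₂) k := congrArg Prod.fst hq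
  refine ⟨hmeq, ?_⟩
  set m := Nat.nth (fixP Z₁) k with hm_def
  have hZbelow : ∀ x, x < m → Z₁ x = Z₂ x := by
    intro x hx
    have hs := congrFun (congrArg Prod.snd hq) x
    have e1 : (rPart k Z₁).2 x = Z₁ x := by
      show (if x < Nat.nth (fun x => Z₁ x = x) k then Z₁ x else 0) = Z₁ x
      rw [if_pos (show x < Nat.nth (fun x => Z₁ x = x) k from hx)]
    have e2 : (rPart k Z₂).2 x = Z₂ x := by
      show (if x < Nat.nth (fun x => Z₂ x = x) k then Z₂ x else 0) = Z₂ x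
      rw [if_pos (show x < Nat.nth (fun x => Z₂ x = x) k from hmeq ▸ hx)]
    rw [e1, e2] at hs
    exact hs
  set n := blkOf C m with hn_def
  have hcomM : comMin C n = m :=
    fix_comMin C h1 hc1 (Nat.nth_mem_of_infinite (fix_infinite h1) k)
  funext i
  unfold sigOf
  by_cases hi : i < n + 1
  · rw [if_pos hi, if_pos hi]
    rcases Nat.lt_or_ge i n with hin | hin
    · have hlt : comMin C i < m := by
        rw [← hcomM]
        exact comMin_strictMono C hin
      set x := comMin C i with hx_def
      have hZx : Z₁ x = Z₂ x := hZbelow x hlt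
      have hx1 : Z₁ x ≤ x := h1.1 x
      have hcnt : Nat.count (fixP Z₁) (Z₁ x) = Nat.count (fixP Z₂) (Z₁ x) := by
        apply count_congr
        intro y hy
        have hym : y < m := by omega
        show Z₁ y = y ↔ Z₂ y = y
        rw [hZbelow y hym]
      unfold rkF
      apply Fin.ext
      show min (Nat.count (fixP Z₁) (Z₁ x)) k = min (Nat.count (fixP Z₂) (Z₂ x)) k
      rw [hcnt, hZx]
    · have hii : i = n := by omega
      subst hii
      rw [hcomM]
      have r1 : rkF (k := k) Z₁ m = ⟨k, by omega⟩ := by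
        rw [hm_def]
        exact rkF_nth h1 le_rfl
      have r2 : rkF (k := k) Z₂ m = ⟨k, by omega⟩ := by
        rw [hm_def, show Nat.nth (fixP Z₁) k = Nat.nth (fixP Z₂) k from hmeq]
        exact rkF_nth h2 le_rfl
      rw [r1, r2]
  · rw [if_neg hi, if_neg hi]

end Assemble

section Main

/-- The dual Ramsey statement at dimension `k`. -/
def DRst (k : ℕ) : Prop :=
  ∀ (s : ℕ) (c : ℕ × (ℕ → ℕ) → Fin s), ∃ Y : ℕ → ℕ, IsInfPart Y ∧
    ∀ Z₁ Z₂ : ℕ → ℕ, IsInfPart Z₁ → IsInfPart Z₂ → Coarser Z₁ Y → Coarser Z₂ Y →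
      c (rPart k Z₁) = c (rPart k Z₂)

theorem relDR {k : ℕ} (h : DRst k) (X : ℕ → ℕ) (hX : IsInfPart X) {s : ℕ}
    (c : ℕ × (ℕ → ℕ) → Fin s) : ∃ Y, IsInfPart Y ∧ Coarser Y X ∧
    ∀ Z₁ Z₂, IsInfPart Z₁ → IsInfPart Z₂ → Coarser Z₁ Y → Coarser Z₂ Y →
      c (rPart k Z₁) = c (rPart k Z₂) := by
  obtain ⟨Y', hY', hprop⟩ := h s (fun q => c (trn X q))
  refine ⟨act X Y', act_isInfPart hX hY', act_coarser, ?_⟩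
  intro Z₁ Z₂ hZ₁ hZ₂ hc₁ hc₂
  have key : ∀ Z, IsInfPart Z → Coarser Z (act X Y') →
      c (rPart k Z) = c (trn X (rPart k (phiOf X Z))) ∧ IsInfPart (phiOf X Z)
        ∧ Coarser (phiOf X Z) Y' := by
    intro Z hZ hcz
    have hZX : Coarser Z X := fun a b hab => hcz a b (act_coarser a b hab)
    have hφ : IsInfPart (phiOf X Z) := phiOf_isInfPart hX hZ hZX
    refine ⟨?_, hφ, ?_⟩
    · rw [← rPart_act hX hφ k, act_phiOf hX hZ hZX]
    · intro a b hab
      show cnt X (Z (MM X a)) = cnt X (Z (MM X b))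
      have hact : ∀ i, act X Y' (MM X i) = MM X (Y' i) := by
        intro i
        show MM X (Y' (cnt X (X (MM X i)))) = MM X (Y' i)
        rw [MM_fix hX, cnt_MM hX]
      have : act X Y' (MM X a) = act X Y' (MM X b) := by rw [hact, hact, hab]
      rw [hcz _ _ this]
  obtain ⟨h1, hφ1, hc1⟩ := key Z₁ hZ₁ hc₁
  obtain ⟨h2, hφ2, hc2⟩ := key Z₂ hZ₂ hc₂
  rw [h1, h2]
  exact hprop _ _ hφ1 hφ2 hc1 hc2

theorem DRst_zero : DRst 0 := by
  intro s c
  refine ⟨id, ⟨fun x => le_rfl, fun _ => rfl, by rw [Set.range_id]; exact Set.infinite_univ⟩, ?_⟩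
  intro Z₁ Z₂ hZ₁ hZ₂ _ _
  have h0 : ∀ Z : ℕ → ℕ, IsInfPart Z → rPart 0 Z = (0, fun _ => 0) := by
    intro Z hZ
    have h1 : Nat.nth (fun x => Z x = x) 0 = 0 := by
      have hZ0 : Z 0 = 0 := Nat.le_zero.mp (hZ.1 0)
      rw [Nat.nth_zero]
      exact Nat.sInf_eq_zero.mpr (Or.inl hZ0)
    unfold rPart
    rw [h1]
    refine Prod.ext rfl ?_
    funext x
    simp
  rw [h0 Z₁ hZ₁, h0 Z₂ hZ₂]

/-- The stabilization (fusion) theorem. -/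
theorem stab (k s : ℕ) (c : ℕ × (ℕ → ℕ) → Fin s) (hs : 0 < s) :
    ∃ Y : ℕ → ℕ, IsInfPart Y ∧
      ∀ Z₁ Z₂, IsInfPart Z₁ → IsInfPart Z₂ → Coarser Z₁ Y → Coarser Z₂ Y →
        rPart k Z₁ = rPart k Z₂ → c (rPart (k+1) Z₁) = c (rPart (k+1) Z₂) := by
  obtain ⟨p, hp⟩ := exists_CS (k + 1)
  refine ⟨Yf ⟨c, p, hp⟩, Yf_isInfPart ⟨c, p, hp⟩, ?_⟩
  intro Z₁ Z₂ h1 h2 hc1 hc2 hq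
  have e1 := VAL ⟨c, p, hp⟩ Z₁ h1 hc1
  have e2 := VAL ⟨c, p, hp⟩ Z₂ h2 hc2
  obtain ⟨hmeq, hσeq⟩ := sig_det ⟨c, p, hp⟩ h1 h2 hc1 hq
  show (⟨c, p, hp⟩ : Ctx k s).c (rPart (k + 1) Z₁) = (⟨c, p, hp⟩ : Ctx k s).c (rPart (k + 1) Z₂)
  rw [e1, e2, hσeq, hmeq]

theorem DRst_all : ∀ k, DRst k := by
  intro k
  induction k with
  | zero => exact DRst_zero
  | succ k ih =>
      intro s c
      rcases Nat.eq_zero_or_pos s with rfl | hs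
      · exact (c (0, fun _ => 0)).elim0
      obtain ⟨Yf, hYf, hstab⟩ := stab k s c hs
      classical
      obtain ⟨Y, hY, hYc, hprop⟩ := relDR ih Yf hYf (fun q =>
        if h : ∃ Z, IsInfPart Z ∧ Coarser Z Yf ∧ rPart k Z = q
        then c (rPart (k+1) (Classical.choose h)) else c (0, fun _ => 0))
      refine ⟨Y, hY, ?_⟩
      intro Z₁ Z₂ hZ₁ hZ₂ hc₁ hc₂
      have key : ∀ Z, IsInfPart Z → Coarser Z Y → c (rPart (k+1) Z)
          = (fun q => if h : ∃ Z', IsInfPart Z' ∧ Coarser Z' Yf ∧ rPart k Z' = q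
              then c (rPart (k+1) (Classical.choose h)) else c (0, fun _ => 0)) (rPart k Z) := by
        intro Z hZ hcz
        have hczf : Coarser Z Yf := fun a b hab => hcz a b (hYc a b hab)
        have hex : ∃ Z', IsInfPart Z' ∧ Coarser Z' Yf ∧ rPart k Z' = rPart k Z :=
          ⟨Z, hZ, hczf, rfl⟩
        have hspec := Classical.choose_spec hex
        simp only [dif_pos hex]
        exact hstab Z (Classical.choose hex) hZ hspec.1 hczf hspec.2.1 hspec.2.2.symm
      rw [key Z₁ hZ₁ hc₁, key Z₂ hZ₂ hc₂]
      exact hprop Z₁ Z₂ hZ₁ hZ₂ hc₁ hc₂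

end Main

end DR

/-- Halbeisen's dualization of Ramsey's theorem: every finite coloring of the `k`-block
finite partitions is constant on the set `(<ω, Y)^k` of `k`-th approximations of infinite
partitions coarser than `Y`, for some infinite partition `Y` of ℕ. -/
theorem dual_ramsey (k s : ℕ) (c : ℕ × (ℕ → ℕ) → Fin s) :
    ∃ Y : ℕ → ℕ, IsInfPart Y ∧
      ∀ Z₁ Z₂ : ℕ → ℕ, IsInfPart Z₁ → IsInfPart Z₂ → Coarser Z₁ Y → Coarser Z₂ Y →
        c (rPart k Z₁) = c (rPart k Z₂) :=
  DR.DRst_all k s c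
end

section
/- The dualized Ramsey theorem for partitions implies the classical infinite Ramsey theorem: given a finite coloring c of the k-element subsets of ℕ, define a coloring d of (k+1)-block finite partitions s by d(s) = c({min x : x a block of s} \ {0}); monochromaticity for d on approximations of a single infinite partition yields an infinite c-monochromatic set. -/
/-- The dualized Ramsey theorem: for every finite coloring of the finite `(k+1)`-block
partitions there is an infinite partition `Y` such that all `(k+1)`-st approximations of
infinite partitions coarser than `Y` get the same color. -/
def DualRamsey : Prop :=
  ∀ (k s : ℕ) (c : ℕ × (ℕ → ℕ) → Fin s),
    ∃ Y : ℕ → ℕ, IsInfPart Y ∧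
      ∀ Z₁ Z₂ : ℕ → ℕ, IsInfPart Z₁ → IsInfPart Z₂ → Coarser Z₁ Y → Coarser Z₂ Y →
        c (rPart (k + 1) Z₁) = c (rPart (k + 1) Z₂)

/-- The classical infinite Ramsey theorem. -/
def InfiniteRamsey : Prop :=
  ∀ (k s : ℕ) (c : Finset ℕ → Fin s),
    ∃ A : Set ℕ, A.Infinite ∧
      ∀ t₁ t₂ : Finset ℕ, ↑t₁ ⊆ A → ↑t₂ ⊆ A → t₁.card = k → t₂.card = k → c t₁ = c t₂


open Classical in
theorem key_construction (Y : ℕ → ℕ) (hY1 : ∀ x, Y x ≤ x) (hY2 : ∀ x, Y (Y x) = Y x)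
    (hY3 : (Set.range Y).Infinite) (k : ℕ) (t : Finset ℕ)
    (htA : ∀ m ∈ t, Y m = m ∧ m ≠ 0) (htc : t.card = k) :
    ∃ Z : ℕ → ℕ, IsInfPart Z ∧ Coarser Z Y ∧
      ((Finset.range (rPart (k+1) Z).1).image (rPart (k+1) Z).2).erase 0 = t := by
  set N := t.sup id with hN
  have htN : ∀ m ∈ t, m ≤ N := fun m hm => Finset.le_sup (f := id) hm
  set Z : ℕ → ℕ := fun x => if Y x ∈ t ∨ N < Y x then Y x else 0 with hZ
  -- range Y = fixed points of Y
  have hfix : ∀ x, Y x = x ↔ x ∈ Set.range Y := by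
    intro x
    constructor
    · intro h; exact ⟨x, h⟩
    · rintro ⟨y, rfl⟩; exact hY2 y
  have hZ0 : Z 0 = 0 := by
    have hY0 : Y 0 = 0 := Nat.le_zero.mp (hY1 0)
    simp only [hZ, hY0]
    rw [if_neg]
    rintro (h | h)
    · exact (htA 0 h).2 rfl
    · omega
  -- S : set of Y-fixed points above N
  set S : Set ℕ := {x | Y x = x ∧ N < x} with hS
  have hSinf : S.Infinite := by
    have : (Set.range Y) \ {x | x ≤ N} ⊆ S := by
      rintro x ⟨hx1, hx2⟩
      exact ⟨(hfix x).mpr hx1, by simpa using hx2⟩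
    exact ((hY3.diff (Set.finite_Iic N)).mono this)
  have hSne : S.Nonempty := hSinf.nonempty
  set M := sInf S with hM
  have hMS : M ∈ S := Nat.sInf_mem hSne
  have hMfix : Y M = M := hMS.1
  have hNM : N < M := hMS.2
  have hZM : Z M = M := by
    simp only [hZ, hMfix]
    rw [if_pos (Or.inr hNM)]
  -- Z basic properties
  have hZle : ∀ x, Z x ≤ x := by
    intro x; simp only [hZ]; split
    · exact hY1 x
    · exact Nat.zero_le x
  have hZidem : ∀ x, Z (Z x) = Z x := by
    intro x
    by_cases h : Y x ∈ t ∨ N < Y x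
    · have hx : Z x = Y x := by simp only [hZ]; rw [if_pos h]
      rw [hx]
      simp only [hZ, hY2 x]
      rw [if_pos h]
    · have hx : Z x = 0 := by simp only [hZ]; rw [if_neg h]
      rw [hx, hZ0]
  have hZrange : (Set.range Z).Infinite := by
    apply hSinf.mono
    rintro x ⟨hx1, hx2⟩
    refine ⟨x, ?_⟩
    simp only [hZ, hx1]
    rw [if_pos (Or.inr hx2)]
  have hZinf : IsInfPart Z := ⟨hZle, hZidem, hZrange⟩
  have hZcoarse : Coarser Z Y := by
    intro a b hab; simp only [hZ, hab]
  -- fixed points of Z below M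
  have hclaim : ∀ x, x < M → (Z x = x ↔ x = 0 ∨ x ∈ t) := by
    intro x hxM
    constructor
    · intro h
      by_cases hx0 : x = 0
      · exact Or.inl hx0
      · right
        by_cases hc : Y x ∈ t ∨ N < Y x
        · have hx : Z x = Y x := by simp only [hZ]; rw [if_pos hc]
          have hYx : Y x = x := by omega
          rcases hc with hc | hc
          · rwa [← hYx]
          · exfalso
            have : x ∈ S := ⟨hYx, by omega⟩
            have := Nat.sInf_le this
            omega
        · have hx : Z x = 0 := by simp only [hZ]; rw [if_neg hc]
          omega
    · rintro (rfl | hx)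
      · exact hZ0
      · have hYx : Y x = x := (htA x hx).1
        simp only [hZ, hYx]
        rw [if_pos (Or.inl hx)]
  have hMt : M ∉ t := fun h => absurd (htN M h) (by omega)
  have hM0 : 0 < M := by
    have := (htA); omega
  have h0t : 0 ∉ t := fun h => (htA 0 h).2 rfl
  -- count of fixed points of Z below M is k+1
  have hcount : Nat.count (fun x => Z x = x) M = k + 1 := by
    rw [Nat.count_eq_card_filter_range]
    have : (Finset.range M).filter (fun x => Z x = x) = insert 0 t := by
      ext x
      simp only [Finset.mem_filter, Finset.mem_range, Finset.mem_insert]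
      constructor
      · rintro ⟨h1, h2⟩
        exact (hclaim x h1).mp h2
      · rintro (rfl | hx)
        · exact ⟨hM0, hZ0⟩
        · have hxM : x < M := lt_of_le_of_lt (htN x hx) hNM
          exact ⟨hxM, (hclaim x hxM).mpr (Or.inr hx)⟩
    rw [this, Finset.card_insert_of_notMem h0t, htc]
  have hnth : Nat.nth (fun x => Z x = x) (k + 1) = M := by
    have := Nat.nth_count (p := fun x => Z x = x) (n := M) hZM
    rwa [hcount] at this
  refine ⟨Z, hZinf, hZcoarse, ?_⟩
  -- compute the image
  simp only [rPart, hnth]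
  have himg : (Finset.range M).image (fun x => if x < M then Z x else 0)
      = insert 0 t := by
    ext y
    simp only [Finset.mem_image, Finset.mem_range, Finset.mem_insert]
    constructor
    · rintro ⟨x, hx, rfl⟩
      rw [if_pos hx]
      by_cases hc : Y x ∈ t ∨ N < Y x
      · have hxZ : Z x = Y x := by simp only [hZ]; rw [if_pos hc]
        rw [hxZ]
        rcases hc with hc | hc
        · exact Or.inr hc
        · exfalso
          have : Y x ∈ S := ⟨hY2 x, hc⟩
          have := Nat.sInf_le this
          have := hY1 x
          omega
      · have hxZ : Z x = 0 := by simp only [hZ]; rw [if_neg hc]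
        exact Or.inl hxZ
    · rintro (rfl | hy)
      · exact ⟨0, hM0, by rw [if_pos hM0]; exact hZ0⟩
      · have hyM : y < M := lt_of_le_of_lt (htN y hy) hNM
        exact ⟨y, hyM, by rw [if_pos hyM]; exact (hclaim y hyM).mpr (Or.inr hy)⟩
  rw [himg, Finset.erase_insert h0t]

/-- The dualized Ramsey theorem for partitions implies the classical infinite Ramsey
theorem (via the coloring `d(s) = c({min x : x a block of s} \ {0})`). -/
theorem dual_ramsey_implies_infinite_ramsey : DualRamsey → InfiniteRamsey := by
  intro hDR k s c
  set d : ℕ × (ℕ → ℕ) → Fin s := fun p => c (((Finset.range p.1).image p.2).erase 0) with hd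
  obtain ⟨Y, ⟨hY1, hY2, hY3⟩, hmono⟩ := hDR k s d
  refine ⟨Set.range Y \ {0}, hY3.diff (Set.finite_singleton 0), ?_⟩
  intro t₁ t₂ ht₁ ht₂ hc₁ hc₂
  have hfix : ∀ x, x ∈ Set.range Y → Y x = x := by
    rintro x ⟨y, rfl⟩; exact hY2 y
  have hA : ∀ (t : Finset ℕ), ↑t ⊆ Set.range Y \ {0} → ∀ m ∈ t, Y m = m ∧ m ≠ 0 := by
    intro t ht m hm
    obtain ⟨h1, h2⟩ := ht hm
    exact ⟨hfix m h1, by simpa using h2⟩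
  obtain ⟨Z₁, hZ₁inf, hZ₁c, hZ₁eq⟩ :=
    key_construction Y hY1 hY2 hY3 k t₁ (hA t₁ ht₁) hc₁
  obtain ⟨Z₂, hZ₂inf, hZ₂c, hZ₂eq⟩ :=
    key_construction Y hY1 hY2 hY3 k t₂ (hA t₂ ht₂) hc₂
  have := hmono Z₁ Z₂ hZ₁inf hZ₂inf hZ₁c hZ₂c
  simp only [hd] at this
  rw [hZ₁eq, hZ₂eq] at this
  exact this
end
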